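/- arXiv:1811.05239 — 15 statements merged into one kernel-verified Lean document; each statement's English description precedes it below -/
import Mathlib

section
/- For integers 1 ≤ k < ℓ and real numbers μ_k, μ_{k+1}, ..., μ_ℓ such that μ_j ≠ μ_k for every j with k < j ≤ ℓ, it holds that ∑_{i=k+1}^{ℓ} ( ∏_{v=k}^{i−1} (μ_v − μ_ℓ) ) / ( ∏_{j=k+1}^{i} (μ_j − μ_k) ) = −1. -/
open Finset

lemma aux0 (k : ℕ) (μ : ℕ → ℝ) (l : ℕ) :
    ∀ m, k ≤ m → (∀ j, k < j → j ≤ m → μ j ≠ μ k) →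
    ∑ i ∈ Finset.Icc (k + 1) m,
      (∏ v ∈ Finset.Icc k (i - 1), (μ v - μ l)) /
        (∏ j ∈ Finset.Icc (k + 1) i, (μ j - μ k)) =
    -1 + (∏ v ∈ Finset.Icc (k + 1) m, (μ v - μ l)) /
        (∏ j ∈ Finset.Icc (k + 1) m, (μ j - μ k)) := by
  intro m hm
  induction m, hm using Nat.le_induction with
  | base =>
    simp [Finset.Icc_eq_empty_of_lt (Nat.lt_succ_self k)]
  | succ m hm ih =>
    intro hne
    have hne' : ∀ j, k < j → j ≤ m → μ j ≠ μ k := fun j h1 h2 =>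
      hne j h1 (le_trans h2 (Nat.le_succ m))
    have hB : (∏ j ∈ Finset.Icc (k + 1) m, (μ j - μ k)) ≠ 0 := by
      rw [Finset.prod_ne_zero_iff]
      intro j hj
      rw [Finset.mem_Icc] at hj
      exact sub_ne_zero_of_ne (hne' j hj.1 hj.2)
    have hlast : μ (m + 1) - μ k ≠ 0 :=
      sub_ne_zero_of_ne (hne (m + 1) (Nat.lt_succ_of_le hm) le_rfl)
    have hsplit : Finset.Icc k m = insert k (Finset.Icc (k + 1) m) := by
      ext x
      simp [Finset.mem_Icc]
      omega
    rw [Finset.sum_Icc_succ_top (Nat.succ_le_succ hm),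
      ih hne',
      Finset.prod_Icc_succ_top (Nat.succ_le_succ hm),
      Finset.prod_Icc_succ_top (Nat.succ_le_succ hm)]
    have : (m + 1) - 1 = m := rfl
    rw [this, hsplit, Finset.prod_insert (by simp)]
    field_simp
    ring

/-- Lemma 1 of the paper: for integers `1 ≤ k < ℓ` and reals `μ` with `μ j ≠ μ k`
for `k < j ≤ ℓ`, the alternating product sum collapses to `-1`.
Products over empty index ranges equal `1`. -/
theorem stmt0 (k l : ℕ) (hk : 1 ≤ k) (hkl : k < l) (μ : ℕ → ℝ)
    (hne : ∀ j, k < j → j ≤ l → μ j ≠ μ k) :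
    ∑ i ∈ Finset.Icc (k + 1) l,
      (∏ v ∈ Finset.Icc k (i - 1), (μ v - μ l)) /
        (∏ j ∈ Finset.Icc (k + 1) i, (μ j - μ k)) = -1 := by
  rw [aux0 k μ l l (le_of_lt hkl) hne,
    Finset.prod_eq_zero (Finset.mem_Icc.mpr ⟨hkl, le_rfl⟩) (by ring)]
  simp
end

section
/- For i = 1,...,n−1 one has 0 < p_i < 1, and for every real s ≥ 0, ∑_{k=1}^n p̃_k μ_k/(s+μ_k) = ∑_{i=1}^n (1−p_i) (∏_{j=1}^{i−1} p_j) ∏_{j=1}^{i} μ_j/(s+μ_j). That is, the hyperexponential distribution with parameters (p̃_k, μ_k) has the same Laplace–Stieltjes transform as the Coxian distribution with rates μ_i and continuation probabilities p_i. -/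
open Finset

/-- Partial product `∏_{j=1}^{i} (1 - μ k / μ j)`. -/
noncomputable def coxGG (μ : ℕ → ℝ) (k i : ℕ) : ℝ := ∏ j ∈ Finset.Icc 1 i, (1 - μ k / μ j)

/-- `U m = ∑_{k=1}^n p̃_k ∏_{j=1}^{m} (1 - μ k / μ j)`. -/
noncomputable def coxUU (μ pt : ℕ → ℝ) (n m : ℕ) : ℝ := ∑ k ∈ Finset.Icc 1 n, pt k * coxGG μ k m

/-- `F i = ∏_{j=1}^i μ j/(s+μ j)`. -/
noncomputable def coxFF (μ : ℕ → ℝ) (s : ℝ) (i : ℕ) : ℝ := ∏ j ∈ Finset.Icc 1 i, μ j / (s + μ j)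

lemma coxGG_zero (μ : ℕ → ℝ) (k : ℕ) : coxGG μ k 0 = 1 := by
  rw [coxGG, Finset.Icc_eq_empty (by omega), Finset.prod_empty]

lemma coxGG_succ (μ : ℕ → ℝ) (k i : ℕ) :
    coxGG μ k (i + 1) = coxGG μ k i * (1 - μ k / μ (i + 1)) :=
  Finset.prod_Icc_succ_top (by omega) _

lemma coxFF_zero (μ : ℕ → ℝ) (s : ℝ) : coxFF μ s 0 = 1 := by
  rw [coxFF, Finset.Icc_eq_empty (by omega), Finset.prod_empty]

lemma coxFF_succ (μ : ℕ → ℝ) (s : ℝ) (i : ℕ) :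
    coxFF μ s (i + 1) = coxFF μ s i * (μ (i + 1) / (s + μ (i + 1))) :=
  Finset.prod_Icc_succ_top (by omega) _

/-- Proposition 1 of the paper (LST equality): the hyperexponential distribution with
parameters `(p̃ k, μ k)` has the same Laplace–Stieltjes transform as the Coxian
distribution with rates `μ i` and continuation probabilities `p i`, and the `p i`
are genuine probabilities in `(0,1)`. Products over empty ranges equal `1`. -/
theorem stmt1 (n : ℕ) (hn : 1 ≤ n) (μ pt p : ℕ → ℝ)
    (hμdec : ∀ i j, 1 ≤ i → i < j → j ≤ n → μ j < μ i)
    (hμpos : 0 < μ n)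
    (hpt : ∀ k, 1 ≤ k → k ≤ n → 0 < pt k)
    (hptsum : ∑ k ∈ Finset.Icc 1 n, pt k = 1)
    (hp : ∀ i, 1 ≤ i → i ≤ n - 1 →
      p i = (∑ k ∈ Finset.Icc (i + 1) n, pt k * ∏ j ∈ Finset.Icc 1 i, (1 - μ k / μ j)) /
            (∑ k ∈ Finset.Icc i n, pt k * ∏ j ∈ Finset.Icc 1 (i - 1), (1 - μ k / μ j)))
    (hpn : p n = 0) :
    (∀ i, 1 ≤ i → i ≤ n - 1 → 0 < p i ∧ p i < 1) ∧
    (∀ s : ℝ, 0 ≤ s →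
      ∑ k ∈ Finset.Icc 1 n, pt k * (μ k / (s + μ k)) =
      ∑ i ∈ Finset.Icc 1 n,
        (1 - p i) * (∏ j ∈ Finset.Icc 1 (i - 1), p j) *
          ∏ j ∈ Finset.Icc 1 i, μ j / (s + μ j)) := by
  -- positivity of rates
  have hμpos' : ∀ j, 1 ≤ j → j ≤ n → 0 < μ j := by
    intro j h1 h2
    rcases eq_or_lt_of_le h2 with h | h
    · rw [h]; exact hμpos
    · exact hμpos.trans (hμdec j n h1 h le_rfl)
  -- positivity / vanishing of the partial products
  have hGpos : ∀ k i, i < k → k ≤ n → 0 < coxGG μ k i := by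
    intro k i hik hkn
    apply Finset.prod_pos
    intro j hj
    rw [Finset.mem_Icc] at hj
    have hjk : j < k := lt_of_le_of_lt hj.2 hik
    have hμj : 0 < μ j := hμpos' j hj.1 (le_trans (le_of_lt hjk) hkn)
    have : μ k / μ j < 1 := (div_lt_one hμj).2 (hμdec j k hj.1 hjk hkn)
    linarith
  have hGzero : ∀ k i, 1 ≤ k → k ≤ n → k ≤ i → coxGG μ k i = 0 := by
    intro k i h1 h2 h3
    apply Finset.prod_eq_zero (Finset.mem_Icc.2 ⟨h1, h3⟩)
    rw [div_self (ne_of_gt (hμpos' k h1 h2)), sub_self]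
  have hGnonneg : ∀ k i, 1 ≤ k → k ≤ n → 0 ≤ coxGG μ k i := by
    intro k i h1 h2
    rcases le_or_gt k i with h | h
    · rw [hGzero k i h1 h2 h]
    · exact le_of_lt (hGpos k i h h2)
  -- facts about U
  have hU0 : coxUU μ pt n 0 = 1 := by
    rw [coxUU]
    calc ∑ k ∈ Finset.Icc 1 n, pt k * coxGG μ k 0
        = ∑ k ∈ Finset.Icc 1 n, pt k := by
          apply Finset.sum_congr rfl; intro k _; rw [coxGG_zero, mul_one]
      _ = 1 := hptsum
  have hUn : coxUU μ pt n n = 0 := by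
    rw [coxUU]
    apply Finset.sum_eq_zero
    intro k hk
    rw [Finset.mem_Icc] at hk
    rw [hGzero k n hk.1 hk.2 hk.2, mul_zero]
  have hUpos : ∀ m, m < n → 0 < coxUU μ pt n m := by
    intro m hm
    apply Finset.sum_pos'
    · intro k hk
      rw [Finset.mem_Icc] at hk
      exact mul_nonneg (le_of_lt (hpt k hk.1 hk.2)) (hGnonneg k m hk.1 hk.2)
    · exact ⟨n, Finset.mem_Icc.2 ⟨hn, le_rfl⟩,
        mul_pos (hpt n hn le_rfl) (hGpos n m hm le_rfl)⟩
  have hUdiff : ∀ m, m + 1 ≤ n → coxUU μ pt n (m + 1) < coxUU μ pt n m := by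
    intro m hm
    rw [← sub_pos, coxUU, coxUU, ← Finset.sum_sub_distrib]
    apply Finset.sum_pos'
    · intro k hk
      rw [Finset.mem_Icc] at hk
      rw [coxGG_succ]
      have h1 : 0 ≤ pt k * coxGG μ k m :=
        mul_nonneg (le_of_lt (hpt k hk.1 hk.2)) (hGnonneg k m hk.1 hk.2)
      have h2 : 0 ≤ μ k / μ (m + 1) :=
        le_of_lt (div_pos (hμpos' k hk.1 hk.2) (hμpos' (m + 1) (by omega) hm))
      nlinarith
    · refine ⟨n, Finset.mem_Icc.2 ⟨hn, le_rfl⟩, ?_⟩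
      rw [coxGG_succ]
      have h1 : 0 < pt n * coxGG μ n m :=
        mul_pos (hpt n hn le_rfl) (hGpos n m (by omega) le_rfl)
      have h2 : 0 < μ n / μ (m + 1) :=
        div_pos (hμpos' n hn le_rfl) (hμpos' (m + 1) (by omega) hm)
      nlinarith
  -- p i = U i / U (i-1)
  have hpU : ∀ i, 1 ≤ i → i ≤ n - 1 → p i = coxUU μ pt n i / coxUU μ pt n (i - 1) := by
    intro i h1 h2
    rw [hp i h1 h2]
    congr 1
    · rw [coxUU]
      apply Finset.sum_subset (Finset.Icc_subset_Icc (by omega) le_rfl)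
      intro k hk hk'
      rw [Finset.mem_Icc] at hk
      rw [Finset.mem_Icc, not_and_or, not_le, not_le] at hk'
      have hki : k ≤ i := by omega
      show pt k * coxGG μ k i = 0
      rw [hGzero k i hk.1 hk.2 hki, mul_zero]
    · rw [coxUU]
      apply Finset.sum_subset (Finset.Icc_subset_Icc (by omega) le_rfl)
      intro k hk hk'
      rw [Finset.mem_Icc] at hk
      rw [Finset.mem_Icc, not_and_or, not_le, not_le] at hk'
      have hki : k ≤ i - 1 := by omega
      show pt k * coxGG μ k (i - 1) = 0
      rw [hGzero k (i - 1) hk.1 hk.2 hki, mul_zero]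
  -- telescoping product of the p's
  have prodP : ∀ m, m ≤ n - 1 → ∏ j ∈ Finset.Icc 1 m, p j = coxUU μ pt n m := by
    intro m
    induction m with
    | zero =>
      intro _
      rw [Finset.Icc_eq_empty (by omega), Finset.prod_empty, hU0]
    | succ m ih =>
      intro h
      rw [Finset.prod_Icc_succ_top (by omega), ih (by omega), hpU (m + 1) (by omega) h]
      have hm : m < n := by omega
      rw [show m + 1 - 1 = m from rfl]
      field_simp [ne_of_gt (hUpos m hm)]
  -- the Coxian coefficients
  have coef : ∀ i, 1 ≤ i → i ≤ n →
      (1 - p i) * ∏ j ∈ Finset.Icc 1 (i - 1), p j = coxUU μ pt n (i - 1) - coxUU μ pt n i := by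
    intro i h1 h2
    rcases le_or_gt i (n - 1) with h | h
    · rw [prodP (i - 1) (by omega), hpU i h1 h]
      have h0 : coxUU μ pt n (i - 1) ≠ 0 := ne_of_gt (hUpos (i - 1) (by omega))
      field_simp
    · have hi : i = n := by omega
      rw [hi, hpn, prodP (n - 1) le_rfl, hUn]
      ring
  constructor
  · -- 0 < p i < 1
    intro i h1 h2
    rw [hpU i h1 h2]
    have hUi1 : 0 < coxUU μ pt n (i - 1) := hUpos (i - 1) (by omega)
    have hUi : 0 < coxUU μ pt n i := hUpos i (by omega)
    have hlt : coxUU μ pt n i < coxUU μ pt n (i - 1) := by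
      have := hUdiff (i - 1) (by omega)
      rwa [show i - 1 + 1 = i by omega] at this
    exact ⟨div_pos hUi hUi1, (div_lt_one hUi1).2 hlt⟩
  · -- the LST identity
    intro s hs
    have hsμ : ∀ j, 1 ≤ j → j ≤ n → 0 < s + μ j := by
      intro j a b; have := hμpos' j a b; linarith
    -- key telescoping identity, per k
    have key : ∀ k, 1 ≤ k → k ≤ n → ∀ m, m ≤ n →
        ∑ i ∈ Finset.Icc 1 m, (coxGG μ k (i - 1) - coxGG μ k i) * coxFF μ s i
          = μ k / (s + μ k) - coxGG μ k m * coxFF μ s m * (μ k / (s + μ k)) := by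
      intro k hk1 hk2 m
      induction m with
      | zero =>
        intro _
        rw [Finset.Icc_eq_empty (by omega), Finset.sum_empty, coxGG_zero, coxFF_zero]
        ring
      | succ m ih =>
        intro h
        rw [Finset.sum_Icc_succ_top (by omega), ih (by omega),
          show m + 1 - 1 = m from rfl, coxGG_succ, coxFF_succ]
        have ha : μ (m + 1) ≠ 0 := ne_of_gt (hμpos' (m + 1) (by omega) h)
        have hsa : s + μ (m + 1) ≠ 0 := ne_of_gt (hsμ (m + 1) (by omega) h)
        have hsb : s + μ k ≠ 0 := ne_of_gt (hsμ k hk1 hk2)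
        field_simp
        ring
    have keyn : ∀ k, 1 ≤ k → k ≤ n →
        ∑ i ∈ Finset.Icc 1 n, (coxGG μ k (i - 1) - coxGG μ k i) * coxFF μ s i
          = μ k / (s + μ k) := by
      intro k hk1 hk2
      rw [key k hk1 hk2 n le_rfl, hGzero k n hk1 hk2 hk2]
      ring
    symm
    calc ∑ i ∈ Finset.Icc 1 n,
          (1 - p i) * (∏ j ∈ Finset.Icc 1 (i - 1), p j) * coxFF μ s i
        = ∑ i ∈ Finset.Icc 1 n,
            (coxUU μ pt n (i - 1) - coxUU μ pt n i) * coxFF μ s i := by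
          apply Finset.sum_congr rfl
          intro i hi
          rw [Finset.mem_Icc] at hi
          rw [coef i hi.1 hi.2]
      _ = ∑ i ∈ Finset.Icc 1 n, ∑ k ∈ Finset.Icc 1 n,
            pt k * ((coxGG μ k (i - 1) - coxGG μ k i) * coxFF μ s i) := by
          apply Finset.sum_congr rfl
          intro i _
          rw [coxUU, coxUU, ← Finset.sum_sub_distrib, Finset.sum_mul]
          apply Finset.sum_congr rfl
          intro k _
          ring
      _ = ∑ k ∈ Finset.Icc 1 n, ∑ i ∈ Finset.Icc 1 n,
            pt k * ((coxGG μ k (i - 1) - coxGG μ k i) * coxFF μ s i) := Finset.sum_comm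
      _ = ∑ k ∈ Finset.Icc 1 n, pt k * (μ k / (s + μ k)) := by
          apply Finset.sum_congr rfl
          intro k hk
          rw [Finset.mem_Icc] at hk
          rw [← Finset.mul_sum, keyn k hk.1 hk.2]
end

section
/- Define c_i := ∑_{ℓ=i}^n p̃_ℓ (μ_ℓ/μ_i) ∏_{v=1}^{i−1} (1 − μ_ℓ/μ_v) for i = 1,...,n. Then for every k ∈ {1,...,n}, ∑_{i=k}^n c_i ∏_{j=1, j≠k}^{i} μ_j/(μ_j − μ_k) = p̃_k. (The numbers c_i solve the linear system expressing the hyperexponential weights in terms of the Coxian phase-visit probabilities; indeed c_i = (1−p_i) ∏_{j=1}^{i−1} p_j.) -/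
open Finset

private lemma aux_step (l k1 m1 P Q' Q : ℝ) (hk : k1 ≠ 0) (hm : m1 ≠ 0)
    (hd : m1 - k1 ≠ 0) (hPQ : P * Q' = Q) :
    (l / k1) * Q + ((l / m1) * ((1 - l / k1) * P)) * ((m1 / (m1 - k1)) * Q')
      = (l / k1) * (((m1 - l) / (m1 - k1)) * Q) := by
  rw [← hPQ]
  field_simp
  ring

/-- The numbers `c i = ∑_{ℓ=i}^n p̃ ℓ (μ ℓ/μ i) ∏_{v=1}^{i−1} (1 − μ ℓ/μ v)` solve the
linear system expressing the hyperexponential weights in terms of the Coxian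
phase-visit probabilities. Products over empty ranges equal `1`. -/
theorem stmt2 (n : ℕ) (hn : 1 ≤ n) (μ pt c : ℕ → ℝ)
    (hμdec : ∀ i j, 1 ≤ i → i < j → j ≤ n → μ j < μ i)
    (hμpos : 0 < μ n)
    (hpt : ∀ k, 1 ≤ k → k ≤ n → 0 < pt k)
    (hptsum : ∑ k ∈ Finset.Icc 1 n, pt k = 1)
    (hc : ∀ i, 1 ≤ i → i ≤ n →
      c i = ∑ l ∈ Finset.Icc i n,
        pt l * (μ l / μ i) * ∏ v ∈ Finset.Icc 1 (i - 1), (1 - μ l / μ v)) :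
    ∀ k, 1 ≤ k → k ≤ n →
      ∑ i ∈ Finset.Icc k n,
        c i * ∏ j ∈ (Finset.Icc 1 i).erase k, (μ j / (μ j - μ k)) = pt k := by
  intro k hk1 hkn
  have hpos : ∀ j, 1 ≤ j → j ≤ n → 0 < μ j := by
    intro j h1 h2
    rcases eq_or_lt_of_le h2 with h | h
    · rw [h]; exact hμpos
    · exact hμpos.trans (hμdec j n h1 h le_rfl)
  have hμne : ∀ a b, 1 ≤ a → a ≤ n → 1 ≤ b → b ≤ n → a ≠ b → μ a - μ b ≠ 0 := by
    intro a b ha1 ha2 hb1 hb2 hab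
    rcases lt_or_gt_of_ne hab with h | h
    · exact ne_of_gt (sub_pos.mpr (hμdec a b ha1 h hb2))
    · exact ne_of_lt (sub_neg.mpr (hμdec b a hb1 h ha2))
  -- pointwise combination of the two products
  have hcomb : ∀ (ℓ : ℕ) (s : Finset ℕ), (∀ v ∈ s, 1 ≤ v ∧ v ≤ n ∧ v ≠ k) →
      (∏ v ∈ s, (1 - μ ℓ / μ v)) * (∏ v ∈ s, (μ v / (μ v - μ k)))
        = ∏ v ∈ s, ((μ v - μ ℓ) / (μ v - μ k)) := by
    intro ℓ s hs
    rw [← Finset.prod_mul_distrib]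
    refine Finset.prod_congr rfl ?_
    intro v hv
    obtain ⟨h1, h2, h3⟩ := hs v hv
    have hv0 : μ v ≠ 0 := ne_of_gt (hpos v h1 h2)
    have hvk : μ v - μ k ≠ 0 := hμne v k h1 h2 hk1 hkn h3
    field_simp
  have herase : ∀ i : ℕ, (Finset.Icc 1 i).erase i = Finset.Icc 1 (i - 1) := by
    intro i; ext a; simp only [Finset.mem_erase, Finset.mem_Icc]; omega
  -- the key telescoping identity
  have key : ∀ ℓ, k ≤ ℓ → ℓ ≤ n →
      ∑ i ∈ Finset.Icc k ℓ, ((μ ℓ / μ i) * ∏ v ∈ Finset.Icc 1 (i - 1), (1 - μ ℓ / μ v)) *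
        ∏ j ∈ (Finset.Icc 1 i).erase k, (μ j / (μ j - μ k))
      = (if ℓ = k then 1 else 0) := by
    intro ℓ hkl hln
    have tel : ∀ m, k ≤ m → m ≤ n →
        ∑ i ∈ Finset.Icc k m, ((μ ℓ / μ i) * ∏ v ∈ Finset.Icc 1 (i - 1), (1 - μ ℓ / μ v)) *
          ∏ j ∈ (Finset.Icc 1 i).erase k, (μ j / (μ j - μ k))
        = (μ ℓ / μ k) * ∏ v ∈ (Finset.Icc 1 m).erase k, ((μ v - μ ℓ) / (μ v - μ k)) := by
      intro m hkm
      induction m, hkm using Nat.le_induction with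
      | base =>
        intro _
        rw [Finset.Icc_self, Finset.sum_singleton, herase k, mul_assoc,
          hcomb ℓ (Finset.Icc 1 (k - 1)) (by intro v hv; simp only [Finset.mem_Icc] at hv; omega)]
      | succ m hkm ih =>
        intro hm1n
        have ih' := ih (by omega)
        rw [Finset.sum_Icc_succ_top (by omega), ih']
        have hA : (Finset.Icc 1 (m + 1)).erase k
            = insert (m + 1) ((Finset.Icc 1 m).erase k) := by
          ext a; simp only [Finset.mem_erase, Finset.mem_Icc, Finset.mem_insert]; omega
        have hnm : m + 1 ∉ (Finset.Icc 1 m).erase k := by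
          simp [Finset.mem_erase, Finset.mem_Icc]
        have hkmem : k ∈ Finset.Icc 1 m := by simp [Finset.mem_Icc]; omega
        rw [hA, Finset.prod_insert hnm, Finset.prod_insert hnm,
          Nat.add_sub_cancel, ← Finset.mul_prod_erase (Finset.Icc 1 m) _ hkmem]
        have hPQ := hcomb ℓ ((Finset.Icc 1 m).erase k)
          (by intro v hv; simp only [Finset.mem_erase, Finset.mem_Icc] at hv; omega)
        exact aux_step (μ ℓ) (μ k) (μ (m + 1)) _ _ _
          (ne_of_gt (hpos k hk1 hkn)) (ne_of_gt (hpos (m + 1) (by omega) hm1n))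
          (hμne (m + 1) k (by omega) hm1n hk1 hkn (by omega)) hPQ
    rw [tel ℓ hkl hln]
    by_cases h : ℓ = k
    · subst h
      rw [if_pos rfl, div_self (ne_of_gt (hpos ℓ hk1 hln)), one_mul]
      refine Finset.prod_eq_one ?_
      intro v hv
      simp only [Finset.mem_erase, Finset.mem_Icc] at hv
      exact div_self (hμne v ℓ hv.2.1 (le_trans hv.2.2 hln) hk1 hln hv.1)
    · rw [if_neg h]
      have hmem : ℓ ∈ (Finset.Icc 1 ℓ).erase k := by
        simp only [Finset.mem_erase, Finset.mem_Icc]; omega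
      rw [Finset.prod_eq_zero hmem (by rw [sub_self, zero_div]), mul_zero]
  -- expand c and swap the order of summation
  have expand : ∀ i ∈ Finset.Icc k n,
      c i * ∏ j ∈ (Finset.Icc 1 i).erase k, (μ j / (μ j - μ k))
      = ∑ l ∈ Finset.Icc i n, pt l * (((μ l / μ i) *
          ∏ v ∈ Finset.Icc 1 (i - 1), (1 - μ l / μ v)) *
          ∏ j ∈ (Finset.Icc 1 i).erase k, (μ j / (μ j - μ k))) := by
    intro i hi
    simp only [Finset.mem_Icc] at hi
    rw [hc i (by omega) hi.2, Finset.sum_mul]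
    exact Finset.sum_congr rfl (by intro l _; ring)
  rw [Finset.sum_congr rfl expand]
  rw [Finset.sum_comm' (t' := Finset.Icc k n) (s' := fun l => Finset.Icc k l)
    (by intro x y; simp only [Finset.mem_Icc]; omega)]
  have : ∀ l ∈ Finset.Icc k n,
      ∑ i ∈ Finset.Icc k l, pt l * (((μ l / μ i) *
          ∏ v ∈ Finset.Icc 1 (i - 1), (1 - μ l / μ v)) *
          ∏ j ∈ (Finset.Icc 1 i).erase k, (μ j / (μ j - μ k)))
      = pt l * (if l = k then 1 else 0) := by
    intro l hl
    simp only [Finset.mem_Icc] at hl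
    rw [← Finset.mul_sum, key l hl.1 hl.2]
  rw [Finset.sum_congr rfl this]
  simp only [mul_ite, mul_one, mul_zero]
  rw [Finset.sum_ite_eq' (Finset.Icc k n) k pt, if_pos (by simp [Finset.mem_Icc]; omega)]
end

section
/- For every i = 1,...,n, (1 − p_i) μ_i = ( ∑_{k=i}^n p̃_k μ_k ∏_{j=1}^{i−1} (1 − μ_k/μ_j) ) / ( ∑_{k=i}^n p̃_k ∏_{j=1}^{i−1} (1 − μ_k/μ_j) ), and the denominator is strictly positive. -/
open Finset

/-- Explicit expression for `(1 − p i) μ i` in the Coxian representation of a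
hyperexponential distribution, together with positivity of the denominator.
Products over empty ranges equal `1`. -/
theorem stmt3 (n : ℕ) (hn : 1 ≤ n) (μ pt p : ℕ → ℝ)
    (hμdec : ∀ i j, 1 ≤ i → i < j → j ≤ n → μ j < μ i)
    (hμpos : 0 < μ n)
    (hpt : ∀ k, 1 ≤ k → k ≤ n → 0 < pt k)
    (hptsum : ∑ k ∈ Finset.Icc 1 n, pt k = 1)
    (hp : ∀ i, 1 ≤ i → i ≤ n - 1 →
      p i = (∑ k ∈ Finset.Icc (i + 1) n, pt k * ∏ j ∈ Finset.Icc 1 i, (1 - μ k / μ j)) /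
            (∑ k ∈ Finset.Icc i n, pt k * ∏ j ∈ Finset.Icc 1 (i - 1), (1 - μ k / μ j)))
    (hpn : p n = 0) :
    ∀ i, 1 ≤ i → i ≤ n →
      0 < ∑ k ∈ Finset.Icc i n, pt k * ∏ j ∈ Finset.Icc 1 (i - 1), (1 - μ k / μ j) ∧
      (1 - p i) * μ i =
        (∑ k ∈ Finset.Icc i n, pt k * μ k * ∏ j ∈ Finset.Icc 1 (i - 1), (1 - μ k / μ j)) /
        (∑ k ∈ Finset.Icc i n, pt k * ∏ j ∈ Finset.Icc 1 (i - 1), (1 - μ k / μ j)) := by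
  have hμpos' : ∀ k, 1 ≤ k → k ≤ n → 0 < μ k := by
    intro k hk1 hkn
    rcases eq_or_lt_of_le hkn with h | h
    · rw [h]; exact hμpos
    · exact hμpos.trans (hμdec k n hk1 h le_rfl)
  intro i hi1 hin
  have hP : ∀ k, i ≤ k → k ≤ n → 0 < ∏ j ∈ Icc 1 (i-1), (1 - μ k / μ j) := by
    intro k hik hkn
    apply Finset.prod_pos
    intro j hj
    simp only [mem_Icc] at hj
    have hjk : j < k := by omega
    have hjpos : 0 < μ j := hμpos' j hj.1 (by omega)
    have hkj : μ k < μ j := hμdec j k hj.1 hjk hkn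
    have := (div_lt_one hjpos).mpr hkj
    linarith
  have hD : 0 < ∑ k ∈ Icc i n, pt k * ∏ j ∈ Icc 1 (i-1), (1 - μ k / μ j) := by
    apply Finset.sum_pos
    · intro k hk
      simp only [mem_Icc] at hk
      exact mul_pos (hpt k (by omega) hk.2) (hP k hk.1 hk.2)
    · exact ⟨i, by simp [mem_Icc]; omega⟩
  refine ⟨hD, ?_⟩
  rcases eq_or_lt_of_le hin with h | h
  · -- i = n
    subst h
    rw [hpn]
    simp only [Finset.Icc_self, Finset.sum_singleton]
    have hne : pt i * ∏ j ∈ Icc 1 (i-1), (1 - μ i / μ j) ≠ 0 :=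
      (mul_pos (hpt i hi1 le_rfl) (hP i le_rfl le_rfl)).ne'
    rw [sub_zero, one_mul, mul_right_comm, mul_div_cancel_left₀ _ hne]
  · -- i < n
    have hμi : 0 < μ i := hμpos' i hi1 hin
    rw [hp i hi1 (by omega)]
    set D := ∑ k ∈ Icc i n, pt k * ∏ j ∈ Icc 1 (i-1), (1 - μ k / μ j) with hDdef
    have hsplit : Finset.Icc i n = insert i (Finset.Icc (i+1) n) := by
      ext x
      simp only [mem_Icc, mem_insert]
      omega
    have hprodi : ∀ k, ∏ j ∈ Icc 1 i, (1 - μ k / μ j) =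
        (∏ j ∈ Icc 1 (i-1), (1 - μ k / μ j)) * (1 - μ k / μ i) := by
      intro k
      have : i = (i - 1) + 1 := by omega
      rw [this, Finset.prod_Icc_succ_top (by omega)]
      rw [← this]
    have key : (D - ∑ k ∈ Icc (i+1) n, pt k * ∏ j ∈ Icc 1 i, (1 - μ k / μ j)) * μ i =
        ∑ k ∈ Icc i n, pt k * μ k * ∏ j ∈ Icc 1 (i-1), (1 - μ k / μ j) := by
      have hext : ∑ k ∈ Icc (i+1) n, pt k * ∏ j ∈ Icc 1 i, (1 - μ k / μ j) =
          ∑ k ∈ Icc i n, pt k * ∏ j ∈ Icc 1 i, (1 - μ k / μ j) := by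
        rw [hsplit, Finset.sum_insert (by simp [mem_Icc])]
        rw [hprodi i]
        have : (1 : ℝ) - μ i / μ i = 0 := by
          rw [div_self hμi.ne']; ring
        rw [this]
        ring
      rw [hext, hDdef, ← Finset.sum_sub_distrib, Finset.sum_mul]
      apply Finset.sum_congr rfl
      intro k hk
      rw [hprodi k]
      field_simp
      ring
    rw [eq_div_iff hD.ne', ← key]
    field_simp
end

section
/- The sequence μ_i(1−p_i) is strictly decreasing in i, i.e. μ_i(1−p_i) > μ_{i+1}(1−p_{i+1}) for every i = 1,...,n−1. Hence every hyperexponential distribution belongs to the class C_0 of distributions possessing a Coxian representation in which μ_i(1−p_i) is decreasing in i. -/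
open Finset

/-- Theorem 1 of the paper: for the Coxian representation of a hyperexponential
distribution, the sequence `μ i (1 − p i)` is strictly decreasing in `i`; hence every
hyperexponential distribution belongs to the class `C₀`.
Products over empty ranges equal `1`. -/
theorem stmt4 (n : ℕ) (hn : 1 ≤ n) (μ pt p : ℕ → ℝ)
    (hμdec : ∀ i j, 1 ≤ i → i < j → j ≤ n → μ j < μ i)
    (hμpos : 0 < μ n)
    (hpt : ∀ k, 1 ≤ k → k ≤ n → 0 < pt k)
    (hptsum : ∑ k ∈ Finset.Icc 1 n, pt k = 1)
    (hp : ∀ i, 1 ≤ i → i ≤ n - 1 →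
      p i = (∑ k ∈ Finset.Icc (i + 1) n, pt k * ∏ j ∈ Finset.Icc 1 i, (1 - μ k / μ j)) /
            (∑ k ∈ Finset.Icc i n, pt k * ∏ j ∈ Finset.Icc 1 (i - 1), (1 - μ k / μ j)))
    (hpn : p n = 0) :
    ∀ i, 1 ≤ i → i + 1 ≤ n → μ (i + 1) * (1 - p (i + 1)) < μ i * (1 - p i) := by
  have hμpos' : ∀ j, 1 ≤ j → j ≤ n → 0 < μ j := by
    intro j hj hjn
    rcases eq_or_lt_of_le hjn with h | h
    · rw [h]; exact hμpos
    · exact hμpos.trans (hμdec j n hj h le_rfl)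
  set A : ℕ → ℕ → ℝ := fun m k => pt k * ∏ j ∈ Finset.Icc 1 (m - 1), (1 - μ k / μ j) with hA
  have hApos : ∀ m k, 1 ≤ m → m ≤ k → k ≤ n → 0 < A m k := by
    intro m k hm hmk hkn
    apply mul_pos (hpt k (hm.trans hmk) hkn)
    apply Finset.prod_pos
    intro j hj
    simp only [Finset.mem_Icc] at hj
    have hjk : j < k := by omega
    have hμjk : μ k < μ j := hμdec j k hj.1 hjk hkn
    have hj0 : 0 < μ j := hμpos' j hj.1 (by omega)
    rw [sub_pos, div_lt_one hj0]
    exact hμjk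
  -- splitting of the product
  have hsplit : ∀ m k, 1 ≤ m →
      pt k * ∏ j ∈ Finset.Icc 1 m, (1 - μ k / μ j) = A m k * (1 - μ k / μ m) := by
    intro m k hm
    obtain ⟨m', rfl⟩ : ∃ m', m = m' + 1 := ⟨m - 1, by omega⟩
    rw [Finset.prod_Icc_succ_top (by omega : 1 ≤ m' + 1)]
    simp only [hA, Nat.add_sub_cancel]
    ring
  -- the ratio formula
  have hratio : ∀ m, 1 ≤ m → m ≤ n →
      μ m * (1 - p m)
        = (∑ k ∈ Finset.Icc m n, μ k * A m k) / (∑ k ∈ Finset.Icc m n, A m k) := by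
    intro m hm hmn
    have hμm : (0 : ℝ) < μ m := hμpos' m hm hmn
    rcases eq_or_lt_of_le hmn with heq | hlt
    · subst heq
      rw [hpn, Finset.Icc_self, Finset.sum_singleton, Finset.sum_singleton,
        mul_div_assoc, div_self (hApos m m hm le_rfl le_rfl).ne']
      ring
    · have hSa : (0 : ℝ) < ∑ k ∈ Finset.Icc m n, A m k :=
        Finset.sum_pos (fun k hk => by
          simp only [Finset.mem_Icc] at hk; exact hApos m k hm hk.1 hk.2)
          (by rw [Finset.nonempty_Icc]; omega)
      have hext : ∑ k ∈ Finset.Icc (m + 1) n, pt k * ∏ j ∈ Finset.Icc 1 m, (1 - μ k / μ j)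
          = ∑ k ∈ Finset.Icc m n, A m k * (1 - μ k / μ m) := by
        rw [show Finset.Icc m n = insert m (Finset.Icc (m + 1) n) by
            ext x; simp only [Finset.mem_Icc, Finset.mem_insert]; omega,
          Finset.sum_insert (by simp)]
        rw [div_self hμm.ne']
        rw [Finset.sum_congr rfl fun k _ => hsplit m k hm]
        ring
      rw [hp m hm (by omega), hext]
      have key : μ m * (∑ k ∈ Finset.Icc m n, A m k)
          - μ m * (∑ k ∈ Finset.Icc m n, A m k * (1 - μ k / μ m))
          = ∑ k ∈ Finset.Icc m n, μ k * A m k := by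
        rw [Finset.mul_sum, Finset.mul_sum, ← Finset.sum_sub_distrib]
        refine Finset.sum_congr rfl fun k hk => ?_
        field_simp
        ring
      have hden : (∑ k ∈ Finset.Icc m n, pt k * ∏ j ∈ Finset.Icc 1 (m - 1), (1 - μ k / μ j))
          = ∑ k ∈ Finset.Icc m n, A m k := rfl
      rw [hden, eq_div_iff hSa.ne']
      have heq : μ m * (1 - (∑ k ∈ Finset.Icc m n, A m k * (1 - μ k / μ m))
            / ∑ k ∈ Finset.Icc m n, A m k) * (∑ k ∈ Finset.Icc m n, A m k)
          = μ m * (∑ k ∈ Finset.Icc m n, A m k)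
            - μ m * (∑ k ∈ Finset.Icc m n, A m k * (1 - μ k / μ m)) := by
        field_simp
      rw [heq, key]
  intro i hi hin
  have hμi : (0 : ℝ) < μ i := hμpos' i hi (by omega)
  -- rewrite A (i+1) in terms of A i
  have hB : ∀ k, A (i + 1) k = A i k * (1 - μ k / μ i) := by
    intro k
    have := hsplit i k hi
    simpa only [hA, Nat.add_sub_cancel] using this
  rw [hratio i hi (by omega), hratio (i + 1) (by omega) hin]
  set s := Finset.Icc i n with hs
  -- extend the sums for index i+1 down to i
  have hBi : A (i + 1) i = 0 := by
    rw [hB, div_self hμi.ne']; ring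
  have hins : Finset.Icc (i + 1) n = Finset.erase s i := by
    ext x; simp only [hs, Finset.mem_Icc, Finset.mem_erase]; omega
  have hextS : ∑ k ∈ Finset.Icc (i + 1) n, A (i + 1) k = ∑ k ∈ s, A (i + 1) k := by
    rw [hins]
    exact Finset.sum_erase _ hBi
  have hextU : ∑ k ∈ Finset.Icc (i + 1) n, μ k * A (i + 1) k
      = ∑ k ∈ s, μ k * A (i + 1) k := by
    rw [hins]
    exact Finset.sum_erase _ (by rw [hBi, mul_zero])
  rw [hextS, hextU]
  have haspos : ∀ k ∈ s, 0 < A i k := fun k hk => by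
    simp only [hs, Finset.mem_Icc] at hk; exact hApos i k hi hk.1 hk.2
  have hbnonneg : ∀ k ∈ s, 0 ≤ A (i + 1) k := by
    intro k hk
    simp only [hs, Finset.mem_Icc] at hk
    rw [hB]
    rcases eq_or_lt_of_le hk.1 with h | h
    · rw [← h, div_self hμi.ne', sub_self, mul_zero]
    · refine le_of_lt (mul_pos (hApos i k hi hk.1 hk.2) ?_)
      rw [sub_pos, div_lt_one hμi]
      exact hμdec i k hi h hk.2
  have hi1s : i + 1 ∈ s := by simp only [hs, Finset.mem_Icc]; omega
  have his : i ∈ s := by simp only [hs, Finset.mem_Icc]; omega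
  have hbpos : 0 < A (i + 1) (i + 1) := by
    rw [hB]
    refine mul_pos (hApos i (i + 1) hi (by omega) hin) ?_
    rw [sub_pos, div_lt_one hμi]
    exact hμdec i (i + 1) hi (by omega) hin
  have hSb : (0 : ℝ) < ∑ k ∈ s, A (i + 1) k :=
    Finset.sum_pos' hbnonneg ⟨i + 1, hi1s, hbpos⟩
  have hSa : (0 : ℝ) < ∑ k ∈ s, A i k :=
    Finset.sum_pos haspos ⟨i, his⟩
  rw [div_lt_div_iff₀ hSb hSa]
  -- key algebraic identity
  have h1 : (∑ k ∈ s, μ k * A i k) * (∑ l ∈ s, A (i + 1) l)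
      - (∑ k ∈ s, μ k * A (i + 1) k) * (∑ l ∈ s, A i l)
      = (∑ k ∈ s, ∑ l ∈ s, μ k * A i k * A i l * (μ k - μ l)) / μ i := by
    rw [Finset.sum_mul_sum, Finset.sum_mul_sum, ← Finset.sum_sub_distrib, Finset.sum_div]
    refine Finset.sum_congr rfl fun k hk => ?_
    rw [← Finset.sum_sub_distrib, Finset.sum_div]
    refine Finset.sum_congr rfl fun l hl => ?_
    rw [hB l, hB k]
    field_simp
    ring
  set E := ∑ k ∈ s, ∑ l ∈ s, μ k * A i k * A i l * (μ k - μ l) with hE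
  have h2 : E + E = ∑ k ∈ s, ∑ l ∈ s, A i k * A i l * (μ k - μ l) ^ 2 := by
    have hswap : E = ∑ k ∈ s, ∑ l ∈ s, μ l * A i l * A i k * (μ l - μ k) := by
      rw [hE]; exact Finset.sum_comm
    nth_rewrite 2 [hswap]
    rw [← Finset.sum_add_distrib]
    refine Finset.sum_congr rfl fun k hk => ?_
    rw [← Finset.sum_add_distrib]
    refine Finset.sum_congr rfl fun l hl => ?_
    ring
  have hD : 0 < ∑ k ∈ s, ∑ l ∈ s, A i k * A i l * (μ k - μ l) ^ 2 := by
    apply Finset.sum_pos'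
    · intro k hk
      apply Finset.sum_nonneg
      intro l hl
      exact mul_nonneg (mul_nonneg (haspos k hk).le (haspos l hl).le) (sq_nonneg _)
    · refine ⟨i, his, Finset.sum_pos' (fun l hl =>
        mul_nonneg (mul_nonneg (haspos i his).le (haspos l hl).le) (sq_nonneg _)) ?_⟩
      refine ⟨i + 1, hi1s, ?_⟩
      have : μ (i + 1) < μ i := hμdec i (i + 1) hi (by omega) hin
      have hsq : 0 < (μ i - μ (i + 1)) ^ 2 := pow_pos (sub_pos.mpr this) 2
      exact mul_pos (mul_pos (haspos i his) (haspos (i + 1) hi1s)) hsq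
  have hEpos : 0 < E := by linarith
  have : 0 < E / μ i := div_pos hEpos hμi
  linarith [h1, this]
end

section
/- Define R_n := 1/μ_n and R_{i−1} := 1/μ_{i−1} + p_{i−1} R_i for i = n, n−1, ..., 2. If μ_i(1−p_i) is strictly decreasing in i (i.e. μ_{i−1}(1−p_{i−1}) > μ_i(1−p_i) for i = 2,...,n), then R_i > R_{i−1} for every i = 2,...,n. -/
/-- Lemma 2 of the paper: if `μ i (1 − p i)` is strictly decreasing in `i`, then the
expected remaining service times `R i` of a Coxian job are strictly increasing in the
phase: `R (i−1) < R i` for `i = 2,...,n`. -/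
theorem stmt5 (n : ℕ) (hn : 2 ≤ n) (μ p R : ℕ → ℝ)
    (hμ : ∀ i, 1 ≤ i → i ≤ n → 0 < μ i)
    (hp : ∀ i, 1 ≤ i → i ≤ n - 1 → 0 < p i ∧ p i < 1)
    (hpn : p n = 0)
    (hRn : R n = 1 / μ n)
    (hRrec : ∀ i, 2 ≤ i → i ≤ n → R (i - 1) = 1 / μ (i - 1) + p (i - 1) * R i)
    (hν : ∀ i, 2 ≤ i → i ≤ n → μ i * (1 - p i) < μ (i - 1) * (1 - p (i - 1))) :
    ∀ i, 2 ≤ i → i ≤ n → R (i - 1) < R i := by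
  -- positivity of the completion rates ν j = μ j * (1 - p j)
  have hν0 : ∀ j, 1 ≤ j → j ≤ n → 0 < μ j * (1 - p j) := by
    intro j h1 h2
    rcases lt_or_eq_of_le h2 with h | h
    · have hj : j ≤ n - 1 := by omega
      have hpj := hp j h1 hj
      have hmj := hμ j h1 h2
      nlinarith [hpj.2]
    · subst h
      have hmj := hμ j h1 le_rfl
      simp [hpn]
      exact hmj
  -- key invariant: R i ≥ 1 / ν i, by downward induction
  have key : ∀ k i, i + k = n → 1 ≤ i → 1 / (μ i * (1 - p i)) ≤ R i := by
    intro k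
    induction k with
    | zero =>
      intro i hik h1
      simp only [Nat.add_zero] at hik
      subst hik
      rw [hRn, hpn]
      simp
    | succ k ih =>
      intro i hik h1
      have hin : i + 1 ≤ n := by omega
      have hi1 : i ≤ n - 1 := by omega
      have hRi : R i = 1 / μ i + p i * R (i + 1) := by
        have h := hRrec (i + 1) (by omega) hin
        simpa using h
      have hIH : 1 / (μ (i + 1) * (1 - p (i + 1))) ≤ R (i + 1) :=
        ih (i + 1) (by omega) (by omega)
      have hνi : μ (i + 1) * (1 - p (i + 1)) < μ i * (1 - p i) := by
        have h := hν (i + 1) (by omega) hin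
        simpa using h
      have hb0 : 0 < μ (i + 1) * (1 - p (i + 1)) := hν0 (i + 1) (by omega) hin
      have ha0 : 0 < μ i * (1 - p i) := hν0 i h1 (by omega)
      have hinv : 1 / (μ i * (1 - p i)) < 1 / (μ (i + 1) * (1 - p (i + 1))) :=
        one_div_lt_one_div_of_lt hb0 hνi
      have hRlt : 1 / (μ i * (1 - p i)) < R (i + 1) := lt_of_lt_of_le hinv hIH
      have hpi := hp i h1 hi1
      have hmi := hμ i h1 (by omega)
      have hid : 1 / (μ i * (1 - p i)) = 1 / μ i + p i * (1 / (μ i * (1 - p i))) := by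
        have h1p : (1 : ℝ) - p i ≠ 0 := by nlinarith [hpi.2]
        field_simp
        ring
      rw [hRi, hid]
      have : p i * (1 / (μ i * (1 - p i))) ≤ p i * R (i + 1) :=
        mul_le_mul_of_nonneg_left hRlt.le hpi.1.le
      linarith
  -- main argument
  intro i h2 hin
  have h1 : 1 ≤ i - 1 := by omega
  have h1n : i - 1 ≤ n - 1 := by omega
  have hpi := hp (i - 1) h1 h1n
  have hmi := hμ (i - 1) h1 (by omega)
  have hkey : 1 / (μ i * (1 - p i)) ≤ R i := key (n - i) i (by omega) (by omega)
  have hνi := hν i h2 hin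
  have hb0 : 0 < μ i * (1 - p i) := hν0 i (by omega) hin
  have ha0 : 0 < μ (i - 1) * (1 - p (i - 1)) := hν0 (i - 1) h1 (by omega)
  have hinv : 1 / (μ (i - 1) * (1 - p (i - 1))) < 1 / (μ i * (1 - p i)) :=
    one_div_lt_one_div_of_lt hb0 hνi
  have hRgt : 1 / (μ (i - 1) * (1 - p (i - 1))) < R i := lt_of_lt_of_le hinv hkey
  have hRrec' := hRrec i h2 hin
  have hmul : 1 < R i * (μ (i - 1) * (1 - p (i - 1))) := (div_lt_iff₀ ha0).mp hRgt
  rw [hRrec']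
  have hdiv : 1 / μ (i - 1) < (1 - p (i - 1)) * R i := by
    rw [div_lt_iff₀ hmi]
    nlinarith
  nlinarith
end

section
/- Let S be the n×n real matrix with S_{ii} = −μ_i for all i, S_{i,i+1} = p_i μ_i for i = 1,...,n−1, and all other entries 0, and set ν_i := μ_i(1−p_i) (with p_n = 0). Assume ν_i is strictly decreasing in i. Then for every t ≥ 0 the survival probability G(t) := ∑_{i=1}^n (exp(tS))_{1,i} is strictly positive, and the hazard rate h(t) := ( ∑_{i=1}^n (exp(tS))_{1,i} ν_i ) / G(t) is nonincreasing on [0,∞): h(s) ≥ h(t) whenever 0 ≤ s ≤ t. -/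
open Finset NormedSpace

section CoxAux

attribute [local instance] Matrix.linftyOpSemiNormedRing Matrix.linftyOpNormedRing
  Matrix.linftyOpNormedAlgebra

variable {n : ℕ}

/-- entry evaluation as a continuous linear map -/
noncomputable def coxEntryCLM (i j : Fin n) : Matrix (Fin n) (Fin n) ℝ →L[ℝ] ℝ :=
  LinearMap.toContinuousLinearMap
    { toFun := fun M => M i j, map_add' := fun _ _ => rfl, map_smul' := fun _ _ => rfl }

lemma coxEntryCLM_apply (i j : Fin n) (M : Matrix (Fin n) (Fin n) ℝ) :
    coxEntryCLM i j M = M i j := rfl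

lemma cox_exp_entry_eq_tsum (A : Matrix (Fin n) (Fin n) ℝ) (i j : Fin n) :
    exp A i j = ∑' k : ℕ, (Nat.factorial k : ℝ)⁻¹ * (A ^ k) i j := by
  have h1 : exp A = ∑' k : ℕ, (Nat.factorial k : ℝ)⁻¹ • A ^ k := congrFun (exp_eq_tsum ℝ) A
  rw [h1]
  refine ((coxEntryCLM i j).map_tsum (expSeries_summable' A)).trans ?_
  simp only [coxEntryCLM_apply, Matrix.smul_apply, smul_eq_mul]

lemma cox_summable_entry (A : Matrix (Fin n) (Fin n) ℝ) (i j : Fin n) :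
    Summable fun k : ℕ => (Nat.factorial k : ℝ)⁻¹ * (A ^ k) i j := by
  have := (expSeries_summable' (𝕂 := ℝ) A).map (coxEntryCLM i j)
    (coxEntryCLM i j).continuous
  simpa [Function.comp_def, coxEntryCLM_apply, Matrix.smul_apply, smul_eq_mul] using this

lemma cox_pow_entry_nonneg {A : Matrix (Fin n) (Fin n) ℝ} (hA : ∀ i j, 0 ≤ A i j) (k : ℕ) :
    ∀ i j, 0 ≤ (A ^ k) i j := by
  induction k with
  | zero => intro i j; rw [pow_zero]; rcases eq_or_ne i j with h | h <;>
      simp [Matrix.one_apply, h]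
  | succ m ih =>
    intro i j
    rw [pow_succ, Matrix.mul_apply]
    exact Finset.sum_nonneg fun l _ => mul_nonneg (ih i l) (hA l j)

lemma cox_exp_entry_nonneg_of_nonneg {A : Matrix (Fin n) (Fin n) ℝ}
    (hA : ∀ i j, 0 ≤ A i j) (i j : Fin n) : 0 ≤ exp A i j := by
  rw [cox_exp_entry_eq_tsum]
  exact tsum_nonneg fun k => mul_nonneg (by positivity) (cox_pow_entry_nonneg hA k i j)

lemma cox_exp_diag_ge_one_of_nonneg {A : Matrix (Fin n) (Fin n) ℝ}
    (hA : ∀ i j, 0 ≤ A i j) (i : Fin n) : 1 ≤ exp A i i := by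
  rw [cox_exp_entry_eq_tsum]
  have h0 : (Nat.factorial 0 : ℝ)⁻¹ * (A ^ 0) i i = 1 := by simp
  calc (1:ℝ) = (Nat.factorial 0 : ℝ)⁻¹ * (A ^ 0) i i := h0.symm
    _ ≤ ∑' k : ℕ, (Nat.factorial k : ℝ)⁻¹ * (A ^ k) i i :=
      Summable.le_tsum (cox_summable_entry A i i) 0
        (fun k _ => mul_nonneg (by positivity) (cox_pow_entry_nonneg hA k i i))

lemma cox_exp_shift (A : Matrix (Fin n) (Fin n) ℝ) (c : ℝ) (i j : Fin n) :
    exp A i j = Real.exp (-c) * exp (A + c • (1 : Matrix (Fin n) (Fin n) ℝ)) i j := by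
  have hA : A = (A + c • (1 : Matrix (Fin n) (Fin n) ℝ)) + (-c) • 1 := by
    rw [add_assoc, ← add_smul, add_neg_cancel, zero_smul, add_zero]
  have hcomm : Commute (A + c • (1 : Matrix (Fin n) (Fin n) ℝ))
      ((-c) • (1 : Matrix (Fin n) (Fin n) ℝ)) :=
    (Commute.one_right _).smul_right _
  have hexp1 : exp ((-c) • (1 : Matrix (Fin n) (Fin n) ℝ))
      = Real.exp (-c) • (1 : Matrix (Fin n) (Fin n) ℝ) := by
    have h2 : (-c) • (1 : Matrix (Fin n) (Fin n) ℝ) = algebraMap ℝ _ (-c) :=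
      (Algebra.algebraMap_eq_smul_one _).symm
    rw [h2]; erw [← algebraMap_exp_comm]; rw [Algebra.algebraMap_eq_smul_one, ← Real.exp_eq_exp_ℝ]
  conv_lhs => rw [hA]
  erw [exp_add_of_commute hcomm, hexp1]; rw [mul_smul_comm, Matrix.mul_one, Matrix.smul_apply,
    smul_eq_mul]
  rfl

lemma cox_exp_entry_nonneg {A : Matrix (Fin n) (Fin n) ℝ}
    (hA : ∀ i j, i ≠ j → 0 ≤ A i j) (i j : Fin n) : 0 ≤ exp A i j := by
  set c : ℝ := ∑ k : Fin n, |A k k| with hc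
  have hN : ∀ a b : Fin n, 0 ≤ (A + c • (1 : Matrix (Fin n) (Fin n) ℝ)) a b := by
    intro a b
    rcases eq_or_ne a b with rfl | hab
    · have h1 : |A a a| ≤ c := Finset.single_le_sum (fun k _ => abs_nonneg (A k k)) (mem_univ a)
      have := neg_abs_le (A a a)
      simp only [Matrix.add_apply, Matrix.smul_apply, Matrix.one_apply_eq, smul_eq_mul, mul_one]
      linarith
    · simp only [Matrix.add_apply, Matrix.smul_apply, Matrix.one_apply_ne hab, smul_eq_mul,
        mul_zero, add_zero]
      exact hA a b hab
  rw [cox_exp_shift A c i j]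
  exact mul_nonneg (Real.exp_nonneg _) (cox_exp_entry_nonneg_of_nonneg hN i j)

lemma cox_exp_diag_pos {A : Matrix (Fin n) (Fin n) ℝ}
    (hA : ∀ i j, i ≠ j → 0 ≤ A i j) (i : Fin n) : 0 < exp A i i := by
  set c : ℝ := ∑ k : Fin n, |A k k| with hc
  have hN : ∀ a b : Fin n, 0 ≤ (A + c • (1 : Matrix (Fin n) (Fin n) ℝ)) a b := by
    intro a b
    rcases eq_or_ne a b with rfl | hab
    · have h1 : |A a a| ≤ c := Finset.single_le_sum (fun k _ => abs_nonneg (A k k)) (mem_univ a)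
      have := neg_abs_le (A a a)
      simp only [Matrix.add_apply, Matrix.smul_apply, Matrix.one_apply_eq, smul_eq_mul, mul_one]
      linarith
    · simp only [Matrix.add_apply, Matrix.smul_apply, Matrix.one_apply_ne hab, smul_eq_mul,
        mul_zero, add_zero]
      exact hA a b hab
  rw [cox_exp_shift A c i i]
  have := cox_exp_diag_ge_one_of_nonneg hN i
  nlinarith [Real.exp_pos (-c)]

end CoxAux

section CoxMain

attribute [local instance] Matrix.linftyOpSemiNormedRing Matrix.linftyOpNormedRing
  Matrix.linftyOpNormedAlgebra

open NormedSpace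

lemma cox_CS {n : ℕ} (x w : Fin n → ℝ) (hx : ∀ i, 0 ≤ x i) :
    (∑ i, x i * w i) ^ 2 ≤ (∑ i, x i) * (∑ i, x i * w i ^ 2) := by
  have h := Finset.sum_mul_sq_le_sq_mul_sq univ (fun i => Real.sqrt (x i))
      (fun i => Real.sqrt (x i) * w i)
  have e1 : ∀ i : Fin n, Real.sqrt (x i) * (Real.sqrt (x i) * w i) = x i * w i := by
    intro i; rw [← mul_assoc, Real.mul_self_sqrt (hx i)]
  have e2 : ∀ i : Fin n, Real.sqrt (x i) ^ 2 = x i := fun i => Real.sq_sqrt (hx i)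
  have e3 : ∀ i : Fin n, (Real.sqrt (x i) * w i) ^ 2 = x i * w i ^ 2 := by
    intro i; rw [mul_pow, e2]
  calc (∑ i, x i * w i) ^ 2
      = (∑ i, Real.sqrt (x i) * (Real.sqrt (x i) * w i)) ^ 2 := by
        rw [Finset.sum_congr rfl fun i _ => e1 i]
    _ ≤ (∑ i, Real.sqrt (x i) ^ 2) * (∑ i, (Real.sqrt (x i) * w i) ^ 2) := h
    _ = (∑ i, x i) * (∑ i, x i * w i ^ 2) := by
        rw [Finset.sum_congr rfl fun i _ => e2 i, Finset.sum_congr rfl fun i _ => e3 i]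

lemma cox_antitone (F G DF : ℝ → ℝ)
    (hF : ∀ t, HasDerivAt F (DF t) t)
    (hG : ∀ t, HasDerivAt G (-(F t)) t)
    (hGpos : ∀ t, 0 ≤ t → 0 < G t)
    (hnum : ∀ t, 0 < t → DF t * G t + F t ^ 2 ≤ 0) :
    AntitoneOn (fun u => F u / G u) (Set.Ici (0:ℝ)) := by
  have hFc : Continuous F := continuous_iff_continuousAt.2 fun t => (hF t).continuousAt
  have hGc : Continuous G := continuous_iff_continuousAt.2 fun t => (hG t).continuousAt
  have hd : ∀ t : ℝ, 0 < t → HasDerivAt (fun u => F u / G u)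
      ((DF t * G t - F t * -(F t)) / G t ^ 2) t :=
    fun t ht => (hF t).div (hG t) (ne_of_gt (hGpos t ht.le))
  apply antitoneOn_of_deriv_nonpos (convex_Ici 0)
  · exact (hFc.continuousOn).div (hGc.continuousOn) fun u hu => ne_of_gt (hGpos u hu)
  · intro t ht
    rw [interior_Ici] at ht
    exact ((hd t ht).differentiableAt).differentiableWithinAt
  · intro t ht
    rw [interior_Ici] at ht
    rw [(hd t ht).deriv]
    refine div_nonpos_iff.mpr (Or.inr ⟨?_, sq_nonneg _⟩)
    nlinarith [hnum t ht]

theorem stmt6_aux (n : ℕ) (hn : 1 ≤ n) (μ p : Fin n → ℝ)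
    (hμ : ∀ i, 0 < μ i)
    (hp : ∀ i : Fin n, (i : ℕ) + 1 < n → 0 < p i ∧ p i < 1)
    (hpn : ∀ i : Fin n, (i : ℕ) + 1 = n → p i = 0)
    (S : Matrix (Fin n) (Fin n) ℝ)
    (hS : S = Matrix.of fun i j : Fin n =>
      if j = i then -μ i else if (j : ℕ) = (i : ℕ) + 1 then p i * μ i else 0)
    (hν : ∀ i j : Fin n, i < j → μ j * (1 - p j) < μ i * (1 - p i)) :
    (∀ t : ℝ, 0 ≤ t →
      0 < ∑ i : Fin n, NormedSpace.exp (t • S) ⟨0, hn⟩ i) ∧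
    (∀ s t : ℝ, 0 ≤ s → s ≤ t →
      (∑ i : Fin n, NormedSpace.exp (t • S) ⟨0, hn⟩ i * (μ i * (1 - p i))) /
          (∑ i : Fin n, NormedSpace.exp (t • S) ⟨0, hn⟩ i) ≤
        (∑ i : Fin n, NormedSpace.exp (s • S) ⟨0, hn⟩ i * (μ i * (1 - p i))) /
          (∑ i : Fin n, NormedSpace.exp (s • S) ⟨0, hn⟩ i)) := by
  have hp0 : ∀ i : Fin n, 0 ≤ p i := by
    intro i
    rcases lt_or_ge ((i:ℕ)+1) n with h | h
    · exact (hp i h).1.le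
    · rw [hpn i (le_antisymm (Nat.succ_le_of_lt i.isLt) h)]
  set i0 : Fin n := (⟨0, hn⟩ : Fin n) with hi0
  have hSoff : ∀ t : ℝ, 0 ≤ t → ∀ a b : Fin n, a ≠ b → 0 ≤ (t • S) a b := by
    intro t ht a b hab
    rw [Matrix.smul_apply, hS]
    simp only [Matrix.of_apply, smul_eq_mul]
    rw [if_neg (Ne.symm hab)]
    split_ifs with h
    · exact mul_nonneg ht (mul_nonneg (hp0 a) (hμ a).le)
    · simp
  have hxnn : ∀ t : ℝ, 0 ≤ t → ∀ a b : Fin n, 0 ≤ exp (t • S) a b :=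
    fun t ht a b => cox_exp_entry_nonneg (fun a b hab => hSoff t ht a b hab) a b
  have hGpos : ∀ t : ℝ, 0 ≤ t → 0 < ∑ i : Fin n, exp (t • S) i0 i := by
    intro t ht
    refine Finset.sum_pos' (fun i _ => hxnn t ht i0 i) ⟨i0, mem_univ _, ?_⟩
    exact cox_exp_diag_pos (fun a b hab => hSoff t ht a b hab) i0
  refine ⟨fun t ht => hGpos t ht, ?_⟩
  -- derivatives of entries
  have hxd : ∀ (i : Fin n) (t : ℝ), HasDerivAt (fun u : ℝ => exp (u • S) i0 i)
      (∑ j : Fin n, exp (t • S) i0 j * S j i) t := by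
    intro i t
    have h := hasDerivAt_exp_smul_const (𝕂 := ℝ) S t
    have h2 := ((coxEntryCLM i0 i).hasFDerivAt).comp_hasDerivAt t h
    refine h2.congr_deriv ?_
    exact Matrix.mul_apply (M := exp (t • S)) (N := S)
  -- row-sum computations
  have hrowsum : ∀ (w : Fin n → ℝ) (j : Fin n), (∑ i : Fin n, S j i * w i)
      = -μ j * w j + (if h : (j:ℕ)+1 < n then p j * μ j * w ⟨(j:ℕ)+1, h⟩ else 0) := by
    intro w j
    by_cases h : (j:ℕ)+1 < n
    · rw [dif_pos h]
      have hne : j ≠ (⟨(j:ℕ)+1, h⟩ : Fin n) := by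
        intro hc; have := congrArg Fin.val hc; simp at this
      have hfun : ∀ i : Fin n, S j i * w i = (if i = j then -μ j * w j else 0)
          + (if i = (⟨(j:ℕ)+1, h⟩ : Fin n) then p j * μ j * w ⟨(j:ℕ)+1, h⟩ else 0) := by
        intro i
        rw [hS]
        simp only [Matrix.of_apply]
        by_cases h1 : i = j
        · subst h1
          simp [hne]
        · by_cases h2 : i = (⟨(j:ℕ)+1, h⟩ : Fin n)
          · have hv : (i:ℕ) = (j:ℕ)+1 := by rw [h2]
            rw [if_neg h1, if_pos hv, if_neg h1, if_pos h2, h2, zero_add]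
          · have hv : (i:ℕ) ≠ (j:ℕ)+1 := fun hc => h2 (Fin.ext hc)
            rw [if_neg h1, if_neg hv, if_neg h1, if_neg h2, zero_mul, add_zero]
      rw [Finset.sum_congr rfl fun i _ => hfun i, Finset.sum_add_distrib,
        Finset.sum_ite_eq' univ j (fun _ => -μ j * w j),
        Finset.sum_ite_eq' univ (⟨(j:ℕ)+1, h⟩ : Fin n)
          (fun _ => p j * μ j * w ⟨(j:ℕ)+1, h⟩),
        if_pos (mem_univ _), if_pos (mem_univ _)]
    · rw [dif_neg h]
      have hfun : ∀ i : Fin n, S j i * w i = (if i = j then -μ j * w j else 0) := by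
        intro i
        rw [hS]; simp only [Matrix.of_apply]
        by_cases h1 : i = j
        · subst h1; simp
        · have hv : (i:ℕ) ≠ (j:ℕ)+1 := fun hc => h (hc ▸ i.isLt)
          rw [if_neg h1, if_neg hv, if_neg h1, zero_mul]
      rw [Finset.sum_congr rfl fun i _ => hfun i,
        Finset.sum_ite_eq' univ j (fun _ => -μ j * w j), if_pos (mem_univ _), add_zero]
  have hlastp : ∀ j : Fin n, ¬ ((j:ℕ)+1 < n) → p j = 0 :=
    fun j h => hpn j (le_antisymm (Nat.succ_le_of_lt j.isLt) (le_of_not_gt h))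
  have hrowt : ∀ j : Fin n, (∑ i : Fin n, S j i * (1:ℝ)) = -(μ j * (1 - p j)) := by
    intro j
    rw [hrowsum (fun _ => (1:ℝ)) j]
    by_cases h : (j:ℕ)+1 < n
    · rw [dif_pos h]; ring
    · rw [dif_neg h, hlastp j h]; ring
  have hwv : ∀ j : Fin n,
      (∑ i : Fin n, S j i * (μ i * (1 - p i))) + (μ j * (1 - p j))^2 ≤ 0 := by
    intro j
    rw [hrowsum (fun i => μ i * (1 - p i)) j]
    by_cases h : (j:ℕ)+1 < n
    · rw [dif_pos h]
      have hlt : j < (⟨(j:ℕ)+1, h⟩ : Fin n) := by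
        rw [Fin.lt_def]; simp
      have h1 := hν j _ hlt
      have h2 := (hp j h).1
      have h3 := hμ j
      nlinarith [mul_le_mul_of_nonneg_left h1.le (mul_nonneg h2.le h3.le)]
    · rw [dif_neg h, hlastp j h]
      nlinarith [hμ j]
  have hswap : ∀ (w : Fin n → ℝ) (t : ℝ),
      (∑ i : Fin n, (∑ j : Fin n, exp (t • S) i0 j * S j i) * w i)
      = ∑ j : Fin n, exp (t • S) i0 j * (∑ i : Fin n, S j i * w i) := by
    intro w t
    simp_rw [Finset.sum_mul, Finset.mul_sum]
    rw [Finset.sum_comm]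
    exact Finset.sum_congr rfl fun j _ => Finset.sum_congr rfl fun i _ => by ring
  have hFd : ∀ t : ℝ, HasDerivAt
      (fun u : ℝ => ∑ i : Fin n, exp (u • S) i0 i * (μ i * (1 - p i)))
      (∑ i : Fin n, (∑ j : Fin n, exp (t • S) i0 j * S j i) * (μ i * (1 - p i))) t :=
    fun t => HasDerivAt.fun_sum fun i _ => (hxd i t).mul_const _
  have hGd : ∀ t : ℝ, HasDerivAt (fun u : ℝ => ∑ i : Fin n, exp (u • S) i0 i)
      (-(∑ i : Fin n, exp (t • S) i0 i * (μ i * (1 - p i)))) t := by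
    intro t
    have h := HasDerivAt.fun_sum fun i (_ : i ∈ univ) => hxd i t
    have e : (∑ i : Fin n, ∑ j : Fin n, exp (t • S) i0 j * S j i)
        = -(∑ i : Fin n, exp (t • S) i0 i * (μ i * (1 - p i))) :=
      calc (∑ i : Fin n, ∑ j : Fin n, exp (t • S) i0 j * S j i)
          = ∑ i : Fin n, (∑ j : Fin n, exp (t • S) i0 j * S j i) * (1:ℝ) := by simp
        _ = ∑ j : Fin n, exp (t • S) i0 j * (∑ i : Fin n, S j i * (1:ℝ)) :=
            hswap (fun _ => (1:ℝ)) t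
        _ = ∑ j : Fin n, exp (t • S) i0 j * (-(μ j * (1 - p j))) :=
            Finset.sum_congr rfl fun j _ =>
              congrArg (fun z => exp (t • S) i0 j * z) (hrowt j)
        _ = -(∑ i : Fin n, exp (t • S) i0 i * (μ i * (1 - p i))) := by
            simp [mul_neg]
    exact e ▸ h
  have hnum : ∀ t : ℝ, 0 < t →
      (∑ i : Fin n, (∑ j : Fin n, exp (t • S) i0 j * S j i) * (μ i * (1 - p i)))
        * (∑ i : Fin n, exp (t • S) i0 i)
      + (∑ i : Fin n, exp (t • S) i0 i * (μ i * (1 - p i))) ^ 2 ≤ 0 := by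
    intro t ht
    have ht' : (0:ℝ) ≤ t := ht.le
    have hCS := cox_CS (fun i => exp (t • S) i0 i) (fun i => μ i * (1 - p i))
      (fun i => hxnn t ht' i0 i)
    have hA : (∑ i : Fin n, (∑ j : Fin n, exp (t • S) i0 j * S j i) * (μ i * (1 - p i)))
        + (∑ i : Fin n, exp (t • S) i0 i * (μ i * (1 - p i)) ^ 2) ≤ 0 := by
      rw [hswap (fun i => μ i * (1 - p i)) t, ← Finset.sum_add_distrib]
      refine Finset.sum_nonpos fun j _ => ?_
      calc exp (t • S) i0 j * (∑ i : Fin n, S j i * (μ i * (1 - p i)))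
            + exp (t • S) i0 j * (μ j * (1 - p j)) ^ 2
          = exp (t • S) i0 j
            * ((∑ i : Fin n, S j i * (μ i * (1 - p i))) + (μ j * (1 - p j)) ^ 2) := by ring
        _ ≤ 0 := mul_nonpos_iff.2 (Or.inl ⟨hxnn t ht' i0 j, hwv j⟩)
    have hGnn : 0 ≤ ∑ i : Fin n, exp (t • S) i0 i := (hGpos t ht').le
    nlinarith [hCS, mul_le_mul_of_nonneg_right
      (show (∑ i : Fin n, (∑ j : Fin n, exp (t • S) i0 j * S j i) * (μ i * (1 - p i)))
        ≤ -(∑ i : Fin n, exp (t • S) i0 i * (μ i * (1 - p i)) ^ 2) by linarith) hGnn]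
  have hant := cox_antitone
    (fun u => ∑ i : Fin n, exp (u • S) i0 i * (μ i * (1 - p i)))
    (fun u => ∑ i : Fin n, exp (u • S) i0 i)
    (fun t => ∑ i : Fin n, (∑ j : Fin n, exp (t • S) i0 j * S j i) * (μ i * (1 - p i)))
    hFd hGd hGpos hnum
  intro s t hs hst
  exact hant (Set.mem_Ici.2 hs) (Set.mem_Ici.2 (hs.trans hst)) hst

end CoxMain



/-- Proposition 2 of the paper: any distribution in the class `C₀` (a Coxian
distribution whose completion rates `ν i = μ i (1 − p i)` are strictly decreasing in
the phase) has positive survival probability and a nonincreasing hazard rate. -/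
theorem stmt6 (n : ℕ) (hn : 1 ≤ n) (μ p : Fin n → ℝ)
    (hμ : ∀ i, 0 < μ i)
    (hp : ∀ i : Fin n, (i : ℕ) + 1 < n → 0 < p i ∧ p i < 1)
    (hpn : ∀ i : Fin n, (i : ℕ) + 1 = n → p i = 0)
    (S : Matrix (Fin n) (Fin n) ℝ)
    (hS : S = Matrix.of fun i j : Fin n =>
      if j = i then -μ i else if (j : ℕ) = (i : ℕ) + 1 then p i * μ i else 0)
    (hν : ∀ i j : Fin n, i < j → μ j * (1 - p j) < μ i * (1 - p i)) :
    (∀ t : ℝ, 0 ≤ t →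
      0 < ∑ i : Fin n, NormedSpace.exp (t • S) ⟨0, hn⟩ i) ∧
    (∀ s t : ℝ, 0 ≤ s → s ≤ t →
      (∑ i : Fin n, NormedSpace.exp (t • S) ⟨0, hn⟩ i * (μ i * (1 - p i))) /
          (∑ i : Fin n, NormedSpace.exp (t • S) ⟨0, hn⟩ i) ≤
        (∑ i : Fin n, NormedSpace.exp (s • S) ⟨0, hn⟩ i * (μ i * (1 - p i))) /
          (∑ i : Fin n, NormedSpace.exp (s • S) ⟨0, hn⟩ i)) := by
  exact stmt6_aux n hn μ p hμ hp hpn S hS hν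
end

section
/- Let S be the n×n real matrix with S_{ii} = −μ_i for all i, S_{i,i+1} = p_i μ_i for i = 1,...,n−1, and all other entries 0, and set ν_i := μ_i(1−p_i) (with p_n = 0). Assume ν_i is strictly decreasing in i. Then for each i ∈ {1,...,n} the function t ↦ ( ∑_{j=i}^n (exp(tS))_{1,j} ) / ( ∑_{j=1}^n (exp(tS))_{1,j} ) is nondecreasing on [0,∞). (Probabilistically: P[τ_t ≥ i | Y > t] is nondecreasing in t, where τ_t is the service phase at time t of a Coxian job Y started in phase 1 at time 0.) -/
open Finset

open Finset NormedSpace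

namespace Stmt7Aux

attribute [local instance] Matrix.linftyOpSemiNormedRing Matrix.linftyOpNormedRing
  Matrix.linftyOpNormedAlgebra

variable {n : ℕ}

/-- entry evaluation as a continuous linear map -/
noncomputable def entryCLM (a b : Fin n) : Matrix (Fin n) (Fin n) ℝ →L[ℝ] ℝ :=
  LinearMap.toContinuousLinearMap
    { toFun := fun M => M a b
      map_add' := fun _ _ => rfl
      map_smul' := fun _ _ => rfl }

@[simp] lemma entryCLM_apply (a b : Fin n) (M : Matrix (Fin n) (Fin n) ℝ) :
    entryCLM a b M = M a b := rfl

theorem exp_entry_nonneg {M : Matrix (Fin n) (Fin n) ℝ} (hM : ∀ i j, 0 ≤ M i j) (a b : Fin n) :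
    0 ≤ exp M a b := by
  have hpow : ∀ (k : ℕ) (i j : Fin n), (0:ℝ) ≤ (M ^ k) i j := by
    intro k
    induction k with
    | zero => intro i j; rw [pow_zero, Matrix.one_apply]; positivity
    | succ k ih =>
      intro i j
      rw [pow_succ, Matrix.mul_apply]
      exact Finset.sum_nonneg fun c _ => mul_nonneg (ih _ _) (hM _ _)
  have hsum : Summable fun k : ℕ => ((k.factorial : ℝ))⁻¹ • M ^ k := expSeries_summable' M
  have h : exp M a b = ∑' k : ℕ, ((k.factorial : ℝ))⁻¹ * (M ^ k) a b := by
    have h2 := (entryCLM a b).map_tsum hsum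
    rw [exp_eq_tsum ℝ]
    simpa [smul_eq_mul] using h2
  rw [h]
  refine tsum_nonneg fun k => mul_nonneg (by positivity) (hpow _ _ _)

/-- mulVec by a fixed vector as a continuous linear map. -/
noncomputable def mulVecCLM (v : Fin n → ℝ) : Matrix (Fin n) (Fin n) ℝ →L[ℝ] (Fin n → ℝ) :=
  LinearMap.toContinuousLinearMap
    { toFun := fun M => M.mulVec v
      map_add' := fun A B => Matrix.add_mulVec A B v
      map_smul' := fun c A => Matrix.smul_mulVec c A v }

@[simp] lemma mulVecCLM_apply (v : Fin n → ℝ) (M : Matrix (Fin n) (Fin n) ℝ) :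
    mulVecCLM v M = M.mulVec v := rfl

theorem exp_entry_of_eigen {M : Matrix (Fin n) (Fin n) ℝ} {z : Fin n} {c : ℝ}
    (hM : M.mulVec (Pi.single z 1) = c • (Pi.single z 1 : Fin n → ℝ)) :
    exp M z z = Real.exp c := by
  have hpow : ∀ k : ℕ, (M ^ k).mulVec (Pi.single z 1) = c ^ k • (Pi.single z 1 : Fin n → ℝ) := by
    intro k
    induction k with
    | zero =>
      rw [pow_zero]
      funext i
      simp [Matrix.mulVec_single, Matrix.one_apply, Pi.single_apply]
    | succ k ih =>
      rw [pow_succ, ← Matrix.mulVec_mulVec, hM, Matrix.mulVec_smul, ih, smul_smul, pow_succ]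
      ring_nf
  have hsum : Summable fun k : ℕ => ((k.factorial : ℝ))⁻¹ • M ^ k := expSeries_summable' M
  have h : (exp M).mulVec (Pi.single z 1) = Real.exp c • (Pi.single z 1 : Fin n → ℝ) := by
    have h2 := (mulVecCLM (Pi.single z 1)).map_tsum hsum
    rw [exp_eq_tsum ℝ]
    rw [show ((fun x : Matrix (Fin n) (Fin n) ℝ => ∑' k : ℕ, ((k.factorial : ℝ))⁻¹ • x ^ k) M).mulVec
        (Pi.single z 1) = mulVecCLM (Pi.single z 1) (∑' k : ℕ, ((k.factorial : ℝ))⁻¹ • M ^ k) from rfl]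
    rw [h2]
    have : ∀ k : ℕ, mulVecCLM (Pi.single z 1) (((k.factorial : ℝ))⁻¹ • M ^ k)
        = (((k.factorial : ℝ))⁻¹ * c ^ k) • (Pi.single z 1 : Fin n → ℝ) := by
      intro k
      simp [Matrix.smul_mulVec, hpow k, smul_smul]
    rw [tsum_congr this, Summable.tsum_smul_const]
    · congr 1
      rw [Real.exp_eq_exp_ℝ, exp_eq_tsum ℝ]
      simp [smul_eq_mul]
    · simpa [smul_eq_mul] using expSeries_summable' (𝕂 := ℝ) c
  have := congrFun h z
  simpa using this


theorem exp_smul_one_add (r : ℝ) (M : Matrix (Fin n) (Fin n) ℝ) :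
    exp (r • (1 : Matrix (Fin n) (Fin n) ℝ) + M) = Real.exp r • exp M := by
  rw [Matrix.exp_add_of_commute _ _ (((Commute.one_left M).smul_left r))]
  have h1 : (r • (1 : Matrix (Fin n) (Fin n) ℝ)) = algebraMap ℝ _ r :=
    (Algebra.algebraMap_eq_smul_one r).symm
  have h3 := algebraMap_exp_comm (𝔸 := Matrix (Fin n) (Fin n) ℝ) r
  rw [h1]
  erw [← h3]
  rw [← Real.exp_eq_exp_ℝ, Algebra.algebraMap_eq_smul_one,
    smul_mul_assoc, one_mul]

theorem hasDerivAt_exp_entry (S : Matrix (Fin n) (Fin n) ℝ) (a b : Fin n) (t : ℝ) :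
    HasDerivAt (fun u : ℝ => exp (u • S) a b) ((exp (t • S) * S) a b) t := by
  have h := hasDerivAt_exp_smul_const (𝕂 := ℝ) S t
  have h2 := ((entryCLM a b).hasFDerivAt (x := exp (t • S))).comp_hasDerivAt t h
  exact h2

theorem key (I : Finset (Fin n)) (a C D : Fin n → ℝ) (ha : ∀ k, 0 ≤ a k)
    (hCD : ∀ k ∈ I, C k = D k) (hC : ∀ k ∉ I, 0 ≤ C k)
    (hD : ∀ j ∉ I, ∀ k ∈ I, D j ≤ D k) :
    (∑ k ∈ I, a k) * (∑ k : Fin n, a k * D k) ≤ (∑ k : Fin n, a k * C k) * (∑ k : Fin n, a k) := by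
  classical
  rw [← Finset.sum_add_sum_compl I (fun k => a k),
    ← Finset.sum_add_sum_compl I (fun k => a k * D k),
    ← Finset.sum_add_sum_compl I (fun k => a k * C k)]
  set P := ∑ k ∈ I, a k with hPdef
  set Q := ∑ k ∈ Iᶜ, a k with hQdef
  set R := ∑ k ∈ I, a k * D k with hRdef
  set S' := ∑ k ∈ Iᶜ, a k * D k with hSdef
  set U := ∑ k ∈ Iᶜ, a k * C k with hUdef
  have hRC : (∑ k ∈ I, a k * C k) = R := by
    refine Finset.sum_congr rfl fun k hk => by rw [hCD k hk]
  rw [hRC]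
  have hP : 0 ≤ P := Finset.sum_nonneg fun k _ => ha k
  have hQ : 0 ≤ Q := Finset.sum_nonneg fun k _ => ha k
  have hU : 0 ≤ U := Finset.sum_nonneg fun k hk =>
    mul_nonneg (ha k) (hC k (Finset.mem_compl.mp hk))
  have h1 : P * S' ≤ R * Q := by
    rw [hPdef, hSdef, hRdef, hQdef, Finset.sum_mul_sum, Finset.sum_mul_sum]
    refine Finset.sum_le_sum fun k hk => Finset.sum_le_sum fun j hj => ?_
    have hd := hD j (Finset.mem_compl.mp hj) k hk
    calc a k * (a j * D j) = (a k * a j) * D j := by ring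
      _ ≤ (a k * a j) * D k := mul_le_mul_of_nonneg_left hd (mul_nonneg (ha k) (ha j))
      _ = a k * D k * a j := by ring
  nlinarith [mul_nonneg hU (add_nonneg hP hQ)]

end Stmt7Aux

/-- For a Coxian distribution in class `C₀` (completion rates `ν i = μ i (1 − p i)`
strictly decreasing in the phase), the conditional probability that the service phase
is at least `i`, given that the job is still in service at time `t`, is nondecreasing
in `t`: for each phase `i`, `t ↦ (∑_{j≥i} exp(tS)_{1,j}) / (∑_j exp(tS)_{1,j})` is
nondecreasing on `[0,∞)`. -/
theorem stmt7 (n : ℕ) (hn : 1 ≤ n) (μ p : Fin n → ℝ)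
    (hμ : ∀ i, 0 < μ i)
    (hp : ∀ i : Fin n, (i : ℕ) + 1 < n → 0 < p i ∧ p i < 1)
    (hpn : ∀ i : Fin n, (i : ℕ) + 1 = n → p i = 0)
    (S : Matrix (Fin n) (Fin n) ℝ)
    (hS : S = Matrix.of fun i j : Fin n =>
      if j = i then -μ i else if (j : ℕ) = (i : ℕ) + 1 then p i * μ i else 0)
    (hν : ∀ i j : Fin n, i < j → μ j * (1 - p j) < μ i * (1 - p i)) :
    ∀ i : Fin n, ∀ s t : ℝ, 0 ≤ s → s ≤ t →
      (∑ j ∈ Finset.Ici i, NormedSpace.exp (s • S) ⟨0, hn⟩ j) /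
          (∑ j : Fin n, NormedSpace.exp (s • S) ⟨0, hn⟩ j) ≤
        (∑ j ∈ Finset.Ici i, NormedSpace.exp (t • S) ⟨0, hn⟩ j) /
          (∑ j : Fin n, NormedSpace.exp (t • S) ⟨0, hn⟩ j) := by
  classical
  intro i s t hs hst
  set z : Fin n := ⟨0, hn⟩ with hzdef
  -- entry description
  have hSa : ∀ a b : Fin n, S a b =
      (if b = a then -μ a else if (b : ℕ) = (a : ℕ) + 1 then p a * μ a else 0) := by
    intro a b; rw [hS]; rfl
  have hsplit : ∀ a b : Fin n, S a b =
      (if b = a then -μ a else 0) + (if (b : ℕ) = (a : ℕ) + 1 then p a * μ a else 0) := by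
    intro a b
    rw [hSa]
    by_cases h : b = a
    · subst h; simp
    · simp [h]
  -- row sums
  have hrowsum : ∀ a : Fin n, ∑ b : Fin n, S a b = -(μ a * (1 - p a)) := by
    intro a
    rw [Finset.sum_congr rfl fun b _ => hsplit a b, Finset.sum_add_distrib]
    have h1 : ∑ b : Fin n, (if b = a then -μ a else 0) = -μ a := by
      simp [Finset.sum_ite_eq']
    rw [h1]
    by_cases h : (a : ℕ) + 1 < n
    · have h2 : ∑ b : Fin n, (if (b : ℕ) = (a : ℕ) + 1 then p a * μ a else 0) = p a * μ a := by
        rw [Finset.sum_eq_single (⟨(a : ℕ) + 1, h⟩ : Fin n)]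
        · simp
        · intro b _ hb
          rw [if_neg]
          intro hc; exact hb (Fin.ext hc)
        · intro hb; exact absurd (Finset.mem_univ _) hb
      rw [h2]; ring
    · have halt := a.isLt
      have ha1 : (a : ℕ) + 1 = n := by omega
      have h2 : ∑ b : Fin n, (if (b : ℕ) = (a : ℕ) + 1 then p a * μ a else 0) = 0 := by
        refine Finset.sum_eq_zero fun b _ => ?_
        rw [if_neg]
        have := b.isLt; omega
      rw [h2, hpn a ha1]; ring
  -- partial row sums over Ici i
  have hpartial : ∀ a : Fin n, i ≤ a → ∑ b ∈ Finset.Ici i, S a b = ∑ b : Fin n, S a b := by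
    intro a hia
    have h0 : ∑ b ∈ (Finset.Ici i)ᶜ, S a b = 0 := by
      refine Finset.sum_eq_zero fun b hb => ?_
      have hbi : b < i := by simpa [Finset.mem_compl, Finset.mem_Ici, not_le] using hb
      have hba : b < a := lt_of_lt_of_le hbi hia
      have hba' : (b : ℕ) < (a : ℕ) := hba
      rw [hSa, if_neg (by intro hc; subst hc; exact lt_irrefl _ hba), if_neg (by omega)]
    have := Finset.sum_add_sum_compl (Finset.Ici i) (fun b => S a b)
    rw [h0, add_zero] at this
    exact this
  have hpartial0 : ∀ a : Fin n, ¬ i ≤ a → 0 ≤ ∑ b ∈ Finset.Ici i, S a b := by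
    intro a hia
    refine Finset.sum_nonneg fun b hb => ?_
    have hib : i ≤ b := Finset.mem_Ici.mp hb
    have hab : a < b := lt_of_lt_of_le (not_le.mp hia) hib
    rw [hSa, if_neg (by intro hc; subst hc; exact lt_irrefl _ hab)]
    by_cases hc : (b : ℕ) = (a : ℕ) + 1
    · rw [if_pos hc]
      have hlt : (a : ℕ) + 1 < n := hc ▸ b.isLt
      exact le_of_lt (mul_pos (hp a hlt).1 (hμ a))
    · rw [if_neg hc]
  -- nonnegativity of entries of exp (u • S) for u ≥ 0
  set c : ℝ := ∑ k : Fin n, μ k with hcdef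
  have hcμ : ∀ k, μ k ≤ c :=
    fun k => Finset.single_le_sum (fun j _ => (hμ j).le) (Finset.mem_univ k)
  have hentry_nonneg : ∀ u : ℝ, 0 ≤ u → ∀ a b : Fin n,
      0 ≤ NormedSpace.exp (u • S) a b := by
    intro u hu a b
    have hM : ∀ a b : Fin n, 0 ≤ (u • (S + c • (1 : Matrix (Fin n) (Fin n) ℝ))) a b := by
      intro a b
      have he : (u • (S + c • (1 : Matrix (Fin n) (Fin n) ℝ))) a b
          = u * (S a b + c * (1 : Matrix (Fin n) (Fin n) ℝ) a b) := by
        simp [Matrix.add_apply]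
      rw [he]
      refine mul_nonneg hu ?_
      rw [hSa]
      by_cases h : b = a
      · subst h
        rw [if_pos rfl, Matrix.one_apply_eq]
        have := hcμ b; linarith
      · have h1 : (1 : Matrix (Fin n) (Fin n) ℝ) a b = 0 :=
          Matrix.one_apply_ne (fun hh => h hh.symm)
        rw [h1, mul_zero, add_zero, if_neg h]
        by_cases hc2 : (b : ℕ) = (a : ℕ) + 1
        · rw [if_pos hc2]
          have hlt : (a : ℕ) + 1 < n := hc2 ▸ b.isLt
          exact le_of_lt (mul_pos (hp a hlt).1 (hμ a))
        · rw [if_neg hc2]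
    have heq : u • S = (-(u * c)) • (1 : Matrix (Fin n) (Fin n) ℝ)
        + u • (S + c • (1 : Matrix (Fin n) (Fin n) ℝ)) := by
      rw [smul_add, smul_smul]
      module
    have hfac : NormedSpace.exp (u • S)
        = Real.exp (-(u * c)) • NormedSpace.exp (u • (S + c • (1 : Matrix (Fin n) (Fin n) ℝ))) := by
      rw [heq, Stmt7Aux.exp_smul_one_add]
    rw [hfac, Matrix.smul_apply, smul_eq_mul]
    exact mul_nonneg (Real.exp_pos _).le (Stmt7Aux.exp_entry_nonneg hM a b)
  -- (z,z) entry of exp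
  have hzz : ∀ u : ℝ, NormedSpace.exp (u • S) z z = Real.exp (u * -μ z) := by
    intro u
    refine Stmt7Aux.exp_entry_of_eigen ?_
    have hSv : S.mulVec (Pi.single z 1) = (-μ z) • (Pi.single z 1 : Fin n → ℝ) := by
      funext x
      rw [Matrix.mulVec_single_one, Matrix.col_apply]
      simp only [mul_one, Pi.smul_apply, smul_eq_mul]
      rw [hSa]
      by_cases h : x = z
      · subst h; simp
      · have h1 : ¬ (z = x) := fun hh => h hh.symm
        have h2 : ¬ ((z : ℕ) = (x : ℕ) + 1) := by
          have hz0 : (z : ℕ) = 0 := rfl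
          omega
        rw [if_neg h1, if_neg h2, Pi.single_eq_of_ne h, mul_zero]
    rw [Matrix.smul_mulVec, hSv, smul_smul]
  -- positivity of the denominator
  have hT : ∀ u : ℝ, 0 ≤ u → 0 < ∑ b : Fin n, NormedSpace.exp (u • S) z b := by
    intro u hu
    have h1 : Real.exp (u * -μ z) ≤ ∑ b : Fin n, NormedSpace.exp (u • S) z b := by
      rw [← hzz u]
      exact Finset.single_le_sum (fun b _ => hentry_nonneg u hu z b) (Finset.mem_univ z)
    exact lt_of_lt_of_le (Real.exp_pos _) h1
  -- derivatives
  have hg : ∀ u : ℝ, HasDerivAt (fun v : ℝ => ∑ b ∈ Finset.Ici i, NormedSpace.exp (v • S) z b)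
      (∑ b ∈ Finset.Ici i, (NormedSpace.exp (u • S) * S) z b) u := by
    intro u
    exact HasDerivAt.fun_sum fun b _ => Stmt7Aux.hasDerivAt_exp_entry S z b u
  have hTd : ∀ u : ℝ, HasDerivAt (fun v : ℝ => ∑ b : Fin n, NormedSpace.exp (v • S) z b)
      (∑ b : Fin n, (NormedSpace.exp (u • S) * S) z b) u := by
    intro u
    exact HasDerivAt.fun_sum fun b _ => Stmt7Aux.hasDerivAt_exp_entry S z b u
  -- rewrite derivatives
  have hder_eq : ∀ (u : ℝ) (J : Finset (Fin n)), ∑ b ∈ J, (NormedSpace.exp (u • S) * S) z b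
      = ∑ k : Fin n, NormedSpace.exp (u • S) z k * (∑ b ∈ J, S k b) := by
    intro u J
    simp_rw [Matrix.mul_apply]
    rw [Finset.sum_comm]
    simp_rw [← Finset.mul_sum]
  -- monotonicity
  have hmono : MonotoneOn (fun u : ℝ => (∑ b ∈ Finset.Ici i, NormedSpace.exp (u • S) z b) /
      (∑ b : Fin n, NormedSpace.exp (u • S) z b)) (Set.Ici (0 : ℝ)) := by
    have hcont1 : Continuous (fun u : ℝ => ∑ b ∈ Finset.Ici i, NormedSpace.exp (u • S) z b) :=
      (Differentiable.continuous fun u => (hg u).differentiableAt)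
    have hcont2 : Continuous (fun u : ℝ => ∑ b : Fin n, NormedSpace.exp (u • S) z b) :=
      (Differentiable.continuous fun u => (hTd u).differentiableAt)
    apply monotoneOn_of_deriv_nonneg (convex_Ici 0)
    · exact ContinuousOn.div hcont1.continuousOn hcont2.continuousOn
        (fun x hx => (hT x hx).ne')
    · intro x hx
      rw [interior_Ici] at hx
      exact ((hg x).div (hTd x) (hT x (le_of_lt hx)).ne').differentiableAt.differentiableWithinAt
    · intro x hx
      rw [interior_Ici] at hx
      have hx0 : (0 : ℝ) ≤ x := le_of_lt hx
      rw [((hg x).fun_div (hTd x) (hT x hx0).ne').deriv]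
      apply div_nonneg _ (sq_nonneg _)
      rw [sub_nonneg, hder_eq x (Finset.Ici i), hder_eq x Finset.univ]
      simp_rw [hrowsum]
      refine Stmt7Aux.key (Finset.Ici i) (fun k => NormedSpace.exp (x • S) z k)
        (fun k => ∑ b ∈ Finset.Ici i, S k b) (fun k => -(μ k * (1 - p k)))
        (fun k => hentry_nonneg x hx0 z k) ?_ ?_ ?_
      · intro k hk
        show ∑ b ∈ Finset.Ici i, S k b = -(μ k * (1 - p k))
        rw [hpartial k (Finset.mem_Ici.mp hk), hrowsum]
      · intro k hk
        exact hpartial0 k (fun h => hk (Finset.mem_Ici.mpr h))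
      · intro j hj k hk
        have hji : j < i := not_le.mp (fun h => hj (Finset.mem_Ici.mpr h))
        have hjk : j < k := lt_of_lt_of_le hji (Finset.mem_Ici.mp hk)
        have := hν j k hjk
        show -(μ j * (1 - p j)) ≤ -(μ k * (1 - p k))
        linarith
  exact hmono hs (le_trans hs hst) hst
end

section
/- A^{(2)} = {(2,3)} ∪ {(n₂, n₃) ∈ ℝ² : n₂ > 2 and n₃ > (3/2) n₂}. -/
open Finset

/-- The order-`m+1` Coxian generator with rates `μ` and continuation probabilities `p`. -/
noncomputable def coxGen {m : ℕ} (μ p : Fin (m + 1) → ℝ) :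
    Matrix (Fin (m + 1)) (Fin (m + 1)) ℝ :=
  Matrix.of fun i j =>
    if j = i then -μ i else if (j : ℕ) = (i : ℕ) + 1 then p i * μ i else 0

/-- The `k`-th moment `m_k(S) = k! ∑_j ((−S)^{−k})_{1,j}` of a Coxian generator. -/
noncomputable def coxMoment {m : ℕ} (μ p : Fin (m + 1) → ℝ) (k : ℕ) : ℝ :=
  (k.factorial : ℝ) * ∑ j : Fin (m + 1), ((-(coxGen μ p))⁻¹ ^ k) 0 j

/-- `A^{(n)}`: the set of pairs `(n₂, n₃)` of normalized second and third moments of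
Coxian generators of order at most `n` belonging to the class `C₀`
(i.e. with `μ i (1 − p i)` strictly decreasing in `i`). -/
def coxC0MomentSet (n : ℕ) : Set (ℝ × ℝ) :=
  {q | ∃ m : ℕ, m + 1 ≤ n ∧ ∃ μ p : Fin (m + 1) → ℝ,
    (∀ i, 0 < μ i) ∧
    (∀ i : Fin (m + 1), (i : ℕ) < m → 0 < p i ∧ p i < 1) ∧
    p (Fin.last m) = 0 ∧
    (∀ i j : Fin (m + 1), i < j → μ j * (1 - p j) < μ i * (1 - p i)) ∧
    q.1 = coxMoment μ p 2 / (coxMoment μ p 1) ^ 2 ∧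
    q.2 = coxMoment μ p 3 / (coxMoment μ p 1 * coxMoment μ p 2)}

/-! ### Auxiliary lemmas -/

lemma cox_inv0 (μ p : Fin 1 → ℝ) (hμ : 0 < μ 0) :
    (-(coxGen μ p))⁻¹ = Matrix.of fun _ _ : Fin 1 => (μ 0)⁻¹ := by
  apply Matrix.inv_eq_right_inv
  ext i j
  fin_cases i <;> fin_cases j <;>
    simp [coxGen, Matrix.mul_apply, Fin.sum_univ_succ, mul_inv_cancel₀ hμ.ne']

lemma cox_mom0 (μ p : Fin 1 → ℝ) (hμ : 0 < μ 0) (k : ℕ) :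
    coxMoment μ p k = (k.factorial : ℝ) * ((μ 0)⁻¹) ^ k := by
  rw [coxMoment, cox_inv0 μ p hμ]
  congr 1
  induction k with
  | zero => simp
  | succ n ih =>
      rw [pow_succ]
      simp [Matrix.mul_apply, Fin.sum_univ_succ] at ih ⊢
      rw [ih]; ring

lemma cox_inv1 (μ p : Fin 2 → ℝ) (h0 : 0 < μ 0) (h1 : 0 < μ 1) :
    (-(coxGen μ p))⁻¹ = !![(μ 0)⁻¹, p 0 * (μ 1)⁻¹; 0, (μ 1)⁻¹] := by
  apply Matrix.inv_eq_right_inv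
  ext i j
  fin_cases i <;> fin_cases j <;>
    · simp [coxGen, Matrix.mul_apply, Fin.sum_univ_succ,
        mul_inv_cancel₀ h0.ne', mul_inv_cancel₀ h1.ne']
      try ring

lemma cox_mom1_1 (μ p : Fin 2 → ℝ) (h0 : 0 < μ 0) (h1 : 0 < μ 1) :
    coxMoment μ p 1 = (μ 0)⁻¹ + p 0 * (μ 1)⁻¹ := by
  rw [coxMoment, cox_inv1 μ p h0 h1]
  simp [Fin.sum_univ_succ]

lemma cox_mom1_2 (μ p : Fin 2 → ℝ) (h0 : 0 < μ 0) (h1 : 0 < μ 1) :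
    coxMoment μ p 2
      = 2 * ((μ 0)⁻¹^2 + p 0 * (μ 0)⁻¹ * (μ 1)⁻¹ + p 0 * (μ 1)⁻¹^2) := by
  rw [coxMoment, cox_inv1 μ p h0 h1]
  norm_num [pow_succ, Fin.sum_univ_succ, Matrix.mul_apply, Nat.factorial]
  ring

lemma cox_mom1_3 (μ p : Fin 2 → ℝ) (h0 : 0 < μ 0) (h1 : 0 < μ 1) :
    coxMoment μ p 3
      = 6 * ((μ 0)⁻¹^3
          + p 0 * ((μ 0)⁻¹^2 * (μ 1)⁻¹ + (μ 0)⁻¹ * (μ 1)⁻¹^2 + (μ 1)⁻¹^3)) := by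
  rw [coxMoment, cox_inv1 μ p h0 h1]
  norm_num [pow_succ, Fin.sum_univ_succ, Matrix.mul_apply, Nat.factorial]
  ring

/-- Forward direction, order 2. -/
lemma cox_fwd (μ p : Fin 2 → ℝ) (hμ : ∀ i, 0 < μ i)
    (hp : ∀ i : Fin 2, (i : ℕ) < 1 → 0 < p i ∧ p i < 1)
    (hlast : p (Fin.last 1) = 0)
    (hC0 : ∀ i j : Fin 2, i < j → μ j * (1 - p j) < μ i * (1 - p i)) :
    2 < coxMoment μ p 2 / (coxMoment μ p 1) ^ 2 ∧
    3 / 2 * (coxMoment μ p 2 / (coxMoment μ p 1) ^ 2) <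
      coxMoment μ p 3 / (coxMoment μ p 1 * coxMoment μ p 2) := by
  have h0 := hμ 0
  have h1 := hμ 1
  rw [cox_mom1_1 μ p h0 h1, cox_mom1_2 μ p h0 h1, cox_mom1_3 μ p h0 h1]
  set a := (μ 0)⁻¹ with hA
  set b := (μ 1)⁻¹ with hB
  have ha : 0 < a := by positivity
  have hb : 0 < b := by positivity
  obtain ⟨hq0, hq1⟩ := hp 0 (by norm_num)
  have hc := hC0 0 1 (by norm_num)
  have hl : p 1 = 0 := hlast
  rw [hl] at hc
  have hab : a < (1 - p 0) * b := by
    have e0 : a * μ 0 = 1 := inv_mul_cancel₀ h0.ne'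
    have e1 : b * μ 1 = 1 := inv_mul_cancel₀ h1.ne'
    nlinarith [mul_pos ha hb, mul_pos h0 h1]
  set q := p 0 with hQ
  have key : 0 < q * b * ((1 - q) * b - a) :=
    mul_pos (mul_pos hq0 hb) (by linarith)
  have hm1 : 0 < a + q * b := by positivity
  have hm2 : 0 < a ^ 2 + q * a * b + q * b ^ 2 := by positivity
  constructor
  · rw [lt_div_iff₀ (by positivity)]
    nlinarith [key]
  · rw [← mul_div_assoc, div_lt_div_iff₀ (by positivity) (by positivity)]
    have key2 : 0 < (a + q * b) * (q * a * b^2 * ((1 - q) * b - a)) :=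
      mul_pos hm1 (mul_pos (mul_pos (mul_pos hq0 ha) (by positivity)) (by linarith))
    nlinarith [key2]

/-- IVT step: existence of the parameter `u`. -/
lemma cox_ivt (x y : ℝ) (h2 : 2 < x) (h3 : 3 / 2 * x < y) :
    ∃ u : ℝ, 0 < u ∧ u < 1 ∧
      6 * (u^2*(1-u) + u*(1-u)*(x/2-u) + (x/2-u)^2) / (x*(1-u)) = y := by
  have hx : 0 < x := by linarith
  have hy : 0 < y := by linarith
  set f : ℝ → ℝ := fun u => 6 * (u^2*(1-u) + u*(1-u)*(x/2-u) + (x/2-u)^2) / (x*(1-u)) with hf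
  set u₀ : ℝ := x * (y - 3/2*x) / (2*(6 + 3*x + x*y)) with hu₀
  have hden : 0 < 2*(6 + 3*x + x*y) := by nlinarith
  have hu₀0 : 0 < u₀ := by
    apply div_pos (by nlinarith) hden
  have hu₀1 : u₀ < 1 := by
    rw [hu₀, div_lt_one hden]; nlinarith
  set δ : ℝ := min ((1-u₀)/2) (3*(x/2-1)^2/(x*y)) with hδ
  have hx21 : 0 < x/2 - 1 := by linarith
  have hδ0 : 0 < δ := lt_min (by linarith) (by positivity)
  set u₁ : ℝ := 1 - δ with hu₁
  have hu₁1 : u₁ < 1 := by simp [hu₁]; linarith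
  have h01 : u₀ < u₁ := by
    have := min_le_left ((1-u₀)/2) (3*(x/2-1)^2/(x*y))
    simp only [hu₁]; linarith [hδ ▸ this]
  have hu₁0 : 0 < u₁ := lt_trans hu₀0 h01
  have hcont : ContinuousOn f (Set.Icc u₀ u₁) := by
    apply ContinuousOn.div (by fun_prop) (by fun_prop)
    intro u hu
    have : u ≤ u₁ := hu.2
    have : 0 < 1 - u := by linarith [hu₁1]
    positivity
  have h1u₀ : 0 < 1 - u₀ := by linarith
  have hfu₀ : f u₀ < y := by
    rw [hf]
    rw [div_lt_iff₀ (mul_pos hx h1u₀)]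
    have key : u₀ * (2*(6 + 3*x + x*y)) = x * (y - 3/2*x) := by
      rw [hu₀, div_mul_cancel₀ _ hden.ne']
    nlinarith [mul_nonneg hu₀0.le (sub_nonneg.mpr hu₀1.le), sq_nonneg u₀,
      mul_nonneg (mul_nonneg hu₀0.le hu₀0.le) (sub_nonneg.mpr hu₀1.le),
      mul_pos hu₀0 hu₀0, sq_nonneg (x/2 - u₀)]
  have hfu₁ : y < f u₁ := by
    rw [hf]
    have h1u₁ : 0 < 1 - u₁ := by linarith
    rw [lt_div_iff₀ (mul_pos hx h1u₁)]
    have hδle : δ ≤ 3*(x/2-1)^2/(x*y) := min_le_right _ _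
    have h1 : y * (x * δ) ≤ 3*(x/2-1)^2 := by
      have := (le_div_iff₀ (by positivity : (0:ℝ) < x*y)).mp hδle
      nlinarith [this]
    have h2' : (x/2-1)^2 ≤ (x/2-u₁)^2 := by
      apply pow_le_pow_left₀ (by linarith) (by linarith)
    have hs : 1 - u₁ = δ := by rw [hu₁]; ring
    nlinarith [mul_nonneg (mul_nonneg (mul_nonneg hu₁0.le hu₁0.le) (by linarith : (0:ℝ) ≤ 1 - u₁)) (le_refl (0:ℝ)),
      mul_nonneg (mul_nonneg hu₁0.le (by linarith : (0:ℝ) ≤ 1 - u₁)) (by linarith : (0:ℝ) ≤ x/2 - u₁),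
      mul_nonneg (mul_nonneg hu₁0.le hu₁0.le) (by linarith : (0:ℝ) ≤ 1 - u₁)]
  have hsub := intermediate_value_Icc h01.le hcont
  have hymem : y ∈ Set.Icc (f u₀) (f u₁) := ⟨hfu₀.le, hfu₁.le⟩
  obtain ⟨u, hu, hfu⟩ := hsub hymem
  exact ⟨u, lt_of_lt_of_le hu₀0 hu.1, lt_of_le_of_lt hu.2 hu₁1, hfu⟩

/-- Witness construction from the parameter `u`. -/
lemma cox_wit (x y : ℝ) (h2 : 2 < x) (h3 : 3 / 2 * x < y) :
    ∃ a q : ℝ, 0 < a ∧ 0 < q ∧ q < 1 ∧ a + q < 1 ∧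
      x = 2 * (a^2 + q*a*1 + q*1^2) / (a + q*1)^2 ∧
      y = 6 * (a^3 + q*(a^2*1 + a*1^2 + 1^3))
            / ((a + q*1) * (2*(a^2 + q*a*1 + q*1^2))) := by
  obtain ⟨u, hu0, hu1, hfu⟩ := cox_ivt x y h2 h3
  have hx : 0 < x := by linarith
  have hv : 0 < x/2 - u := by linarith
  have h1u : 0 < 1 - u := by linarith
  have hs0 : 0 < (1-u)/(x/2-u) := div_pos h1u hv
  have hs1 : (1-u)/(x/2-u) < 1 := by rw [div_lt_one hv]; linarith
  refine ⟨u*((1-u)/(x/2-u)), (1-u)^2/(x/2-u), by positivity, by positivity, ?_, ?_, ?_, ?_⟩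
  · calc (1-u)^2/(x/2-u) = (1-u)/(x/2-u) * (1-u) := by ring
      _ < 1 * 1 := by
        apply mul_lt_mul' hs1.le (by linarith) h1u.le one_pos
      _ = 1 := by ring
  · have : u*((1-u)/(x/2-u)) + (1-u)^2/(x/2-u) = (1-u)/(x/2-u) := by field_simp; ring
    rw [this]; exact hs1
  · have hxu : x - 2*u ≠ 0 := by nlinarith
    rw [eq_div_iff (by positivity)]
    field_simp [hv.ne', hxu]
    ring
  · have hxu : x - 2*u ≠ 0 := by nlinarith
    rw [← hfu, eq_comm, div_eq_div_iff (by positivity) (by positivity)]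
    field_simp [hv.ne', hxu]
    have hxu' : x - u * 2 ≠ 0 := by contrapose! hxu; linarith
    rw [div_left_inj' (pow_ne_zero 3 hxu'), mul_add (_ ^ 2), mul_div_cancel₀ _ (pow_ne_zero 2 hxu')]
    ring

/-- Proposition 3 of the paper:
`A^{(2)} = {(2,3)} ∪ {(n₂,n₃) : n₂ > 2 ∧ n₃ > (3/2) n₂}`. -/
theorem stmt8 :
    coxC0MomentSet 2 =
      insert ((2 : ℝ), (3 : ℝ)) {q : ℝ × ℝ | 2 < q.1 ∧ 3 / 2 * q.1 < q.2} := by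
  ext ⟨x, y⟩
  simp only [coxC0MomentSet, Set.mem_setOf_eq, Set.mem_insert_iff, Prod.mk.injEq]
  constructor
  · rintro ⟨m, hm, μ, p, hμ, hp, hlast, hC0, hx, hy⟩
    have hm' : m = 0 ∨ m = 1 := by omega
    rcases hm' with rfl | rfl
    · left
      have h0 := hμ 0
      simp only [cox_mom0 μ p h0] at hx hy
      have hμ0 : (μ 0 : ℝ)⁻¹ ≠ 0 := by positivity
      constructor
      · rw [hx]; norm_num [Nat.factorial]; field_simp
      · rw [hy]; norm_num [Nat.factorial]; field_simp; ring
    · right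
      obtain ⟨H2, H3⟩ := cox_fwd μ p hμ hp hlast hC0
      subst hx hy
      exact ⟨H2, H3⟩
  · rintro (⟨rfl, rfl⟩ | ⟨h2, h3⟩)
    · refine ⟨0, by norm_num, (fun _ => 1), (fun _ => 0), fun i => one_pos,
        by omega, rfl, ?_, ?_, ?_⟩
      · intro i j hij
        fin_cases i; fin_cases j
        exact absurd hij (lt_irrefl _)
      · rw [cox_mom0 _ _ one_pos 2, cox_mom0 _ _ one_pos 1]
        norm_num [Nat.factorial]
      · rw [cox_mom0 _ _ one_pos 3, cox_mom0 _ _ one_pos 1, cox_mom0 _ _ one_pos 2]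
        norm_num [Nat.factorial]
    · obtain ⟨a, q, ha, hq0, hq1, haq, hxe, hye⟩ := cox_wit x y h2 h3
      refine ⟨1, le_refl _, ![a⁻¹, 1], ![q, 0], ?_, ?_, ?_, ?_, ?_, ?_⟩
      · intro i; fin_cases i <;> simp <;> positivity
      · intro i hi
        fin_cases i
        · simpa using ⟨hq0, hq1⟩
        · simp at hi
      · rfl
      · intro i j hij
        fin_cases i <;> fin_cases j
        · exact absurd hij (by decide)
        · show (1:ℝ) * (1 - 0) < a⁻¹ * (1 - q)
          rw [inv_mul_eq_div, lt_div_iff₀ ha]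
          linarith
        · exact absurd hij (by decide)
        · exact absurd hij (by decide)
      · have h0 : (0:ℝ) < (![a⁻¹, 1] : Fin 2 → ℝ) 0 := by simpa using inv_pos.mpr ha
        have h1 : (0:ℝ) < (![a⁻¹, 1] : Fin 2 → ℝ) 1 := by norm_num
        rw [cox_mom1_2 _ _ h0 h1, cox_mom1_1 _ _ h0 h1]
        simpa [inv_inv] using hxe
      · have h0 : (0:ℝ) < (![a⁻¹, 1] : Fin 2 → ℝ) 0 := by simpa using inv_pos.mpr ha
        have h1 : (0:ℝ) < (![a⁻¹, 1] : Fin 2 → ℝ) 1 := by norm_num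
        rw [cox_mom1_3 _ _ h0 h1, cox_mom1_1 _ _ h0 h1, cox_mom1_2 _ _ h0 h1]
        simpa [inv_inv] using hye
end

section
/- For every integer n ≥ 2, A^{(n)} = A^{(2)}; that is, A^{(n)} = {(2,3)} ∪ {(n₂, n₃) ∈ ℝ² : n₂ > 2 and n₃ > (3/2) n₂}. In particular, allowing more than two Coxian phases does not enlarge the set of second and third normalized moments that can be matched within the class C_0. -/
open Finset

/-! ### Auxiliary machinery -/

open Matrix

set_option maxHeartbeats 1000000

noncomputable def coxStep (x p : ℝ) (t : ℝ × ℝ × ℝ) : ℝ × ℝ × ℝ :=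
  (x + p * t.1, x * (x + p * t.1) + p * t.2.1,
    x * (x * (x + p * t.1) + p * t.2.1) + p * t.2.2)

noncomputable def coxH : (ℕ → ℝ) → (ℕ → ℝ) → ℕ → ℝ × ℝ × ℝ
  | _, _, 0 => (0, 0, 0)
  | ξ, q, n + 1 => coxStep (ξ 0) (q 0) (coxH (fun i => ξ (i + 1)) (fun i => q (i + 1)) n)

noncomputable def coxW (ξ q : ℕ → ℝ) (N i : ℕ) : ℝ × ℝ × ℝ :=
  coxH (fun t => ξ (i + t)) (fun t => q (i + t)) (N - i)

noncomputable def toXi {m : ℕ} (μ : Fin (m + 1) → ℝ) : ℕ → ℝ :=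
  fun t => if h : t < m + 1 then (μ ⟨t, h⟩)⁻¹ else 0

noncomputable def toQ {m : ℕ} (p : Fin (m + 1) → ℝ) : ℕ → ℝ :=
  fun t => if h : t < m + 1 then p ⟨t, h⟩ else 0

lemma coxW_rec (ξ q : ℕ → ℝ) (N i : ℕ) (h : i < N) :
    coxW ξ q N i = coxStep (ξ i) (q i) (coxW ξ q N (i + 1)) := by
  have hN : N - i = (N - (i + 1)) + 1 := by omega
  have h1 : (fun t => ξ (i + (t + 1))) = fun t => ξ (i + 1 + t) := by
    funext t; congr 1; omega
  have h2 : (fun t => q (i + (t + 1))) = fun t => q (i + 1 + t) := by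
    funext t; congr 1; omega
  rw [coxW, hN]
  show coxStep (ξ (i + 0)) (q (i + 0)) _ = _
  rw [h1, h2, Nat.add_zero]
  rfl

lemma coxW_zero (ξ q : ℕ → ℝ) (N : ℕ) : coxW ξ q N N = (0, 0, 0) := by
  rw [coxW, Nat.sub_self]; rfl

lemma coxW_start (ξ q : ℕ → ℝ) (N : ℕ) : coxW ξ q N 0 = coxH ξ q N := by
  rw [coxW, Nat.sub_zero]
  congr 1 <;> funext t <;> simp

lemma coxRow {m : ℕ} (μ p : Fin (m + 1) → ℝ) (v : Fin (m + 1) → ℝ) (i : Fin (m + 1)) :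
    ((-(coxGen μ p)) *ᵥ v) i =
      μ i * v i - (if h : (i : ℕ) + 1 < m + 1 then p i * μ i * v ⟨(i : ℕ) + 1, h⟩ else 0) := by
  classical
  simp only [Matrix.mulVec, dotProduct, coxGen, Matrix.neg_apply, Matrix.of_apply]
  have key : ∀ j : Fin (m + 1),
      (-(if j = i then -μ i else if (j : ℕ) = (i : ℕ) + 1 then p i * μ i else 0)) * v j
      = (if j = i then μ i * v j else 0)
        + (if (j : ℕ) = (i : ℕ) + 1 then -(p i * μ i * v j) else 0) := by
    intro j
    by_cases h1 : j = i
    · subst h1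
      have : ¬ ((j : ℕ) = (j : ℕ) + 1) := by omega
      simp [this]
    · by_cases h2 : (j : ℕ) = (i : ℕ) + 1 <;> simp [h1, h2]
  rw [Finset.sum_congr rfl (fun j _ => key j), Finset.sum_add_distrib,
    Finset.sum_ite_eq' Finset.univ i (fun j => μ i * v j)]
  simp only [Finset.mem_univ, if_true]
  by_cases h : (i : ℕ) + 1 < m + 1
  · rw [dif_pos h]
    have hiff : ∀ j : Fin (m + 1), ((j : ℕ) = (i : ℕ) + 1) ↔ j = ⟨(i : ℕ) + 1, h⟩ := by
      intro j
      constructor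
      · intro hj; exact Fin.ext hj
      · intro hj; subst hj; rfl
    have : (∑ j : Fin (m + 1), if (j : ℕ) = (i : ℕ) + 1 then -(p i * μ i * v j) else 0)
        = -(p i * μ i * v ⟨(i : ℕ) + 1, h⟩) := by
      simp_rw [hiff]
      rw [Finset.sum_ite_eq' Finset.univ (⟨(i : ℕ) + 1, h⟩ : Fin (m + 1))
        (fun j => -(p i * μ i * v j))]
      simp
    rw [this]; ring
  · rw [dif_neg h]
    have : (∑ j : Fin (m + 1), if (j : ℕ) = (i : ℕ) + 1 then -(p i * μ i * v j) else 0) = 0 := by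
      apply Finset.sum_eq_zero
      intro j _
      rw [if_neg]
      have := j.isLt
      omega
    rw [this]; ring

lemma coxSolve {m : ℕ} (μ p : Fin (m + 1) → ℝ) (hμ : ∀ i, 0 < μ i)
    (v g : Fin (m + 1) → ℝ)
    (hrec : ∀ i : Fin (m + 1), v i = (μ i)⁻¹ * g i +
      p i * (if h : (i : ℕ) + 1 < m + 1 then v ⟨(i : ℕ) + 1, h⟩ else 0)) :
    (-(coxGen μ p)) *ᵥ v = g := by
  funext i
  rw [coxRow, hrec i]
  have h1 : μ i * (μ i)⁻¹ = 1 := mul_inv_cancel₀ (hμ i).ne'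
  by_cases h : (i : ℕ) + 1 < m + 1
  · rw [dif_pos h, dif_pos h]
    linear_combination g i * h1
  · rw [dif_neg h, dif_neg h]
    linear_combination g i * h1

lemma coxDet {m : ℕ} (μ p : Fin (m + 1) → ℝ) (hμ : ∀ i, 0 < μ i) :
    IsUnit (-(coxGen μ p)).det := by
  have htri : (-(coxGen μ p)).BlockTriangular id := by
    intro i j hij
    have h1 : ¬(j = i) := by exact fun hc => absurd hc (by exact ne_of_lt hij)
    have h2 : ¬((j : ℕ) = (i : ℕ) + 1) := by
      have : (j : ℕ) < (i : ℕ) := hij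
      omega
    simp [coxGen, h1, h2]
  rw [Matrix.det_of_upperTriangular htri]
  have : ∀ i : Fin (m + 1), (-(coxGen μ p)) i i = μ i := by
    intro i; simp [coxGen]
  rw [Finset.prod_congr rfl (fun i _ => this i)]
  exact isUnit_iff_ne_zero.2 (Finset.prod_ne_zero_iff.2 (fun i _ => (hμ i).ne'))

lemma coxMoment_eq {m : ℕ} (μ p : Fin (m + 1) → ℝ) (hμ : ∀ i, 0 < μ i) :
    coxMoment μ p 1 = (coxH (toXi μ) (toQ p) (m + 1)).1 ∧
    coxMoment μ p 2 = 2 * (coxH (toXi μ) (toQ p) (m + 1)).2.1 ∧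
    coxMoment μ p 3 = 6 * (coxH (toXi μ) (toQ p) (m + 1)).2.2 := by
  classical
  set ξ : ℕ → ℝ := toXi μ with hξdef
  set q : ℕ → ℝ := toQ p with hqdef
  have hξv : ∀ j : Fin (m + 1), ξ (j : ℕ) = (μ j)⁻¹ := by
    intro j; simp [hξdef, toXi, j.isLt]
  have hqv : ∀ j : Fin (m + 1), q (j : ℕ) = p j := by
    intro j; simp [hqdef, toQ, j.isLt]
  set w1 : Fin (m + 1) → ℝ := fun j => (coxW ξ q (m + 1) (j : ℕ)).1 with hw1def
  set w2 : Fin (m + 1) → ℝ := fun j => (coxW ξ q (m + 1) (j : ℕ)).2.1 with hw2def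
  set w3 : Fin (m + 1) → ℝ := fun j => (coxW ξ q (m + 1) (j : ℕ)).2.2 with hw3def
  have recW : ∀ i : Fin (m + 1), coxW ξ q (m + 1) (i : ℕ) =
      coxStep (ξ (i : ℕ)) (q (i : ℕ)) (coxW ξ q (m + 1) ((i : ℕ) + 1)) :=
    fun i => coxW_rec ξ q (m + 1) (i : ℕ) i.isLt
  -- tail value as a dite
  have tail1 : ∀ i : Fin (m + 1),
      (if h : (i : ℕ) + 1 < m + 1 then w1 ⟨(i : ℕ) + 1, h⟩ else 0) =
        (coxW ξ q (m + 1) ((i : ℕ) + 1)).1 := by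
    intro i
    by_cases h : (i : ℕ) + 1 < m + 1
    · rw [dif_pos h]
    · rw [dif_neg h]
      have hi : (i : ℕ) + 1 = m + 1 := by have := i.isLt; omega
      rw [hi, coxW_zero]
  have tail2 : ∀ i : Fin (m + 1),
      (if h : (i : ℕ) + 1 < m + 1 then w2 ⟨(i : ℕ) + 1, h⟩ else 0) =
        (coxW ξ q (m + 1) ((i : ℕ) + 1)).2.1 := by
    intro i
    by_cases h : (i : ℕ) + 1 < m + 1
    · rw [dif_pos h]
    · rw [dif_neg h]
      have hi : (i : ℕ) + 1 = m + 1 := by have := i.isLt; omega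
      rw [hi, coxW_zero]
  have tail3 : ∀ i : Fin (m + 1),
      (if h : (i : ℕ) + 1 < m + 1 then w3 ⟨(i : ℕ) + 1, h⟩ else 0) =
        (coxW ξ q (m + 1) ((i : ℕ) + 1)).2.2 := by
    intro i
    by_cases h : (i : ℕ) + 1 < m + 1
    · rw [dif_pos h]
    · rw [dif_neg h]
      have hi : (i : ℕ) + 1 = m + 1 := by have := i.isLt; omega
      rw [hi, coxW_zero]
  have hv1 : (-(coxGen μ p)) *ᵥ w1 = fun _ => 1 := by
    apply coxSolve μ p hμ
    intro i
    rw [tail1 i]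
    show (coxW ξ q (m + 1) (i : ℕ)).1 = _
    rw [recW i]
    show ξ (i : ℕ) + q (i : ℕ) * _ = _
    rw [hξv i, hqv i]
    try ring
  have hv2 : (-(coxGen μ p)) *ᵥ w2 = w1 := by
    apply coxSolve μ p hμ
    intro i
    rw [tail2 i]
    show (coxW ξ q (m + 1) (i : ℕ)).2.1 = (μ i)⁻¹ * (coxW ξ q (m + 1) (i : ℕ)).1 + _
    rw [recW i]
    show ξ (i : ℕ) * (ξ (i : ℕ) + q (i : ℕ) * _) + q (i : ℕ) * _ =
      (μ i)⁻¹ * (ξ (i : ℕ) + q (i : ℕ) * _) + _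
    rw [hξv i, hqv i]
    try ring
  have hv3 : (-(coxGen μ p)) *ᵥ w3 = w2 := by
    apply coxSolve μ p hμ
    intro i
    rw [tail3 i]
    show (coxW ξ q (m + 1) (i : ℕ)).2.2 = (μ i)⁻¹ * (coxW ξ q (m + 1) (i : ℕ)).2.1 + _
    rw [recW i]
    show ξ (i : ℕ) * (ξ (i : ℕ) * (ξ (i : ℕ) + q (i : ℕ) * _) + q (i : ℕ) * _) + q (i : ℕ) * _ =
      (μ i)⁻¹ * (ξ (i : ℕ) * (ξ (i : ℕ) + q (i : ℕ) * _) + q (i : ℕ) * _) + _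
    rw [hξv i, hqv i]
    try ring
  have hdet := coxDet μ p hμ
  set Bm := (-(coxGen μ p))⁻¹ with hBdef
  have hBG : Bm * (-(coxGen μ p)) = 1 := Matrix.nonsing_inv_mul _ hdet
  have key1 : Bm *ᵥ (fun _ => 1) = w1 := by
    rw [← hv1, Matrix.mulVec_mulVec, hBG, Matrix.one_mulVec]
  have key2 : Bm *ᵥ w1 = w2 := by
    rw [← hv2, Matrix.mulVec_mulVec, hBG, Matrix.one_mulVec]
  have key3 : Bm *ᵥ w2 = w3 := by
    rw [← hv3, Matrix.mulVec_mulVec, hBG, Matrix.one_mulVec]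
  have hsum : ∀ k : ℕ, ∑ j : Fin (m + 1), (Bm ^ k) 0 j = ((Bm ^ k) *ᵥ (fun _ => 1)) 0 := by
    intro k
    simp [Matrix.mulVec, dotProduct]
  have pow1 : (Bm ^ 1) *ᵥ (fun _ => 1) = w1 := by rw [pow_one]; exact key1
  have pow2 : (Bm ^ 2) *ᵥ (fun _ => 1) = w2 := by
    rw [pow_two, ← Matrix.mulVec_mulVec, key1, key2]
  have pow3 : (Bm ^ 3) *ᵥ (fun _ => 1) = w3 := by
    have h3 : Bm ^ 3 = Bm * Bm ^ 2 := by rw [pow_succ, pow_two, mul_assoc]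
    rw [h3, ← Matrix.mulVec_mulVec, pow2, key3]
  have hstart1 : w1 0 = (coxH ξ q (m + 1)).1 := by
    show (coxW ξ q (m + 1) ((0 : Fin (m + 1)) : ℕ)).1 = _
    rw [show ((0 : Fin (m + 1)) : ℕ) = 0 from rfl, coxW_start]
  have hstart2 : w2 0 = (coxH ξ q (m + 1)).2.1 := by
    show (coxW ξ q (m + 1) ((0 : Fin (m + 1)) : ℕ)).2.1 = _
    rw [show ((0 : Fin (m + 1)) : ℕ) = 0 from rfl, coxW_start]
  have hstart3 : w3 0 = (coxH ξ q (m + 1)).2.2 := by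
    show (coxW ξ q (m + 1) ((0 : Fin (m + 1)) : ℕ)).2.2 = _
    rw [show ((0 : Fin (m + 1)) : ℕ) = 0 from rfl, coxW_start]
  refine ⟨?_, ?_, ?_⟩
  · rw [coxMoment, hsum 1, pow1, hstart1]
    norm_num
  · rw [coxMoment, hsum 2, pow2, hstart2]
    norm_num
  · rw [coxMoment, hsum 3, pow3, hstart3]
    norm_num [Nat.factorial]

lemma coxH_key : ∀ (n : ℕ), 1 ≤ n → ∀ (ξ q : ℕ → ℝ),
    (∀ t, t < n → 0 < ξ t) →
    (∀ t, t + 1 < n → 0 < q t ∧ q t < 1) →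
    q (n - 1) = 0 →
    (∀ t, t + 1 < n → (1 - q (t + 1)) * ξ t < (1 - q t) * ξ (t + 1)) →
    0 < (coxH ξ q n).1 ∧
    ξ 0 ≤ (1 - q 0) * (coxH ξ q n).1 ∧
    (coxH ξ q n).1 ^ 2 ≤ (coxH ξ q n).2.1 ∧
    (coxH ξ q n).1 * (coxH ξ q n).2.1 ≤ (coxH ξ q n).2.2 ∧
    (coxH ξ q n).2.1 ^ 2 ≤ (coxH ξ q n).1 * (coxH ξ q n).2.2 ∧
    (2 ≤ n →
      (coxH ξ q n).1 ^ 2 < (coxH ξ q n).2.1 ∧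
      (coxH ξ q n).2.1 ^ 2 < (coxH ξ q n).1 * (coxH ξ q n).2.2) := by
  intro n
  induction n with
  | zero => omega
  | succ k ih =>
    intro _ ξ q hξ hq hlast hC0
    rcases Nat.eq_zero_or_pos k with hk | hk
    · -- base case n = 1
      subst hk
      have hq0 : q 0 = 0 := hlast
      have hx : 0 < ξ 0 := hξ 0 (by omega)
      simp only [coxH, coxStep, hq0]
      refine ⟨by nlinarith, by nlinarith, by nlinarith, by nlinarith, by nlinarith, by omega⟩
    · -- step case: k ≥ 1
      have hqk : 0 < q 0 ∧ q 0 < 1 := hq 0 (by omega)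
      obtain ⟨A, B, C, hABC, h0A, hβ, hA2, hAB, hB2, _⟩ :
          ∃ A B C, coxH (fun i => ξ (i+1)) (fun i => q (i+1)) k = (A, B, C) ∧
            0 < A ∧ ξ 1 ≤ (1 - q 1) * A ∧ A ^ 2 ≤ B ∧ A * B ≤ C ∧ B ^ 2 ≤ A * C ∧ True := by
        have := ih hk (fun i => ξ (i + 1)) (fun i => q (i + 1))
          (fun t ht => hξ (t + 1) (by omega))
          (fun t ht => hq (t + 1) (by omega))
          (by have : k - 1 + 1 = k + 1 - 1 := by omega
              simpa [this] using hlast)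
          (fun t ht => hC0 (t + 1) (by omega))
        exact ⟨_, _, _, rfl, this.1, this.2.1, this.2.2.1, this.2.2.2.1, this.2.2.2.2.1, trivial⟩
      set x := ξ 0 with hxdef
      set p := q 0 with hpdef
      have hx : 0 < x := hξ 0 (by omega)
      have hp0 : 0 < p := hqk.1
      have hp1 : p < 1 := hqk.2
      have hq1lt : q 1 < 1 := by
        rcases Nat.lt_or_ge 2 (k + 1) with h | h
        · exact (hq 1 h).2
        · have : k = 1 := by omega
          rw [this] at hlast; rw [hlast]; norm_num
      have hξ1 : 0 < ξ 1 := hξ 1 (by omega)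
      -- the crucial consequence of C0:  x < (1 - p) * A
      have hxA : x < (1 - p) * A := by
        have h01 := hC0 0 (by omega)
        -- (1 - q 1) * x < (1 - p) * ξ 1 ≤ (1 - p)*(1 - q 1)*A
        nlinarith [mul_pos (sub_pos.2 hp1) (sub_pos.2 hq1lt)]
      have h0B : 0 < B := lt_of_lt_of_le (by positivity) hA2
      have h0C : 0 < C := lt_of_lt_of_le (by positivity) hAB
      -- unfold one step
      have hunf : coxH ξ q (k + 1) =
          (x + p * A, x * (x + p * A) + p * B,
            x * (x * (x + p * A) + p * B) + p * C) := by
        show coxStep (ξ 0) (q 0) _ = _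
        rw [hABC]; rfl
      rw [hunf]
      dsimp only
      have ha : 0 < x + p * A := by positivity
      have hA3 : A * A ^ 2 ≤ C := le_trans (by nlinarith) hAB
      have e1 : x * A < (1 - p) * A ^ 2 := by nlinarith [mul_lt_mul_of_pos_right hxA h0A]
      have e2 : x ^ 2 < ((1 - p) * A) ^ 2 := by nlinarith [mul_self_lt_mul_self hx.le hxA]
      have e3 : x ^ 2 * A < (1 - p) ^ 2 * C := by
        nlinarith [mul_lt_mul_of_pos_right e2 h0A,
          mul_le_mul_of_nonneg_left hA3 (sq_nonneg (1 - p))]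
      have e4 : x * A ^ 2 < (1 - p) * C := by
        nlinarith [mul_lt_mul_of_pos_right hxA (pow_pos h0A 2),
          mul_le_mul_of_nonneg_left hA3 (sub_pos.2 hp1).le]
      refine ⟨ha, ?_, ?_, ?_, ?_, fun _ => ⟨?_, ?_⟩⟩
      · nlinarith [mul_lt_mul_of_pos_left hxA hp0]
      · -- a^2 ≤ b
        nlinarith [mul_lt_mul_of_pos_left e1 hp0,
          mul_le_mul_of_nonneg_left hA2 (mul_pos hp0 hp0).le]
      · -- a * b ≤ c
        have hid : x * (x * (x + p * A) + p * B) + p * C -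
            (x + p * A) * (x * (x + p * A) + p * B) =
            p * (C - x ^ 2 * A - p * (x * A ^ 2) - p * (A * B)) := by ring
        have f3 : p * (x ^ 2 * A) < p * ((1 - p) ^ 2 * C) := by
          exact mul_lt_mul_of_pos_left e3 hp0
        have f4 : (p * p) * (x * A ^ 2) < (p * p) * ((1 - p) * C) :=
          mul_lt_mul_of_pos_left e4 (mul_pos hp0 hp0)
        have f5 : (p * p) * (A * B) ≤ (p * p) * C :=
          mul_le_mul_of_nonneg_left hAB (mul_pos hp0 hp0).le
        nlinarith [hid, f3, f4, f5]
      · -- b^2 ≤ a*c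
        have hxB : x * B < (1 - p) * (A * B) := by
          nlinarith [mul_lt_mul_of_pos_right hxA h0B]
        have hkey : 0 < C - p * (A * B) - x * B := by
          nlinarith [mul_le_mul_of_nonneg_left hAB hp0.le,
            mul_le_mul_of_nonneg_left hAB (sub_pos.2 hp1).le]
        have hid : (x + p * A) * (x * (x * (x + p * A) + p * B) + p * C) -
            (x * (x + p * A) + p * B) ^ 2 =
            p * (x * (C - p * (A * B) - x * B) + p * (A * C - B ^ 2)) := by ring
        have g1 : 0 < p * (x * (C - p * (A * B) - x * B)) :=
          mul_pos hp0 (mul_pos hx hkey)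
        have g2 : 0 ≤ p * (p * (A * C - B ^ 2)) :=
          mul_nonneg hp0.le (mul_nonneg hp0.le (by linarith))
        linarith [hid, g1, g2]
      · -- strict a^2 < b
        nlinarith [mul_lt_mul_of_pos_left e1 hp0,
          mul_le_mul_of_nonneg_left hA2 (mul_pos hp0 hp0).le]
      · -- strict b^2 < a*c
        have hxB : x * B < (1 - p) * (A * B) := by
          nlinarith [mul_lt_mul_of_pos_right hxA h0B]
        have hkey : 0 < C - p * (A * B) - x * B := by
          nlinarith [mul_le_mul_of_nonneg_left hAB hp0.le,
            mul_le_mul_of_nonneg_left hAB (sub_pos.2 hp1).le]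
        have hid : (x + p * A) * (x * (x * (x + p * A) + p * B) + p * C) -
            (x * (x + p * A) + p * B) ^ 2 =
            p * (x * (C - p * (A * B) - x * B) + p * (A * C - B ^ 2)) := by ring
        have g1 : 0 < p * (x * (C - p * (A * B) - x * B)) :=
          mul_pos hp0 (mul_pos hx hkey)
        have g2 : 0 ≤ p * (p * (A * C - B ^ 2)) :=
          mul_nonneg hp0.le (mul_nonneg hp0.le (by linarith))
        linarith [hid, g1, g2]

lemma coxIVT (a b : ℝ) (ha : 2 < a) (hb : 3 / 2 * a < b) :
    ∃ s : ℝ, 1 < s ∧ 3 / s + 6 * (a * s ^ 2 / 2 - s) ^ 2 / (a * s ^ 3 * (s - 1)) = b := by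
  set f : ℝ → ℝ := fun s => 3 / s + 6 * (a * s ^ 2 / 2 - s) ^ 2 / (a * s ^ 3 * (s - 1)) with hf
  have ha0 : (0 : ℝ) < a := by linarith
  have hbpos : 0 < b - 3 * a / 2 := by linarith
  have hb0 : (0 : ℝ) < b := by linarith
  have ha2 : (0 : ℝ) < (a - 2) ^ 2 := pow_pos (by linarith) 2
  obtain ⟨s₁, hs₁1, hs₁2, h16⟩ :
      ∃ s₁ : ℝ, 1 < s₁ ∧ s₁ ≤ 2 ∧ 16 * a * b * (s₁ - 1) ≤ 3 * (a - 2) ^ 2 := by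
    refine ⟨1 + min 1 (3 * (a - 2) ^ 2 / (16 * a * b)), ?_, ?_, ?_⟩
    · have : 0 < min 1 (3 * (a - 2) ^ 2 / (16 * a * b)) := lt_min one_pos (by positivity)
      linarith
    · have : min 1 (3 * (a - 2) ^ 2 / (16 * a * b)) ≤ 1 := min_le_left _ _
      linarith
    · have h1 : min 1 (3 * (a - 2) ^ 2 / (16 * a * b)) ≤ 3 * (a - 2) ^ 2 / (16 * a * b) :=
        min_le_right _ _
      have h2 : 0 < 16 * a * b := by positivity
      rw [le_div_iff₀ h2] at h1
      have h3 : (1 : ℝ) + min 1 (3 * (a - 2) ^ 2 / (16 * a * b)) - 1 =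
          min 1 (3 * (a - 2) ^ 2 / (16 * a * b)) := by ring
      rw [h3]
      linarith [h1]
  obtain ⟨s₂, hs₂2, hK⟩ :
      ∃ s₂ : ℝ, 2 ≤ s₂ ∧ 3 + 3 * a / 2 < (s₂ - 1) * (b - 3 * a / 2) := by
    refine ⟨2 + (3 + 3 * a / 2) / (b - 3 * a / 2),
      by have : 0 ≤ (3 + 3 * a / 2) / (b - 3 * a / 2) := by positivity
         linarith, ?_⟩
    have e : (2 : ℝ) + (3 + 3 * a / 2) / (b - 3 * a / 2) - 1 =
        1 + (3 + 3 * a / 2) / (b - 3 * a / 2) := by ring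
    rw [e, add_mul, one_mul, div_mul_cancel₀ _ (ne_of_gt hbpos)]
    linarith
  have hs₁s₂ : s₁ ≤ s₂ := le_trans hs₁2 hs₂2
  have hrw : ∀ s : ℝ, 1 < s →
      f s = (3 * (a * s ^ 2 * (s - 1)) + 6 * (a * s ^ 2 / 2 - s) ^ 2) / (a * s ^ 3 * (s - 1)) := by
    intro s hs
    have h1 : s ≠ 0 := by intro h; rw [h] at hs; linarith
    have h2 : s - 1 ≠ 0 := by intro h; nlinarith
    rw [hf]
    field_simp
  have hcont : ContinuousOn f (Set.Icc s₁ s₂) := by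
    apply ContinuousOn.add
    · apply ContinuousOn.div continuousOn_const continuousOn_id
      intro x hx
      have h1 : 1 < x := lt_of_lt_of_le hs₁1 hx.1
      simp only [id]
      intro h; rw [h] at h1; linarith
    · apply ContinuousOn.div (by fun_prop) (by fun_prop)
      intro x hx
      have h1 : 1 < x := lt_of_lt_of_le hs₁1 hx.1
      have h2 : 0 < a * x ^ 3 * (x - 1) :=
        mul_pos (mul_pos ha0 (pow_pos (by linarith) 3)) (by linarith)
      exact ne_of_gt h2
  have hub : f s₂ < b := by
    rw [hrw s₂ (by linarith)]
    have hs2pos : 0 < a * s₂ ^ 3 * (s₂ - 1) :=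
      mul_pos (mul_pos ha0 (pow_pos (by linarith) 3)) (by linarith)
    rw [div_lt_iff₀ hs2pos]
    have hmul : (a * s₂ ^ 3) * (3 + 3 * a / 2) < (a * s₂ ^ 3) * ((s₂ - 1) * (b - 3 * a / 2)) := by
      apply mul_lt_mul_of_pos_left hK
      have : (0:ℝ) < s₂ := by linarith
      positivity
    have hrest : 0 < 3 * s₂ ^ 2 * (2 * a * s₂ + a - 2) := by
      have h1 : (0:ℝ) < s₂ := by linarith
      have h2 : (0:ℝ) < 2 * a * s₂ + a - 2 := by nlinarith
      positivity
    nlinarith [hmul, hrest]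
  have hlb : b < f s₁ := by
    rw [hrw s₁ hs₁1]
    have hs1pos : 0 < a * s₁ ^ 3 * (s₁ - 1) :=
      mul_pos (mul_pos ha0 (pow_pos (by linarith) 3)) (by linarith)
    rw [lt_div_iff₀ hs1pos]
    have hT1 : (a - 2) / 2 ≤ a * s₁ ^ 2 / 2 - s₁ := by
      nlinarith [mul_nonneg (by linarith : (0:ℝ) ≤ s₁ - 1)
        (by nlinarith : (0:ℝ) ≤ a * (s₁ + 1) / 2 - 1)]
    have hT2 : 6 * ((a - 2) / 2) ^ 2 ≤ 6 * (a * s₁ ^ 2 / 2 - s₁) ^ 2 := by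
      have h0 : 0 ≤ (a - 2) / 2 := by linarith
      nlinarith
    have hs3 : s₁ ^ 3 ≤ 8 := by
      have := pow_le_pow_left₀ (by linarith : (0:ℝ) ≤ s₁) hs₁2 3
      norm_num at this
      linarith
    have hpos2 : 0 < 3 * (a * s₁ ^ 2 * (s₁ - 1)) := by
      have h1 : (0:ℝ) < s₁ := by linarith
      have h2 : (0:ℝ) < s₁ - 1 := by linarith
      positivity
    nlinarith [mul_le_mul_of_nonneg_right hs3 (mul_nonneg (mul_nonneg ha0.le hb0.le)
      (by linarith : (0:ℝ) ≤ s₁ - 1)), h16, hT2, hpos2]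
  obtain ⟨s, hsmem, hfs⟩ := intermediate_value_Icc' hs₁s₂ hcont ⟨hub.le, hlb.le⟩
  exact ⟨s, lt_of_lt_of_le hs₁1 hsmem.1, hfs⟩

/-- Proposition 4 of the paper: for every `n ≥ 2`, `A^{(n)} = A^{(2)}`, i.e.
`A^{(n)} = {(2,3)} ∪ {(n₂,n₃) : n₂ > 2 ∧ n₃ > (3/2) n₂}`; allowing more than two
Coxian phases does not enlarge the set of matchable normalized moments within `C₀`. -/
theorem stmt9 (n : ℕ) (hn : 2 ≤ n) :
    coxC0MomentSet n =
      insert ((2 : ℝ), (3 : ℝ)) {q : ℝ × ℝ | 2 < q.1 ∧ 3 / 2 * q.1 < q.2} := by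
  ext ⟨n2, n3⟩
  simp only [coxC0MomentSet, Set.mem_setOf_eq, Set.mem_insert_iff, Prod.mk.injEq]
  constructor
  · rintro ⟨m, hm, μ, p, hμ, hp, hplast, hmono, h2eq, h3eq⟩
    obtain ⟨e1, e2, e3⟩ := coxMoment_eq μ p hμ
    have k1 : ∀ t, t < m + 1 → 0 < toXi μ t := by
      intro t ht
      simp only [toXi, dif_pos ht]
      exact inv_pos.2 (hμ _)
    have k2 : ∀ t, t + 1 < m + 1 → 0 < toQ p t ∧ toQ p t < 1 := by
      intro t ht
      have ht' : t < m + 1 := by omega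
      have := hp ⟨t, ht'⟩ (by simp only [Fin.val_mk]; omega)
      simpa only [toQ, dif_pos ht'] using this
    have k3 : toQ p (m + 1 - 1) = 0 := by
      have h1 : toQ p m = p (Fin.last m) := by
        simp only [toQ, dif_pos (Nat.lt_succ_self m)]
        rfl
      simpa using h1.trans hplast
    have k4 : ∀ t, t + 1 < m + 1 →
        (1 - toQ p (t + 1)) * toXi μ t < (1 - toQ p t) * toXi μ (t + 1) := by
      intro t ht
      have ht1 : t < m + 1 := by omega
      have hlt : (⟨t, ht1⟩ : Fin (m + 1)) < ⟨t + 1, ht⟩ := by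
        rw [Fin.mk_lt_mk]; omega
      have hmono' := hmono _ _ hlt
      have hA : 0 < μ ⟨t, ht1⟩ := hμ _
      have hB : 0 < μ ⟨t + 1, ht⟩ := hμ _
      simp only [toQ, toXi, dif_pos ht1, dif_pos ht]
      have hab : 0 < μ ⟨t, ht1⟩ * μ ⟨t + 1, ht⟩ := mul_pos hA hB
      rw [← mul_lt_mul_iff_left₀ hab]
      have l1 : (1 - p ⟨t + 1, ht⟩) * (μ ⟨t, ht1⟩)⁻¹ * (μ ⟨t, ht1⟩ * μ ⟨t + 1, ht⟩)
          = μ ⟨t + 1, ht⟩ * (1 - p ⟨t + 1, ht⟩) := by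
        field_simp
      have l2 : (1 - p ⟨t, ht1⟩) * (μ ⟨t + 1, ht⟩)⁻¹ * (μ ⟨t, ht1⟩ * μ ⟨t + 1, ht⟩)
          = μ ⟨t, ht1⟩ * (1 - p ⟨t, ht1⟩) := by
        field_simp
      rw [l1, l2]
      exact hmono'
    have K := coxH_key (m + 1) (by omega) (toXi μ) (toQ p) k1 k2 k3 k4
    obtain ⟨A, B, C, hABC⟩ : ∃ A B C, coxH (toXi μ) (toQ p) (m + 1) = (A, B, C) :=
      ⟨_, _, _, rfl⟩
    rw [hABC] at K e1 e2 e3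
    dsimp only at K e1 e2 e3
    obtain ⟨hA0, -, hA2, -, hB2, hstrict⟩ := K
    rcases Nat.eq_zero_or_pos m with hm0 | hm1
    · left
      subst hm0
      -- order 1 : the exponential distribution, point (2,3)
      have hq0 : toQ p 0 = 0 := k3
      have hx0 : (0 : ℝ) < toXi μ 0 := k1 0 (by omega)
      have hH : coxH (toXi μ) (toQ p) 1 =
          (toXi μ 0, toXi μ 0 * toXi μ 0, toXi μ 0 * (toXi μ 0 * toXi μ 0)) := by
        show coxStep (toXi μ 0) (toQ p 0) (0, 0, 0) = _
        simp [coxStep, hq0]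
      rw [hABC] at hH
      simp only [Prod.mk.injEq] at hH
      obtain ⟨hA, hB, hC⟩ := hH
      constructor
      · rw [h2eq, e2, e1, hA, hB, div_eq_iff (by positivity)]; ring
      · rw [h3eq, e3, e2, e1, hA, hB, hC, div_eq_iff (by positivity)]; ring
    · right
      obtain ⟨hs1, hs2⟩ := hstrict (by omega)
      have hB0 : 0 < B := lt_of_lt_of_le (pow_pos hA0 2) hA2
      constructor
      · rw [h2eq, e2, e1, lt_div_iff₀ (by positivity)]
        nlinarith [hs1]
      · rw [h2eq, h3eq, e3, e2, e1]
        have hl : 3 / 2 * (2 * B / A ^ 2) = 3 * B / A ^ 2 := by ring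
        rw [hl, div_lt_div_iff₀ (by positivity) (by positivity)]
        nlinarith [mul_lt_mul_of_pos_left hs2 (by positivity : (0:ℝ) < 6 * A)]
  · rintro (⟨h2eq, h3eq⟩ | ⟨h2, h3⟩)
    · -- the point (2,3) : exponential distribution
      subst h2eq h3eq
      obtain ⟨e1, e2, e3⟩ :=
        coxMoment_eq (m := 0) (fun _ => (1 : ℝ)) (fun _ => (0 : ℝ)) (fun _ => one_pos)
      have hH : coxH (toXi (fun _ : Fin 1 => (1 : ℝ))) (toQ (fun _ : Fin 1 => (0 : ℝ))) 1 =
          (1, 1, 1) := by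
        show coxStep (toXi (fun _ : Fin 1 => (1 : ℝ)) 0) (toQ (fun _ : Fin 1 => (0 : ℝ)) 0)
          (0, 0, 0) = _
        norm_num [coxStep, toXi, toQ]
      rw [hH] at e1 e2 e3
      dsimp only at e1 e2 e3
      refine ⟨0, by omega, fun _ => 1, fun _ => 0, fun i => one_pos,
        fun i hi => absurd hi (by omega), rfl,
        fun i j hij => absurd (Fin.lt_def.mp hij)
          (by have := i.isLt; have := j.isLt; omega), ?_, ?_⟩
      · rw [e2, e1]; norm_num
      · rw [e3, e2, e1]; norm_num
    · -- the open region
      obtain ⟨s, hs1, hfs⟩ := coxIVT n2 n3 h2 h3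
      have hs0 : (0 : ℝ) < s := by linarith
      have hsm1 : (0 : ℝ) < s - 1 := by linarith
      set T : ℝ := n2 * s ^ 2 / 2 - s with hTdef
      have hn2s' : (2 : ℝ) < n2 * s := by
        nlinarith [mul_lt_mul_of_pos_left hs1 (show (0:ℝ) < n2 by linarith)]
      have hT0 : 0 < T := by
        rw [hTdef]
        nlinarith [mul_pos hs0 (show (0:ℝ) < n2 * s - 2 by linarith)]
      have hTs : s * (s - 1) < T := by
        rw [hTdef]
        nlinarith [mul_pos (show (0:ℝ) < n2 - 2 by linarith) (pow_pos hs0 2)]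
      have hTp : (s - 1) ^ 2 < T := by nlinarith
      have hn2s : n2 * s ^ 2 = 2 * (s + T) := by rw [hTdef]; ring
      have hden : n2 * s ^ 3 * (s - 1) = 2 * s * (s + T) * (s - 1) := by
        calc n2 * s ^ 3 * (s - 1) = (n2 * s ^ 2) * (s * (s - 1)) := by ring
        _ = 2 * (s + T) * (s * (s - 1)) := by rw [hn2s]
        _ = 2 * s * (s + T) * (s - 1) := by ring
      have hsT0 : 0 < s + T := by linarith
      have hμv : ∀ i : Fin 2, 0 < ![(1 : ℝ), (s - 1) / T] i := by
        intro i
        fin_cases i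
        · norm_num
        · show 0 < (s - 1) / T
          exact div_pos hsm1 hT0
      obtain ⟨e1, e2, e3⟩ := coxMoment_eq ![(1 : ℝ), (s - 1) / T] ![(s - 1) ^ 2 / T, 0] hμv
      have hH : coxH (toXi ![(1 : ℝ), (s - 1) / T]) (toQ ![(s - 1) ^ 2 / T, 0]) 2 =
          (s, s + T, s + T + T ^ 2 / (s - 1)) := by
        have hx0 : toXi ![(1 : ℝ), (s - 1) / T] 0 = 1 := by norm_num [toXi]
        have hx1 : toXi ![(1 : ℝ), (s - 1) / T] 1 = T / (s - 1) := by
          simp [toXi, inv_div]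
        have hq0 : toQ ![(s - 1) ^ 2 / T, 0] 0 = (s - 1) ^ 2 / T := by norm_num [toQ]
        have hq1 : toQ ![(s - 1) ^ 2 / T, 0] 1 = 0 := by norm_num [toQ]
        show coxStep (toXi ![(1 : ℝ), (s - 1) / T] 0) (toQ ![(s - 1) ^ 2 / T, 0] 0)
          (coxStep (toXi ![(1 : ℝ), (s - 1) / T] (0 + 1)) (toQ ![(s - 1) ^ 2 / T, 0] (0 + 1))
            (0, 0, 0)) = _
        norm_num [hx0, hx1, hq0, hq1, coxStep]
        refine ⟨?_, ?_, ?_⟩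
        · field_simp
          ring
        · field_simp
          ring
        · field_simp
          ring
      rw [hH] at e1 e2 e3
      dsimp only at e1 e2 e3
      refine ⟨1, hn, ![(1 : ℝ), (s - 1) / T], ![(s - 1) ^ 2 / T, 0], hμv, ?_, ?_, ?_, ?_, ?_⟩
      · intro i hi
        fin_cases i
        · constructor
          · show 0 < (s - 1) ^ 2 / T
            exact div_pos (pow_pos hsm1 2) hT0
          · show (s - 1) ^ 2 / T < 1
            exact (div_lt_one hT0).2 hTp
        · norm_num at hi
      · rfl
      · intro i j hij
        have hij' : (i : ℕ) < (j : ℕ) := hij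
        have hi0 : i = 0 := by
          apply Fin.ext
          have := j.isLt
          simp only [Fin.val_zero]
          omega
        have hj1 : j = 1 := by
          apply Fin.ext
          have := j.isLt
          simp only [Fin.val_one]
          omega
        subst hi0 hj1
        show (s - 1) / T * (1 - 0) < 1 * (1 - (s - 1) ^ 2 / T)
        have key : (s - 1) / T * (1 - 0) - 1 * (1 - (s - 1) ^ 2 / T)
            = (s * (s - 1) - T) / T := by
          field_simp
          ring
        have hneg : (s * (s - 1) - T) / T < 0 :=
          div_neg_of_neg_of_pos (by linarith) hT0
        linarith [key, hneg]
      · show n2 = _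
        rw [e2, e1, ← hn2s, mul_div_assoc, div_self (pow_ne_zero 2 (ne_of_gt hs0)), mul_one]
      · show n3 = _
        rw [hden] at hfs
        rw [e3, e2, e1, ← hfs]
        have h1 : s ≠ 0 := ne_of_gt hs0
        have h2' : s - 1 ≠ 0 := ne_of_gt hsm1
        have h3' : s + T ≠ 0 := ne_of_gt hsT0
        field_simp
        ring
end

section
/- Let π_{1,1}, ..., π_{1,n} be real numbers and set π_{1,n+1} := 0. Suppose that for every i = 2,...,n, (π_{1,i−1} − π_{1,i}) p_{i−1} μ_{i−1} = ∑_{j=i}^n (π_{1,j} − π_{1,j+1}) μ_j (1−p_j), and suppose the mean job size is one, i.e. ∑_{j=1}^n (∏_{s=1}^{j−1} p_s)/μ_j = 1. Then π_{1,i} = π_{1,1} · ∑_{j=i}^n (1/μ_j) ∏_{s=1}^{j−1} p_s for every i = 1,...,n. -/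
open Finset

/-- Proposition 5 of the paper: at any fixed point of the mean-field ODE system, the
phase distribution at queue length one is proportional to
`∑_{j=i}^n (1/μ j) ∏_{s=1}^{j−1} p s`. Products over empty ranges equal `1`. -/
theorem stmt10 (n : ℕ) (hn : 1 ≤ n) (μ p : ℕ → ℝ) (π : ℕ → ℝ)
    (hμ : ∀ i, 1 ≤ i → i ≤ n → 0 < μ i)
    (hp : ∀ i, 1 ≤ i → i ≤ n - 1 → 0 < p i ∧ p i < 1)
    (hpn : p n = 0)
    (hπtop : π (n + 1) = 0)
    (hfix : ∀ i, 2 ≤ i → i ≤ n →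
      (π (i - 1) - π i) * (p (i - 1) * μ (i - 1)) =
        ∑ j ∈ Finset.Icc i n, (π j - π (j + 1)) * (μ j * (1 - p j)))
    (hmean : ∑ j ∈ Finset.Icc 1 n, (∏ s ∈ Finset.Icc 1 (j - 1), p s) / μ j = 1) :
    ∀ i, 1 ≤ i → i ≤ n →
      π i = π 1 * ∑ j ∈ Finset.Icc i n, (1 / μ j) * ∏ s ∈ Finset.Icc 1 (j - 1), p s := by
  -- telescoping
  have tel : ∀ a b : ℕ, a ≤ b → ∑ j ∈ Finset.Icc a b, (π j - π (j+1)) = π a - π (b+1) := by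
    intro a b h
    induction b, h using Nat.le_induction with
    | base => simp
    | succ b hb ih =>
      rw [Finset.sum_Icc_succ_top (by omega), ih]; ring
  -- the partial sums in the fixed point equation collapse
  have lemA : ∀ k : ℕ, ∀ i, 2 ≤ i → i ≤ n → n - i = k →
      (∑ j ∈ Finset.Icc i n, (π j - π (j+1)) * (μ j * (1 - p j))) = (π i - π (i+1)) * μ i := by
    intro k
    induction k with
    | zero =>
      intro i h2 hle hk
      have : i = n := by omega
      subst this
      rw [Finset.Icc_self, Finset.sum_singleton, hpn, hπtop]
      ring
    | succ k ih =>
      intro i h2 hle hk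
      have hsplit : insert i (Finset.Icc (i+1) n) = Finset.Icc i n := by
        rw [Finset.Icc_add_one_left_eq_Ioc, Finset.Ioc_insert_left (by omega)]
      rw [← hsplit, Finset.sum_insert (by simp), ih (i+1) (by omega) (by omega) (by omega)]
      have hfx := hfix (i+1) (by omega) (by omega)
      simp only [Nat.add_sub_cancel] at hfx
      rw [ih (i+1) (by omega) (by omega) (by omega)] at hfx
      rw [← hfx]
      ring
  -- the flows form a geometric cascade
  have lemB : ∀ j, 1 ≤ j → j ≤ n →
      (π j - π (j+1)) * μ j = ((π 1 - π 2) * μ 1) * ∏ s ∈ Finset.Icc 1 (j-1), p s := by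
    intro j h1 hle
    induction j, h1 using Nat.le_induction with
    | base => simp
    | succ j hj ih =>
      have hfx := hfix (j+1) (by omega) (by omega)
      simp only [Nat.add_sub_cancel] at hfx
      rw [lemA (n - (j+1)) (j+1) (by omega) (by omega) rfl] at hfx
      rw [← hfx]
      have hj1 : j - 1 + 1 = j := by omega
      have hprod : ∏ s ∈ Finset.Icc 1 (j+1-1), p s =
          (∏ s ∈ Finset.Icc 1 (j-1), p s) * p j := by
        rw [Nat.add_sub_cancel, ← hj1, Finset.prod_Icc_succ_top (by omega), hj1]
      rw [hprod]
      linear_combination p j * ih (by omega)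
  -- express π i via the flow at phase 1
  have key : ∀ i, 1 ≤ i → i ≤ n →
      π i = ((π 1 - π 2) * μ 1) * ∑ j ∈ Finset.Icc i n, (∏ s ∈ Finset.Icc 1 (j-1), p s) / μ j := by
    intro i h1 hle
    have ht := tel i n hle
    rw [hπtop, sub_zero] at ht
    rw [← ht, Finset.mul_sum]
    apply Finset.sum_congr rfl
    intro j hj
    simp only [Finset.mem_Icc] at hj
    have hne : μ j ≠ 0 := (hμ j (by omega) hj.2).ne'
    have : π j - π (j+1) = (((π 1 - π 2) * μ 1) * ∏ s ∈ Finset.Icc 1 (j-1), p s) / μ j := by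
      rw [eq_div_iff hne]; exact lemB j (by omega) hj.2
    rw [this, mul_div_assoc]
  have hπ1 : π 1 = (π 1 - π 2) * μ 1 := by
    have := key 1 le_rfl hn
    rwa [hmean, mul_one] at this
  intro i h1 hle
  rw [key i h1 hle, ← hπ1]
  congr 1
  apply Finset.sum_congr rfl
  intro j _
  rw [one_div, inv_mul_eq_div]
end

section
/- For every h ∈ Ω_B and all integers B ≥ ℓ_1 ≥ ℓ_2 ≥ ... ≥ ℓ_n ≥ 1, it holds that h_{ℓ_1,1} + ∑_{i=2}^n (h_{ℓ_i,i} − h_{ℓ_{i−1},i}) ≤ h_{ℓ_n,1}. -/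
open Finset

namespace MeanField

/-- Boundary-extended state: the conventions `h_{0,1} = 1`, `h_{B+1,i} = 0` and
`h_{ℓ,n+1} = 0`. -/
noncomputable def Ext (B n : ℕ) (h : ℕ → ℕ → ℝ) (ℓ i : ℕ) : ℝ :=
  if ℓ = 0 then 1 else if ℓ = B + 1 then 0 else if i = n + 1 then 0 else h ℓ i

/-- Membership in the state space `Ω_B`. -/
def MemOmega (B n : ℕ) (h : ℕ → ℕ → ℝ) : Prop :=
  ∀ ℓ i, 1 ≤ ℓ → ℓ ≤ B → 1 ≤ i → i ≤ n →
    0 ≤ h ℓ i ∧ h ℓ i ≤ 1 ∧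
    Ext B n h ℓ (i + 1) ≤ h ℓ i ∧
    Ext B n h (ℓ + 1) i ≤ h ℓ i ∧
    Ext B n h (ℓ + 1) i + Ext B n h ℓ (i + 1) ≤ h ℓ i + Ext B n h (ℓ + 1) (i + 1)

/-- Valid index tuples `B ≥ ℓ_1 ≥ ℓ_2 ≥ ... ≥ ℓ_n ≥ 1` with `ℓ_1 > ℓ_n`. -/
def ValidTuple (B n : ℕ) (L : ℕ → ℕ) : Prop :=
  (∀ i, 1 ≤ i → i ≤ n → 1 ≤ L i ∧ L i ≤ B) ∧
  (∀ i, 2 ≤ i → i ≤ n → L i ≤ L (i - 1)) ∧ L n < L 1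

/-- `g_{(ℓ_1,...,ℓ_n)}(h) = h_{ℓ_1,1} + ∑_{i=2}^n (h_{ℓ_i,i} − h_{ℓ_{i−1},i})`. -/
noncomputable def gfun (n : ℕ) (L : ℕ → ℕ) (h : ℕ → ℕ → ℝ) : ℝ :=
  h (L 1) 1 + ∑ i ∈ Finset.Icc 2 n, (h (L i) i - h (L (i - 1)) i)

/-- `f_{(ℓ_1,...,ℓ_n)}(h) = f_{ℓ_1,1}(h) + ∑_{i=2}^n (f_{ℓ_i,i}(h) − f_{ℓ_{i−1},i}(h))`. -/
noncomputable def ffun (n : ℕ) (f : ℕ → ℕ → (ℕ → ℕ → ℝ) → ℝ) (L : ℕ → ℕ)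
    (h : ℕ → ℕ → ℝ) : ℝ :=
  f (L 1) 1 h + ∑ i ∈ Finset.Icc 2 n, (f (L i) i h - f (L (i - 1)) i h)

/-- The partial order `≤_C` on `Ω_B`. -/
def LeC (B n : ℕ) (h h' : ℕ → ℕ → ℝ) : Prop :=
  (∀ ℓ i, 1 ≤ ℓ → ℓ ≤ B → 1 ≤ i → i ≤ n → h ℓ i ≤ h' ℓ i) ∧
  (∀ L, ValidTuple B n L → gfun n L h ≤ gfun n L h')

/-- The right-hand side of the mean-field ODE system for coordinate `(ℓ, i)`. -/
noncomputable def drift (B n : ℕ) (μ p : ℕ → ℝ) (f : ℕ → ℕ → (ℕ → ℕ → ℝ) → ℝ)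
    (ℓ i : ℕ) (h : ℕ → ℕ → ℝ) : ℝ :=
  if i = 1 then
    f ℓ 1 h - ∑ j ∈ Finset.Icc 1 n,
      ((Ext B n h ℓ j - Ext B n h ℓ (j + 1)) -
        (Ext B n h (ℓ + 1) j - Ext B n h (ℓ + 1) (j + 1))) * (μ j * (1 - p j))
  else
    (if 1 < ℓ then f ℓ i h else 0) + (h ℓ (i - 1) - h ℓ i) * (p (i - 1) * μ (i - 1)) -
      ∑ j ∈ Finset.Icc i n, (Ext B n h ℓ j - Ext B n h ℓ (j + 1)) * (μ j * (1 - p j))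

/-- `h : [0,∞) → Ω_B` is a differentiable solution of the ODE system. -/
def IsSolution (B n : ℕ) (μ p : ℕ → ℝ) (f : ℕ → ℕ → (ℕ → ℕ → ℝ) → ℝ)
    (h : ℝ → ℕ → ℕ → ℝ) : Prop :=
  (∀ t : ℝ, 0 ≤ t → MemOmega B n (h t)) ∧
  ∀ ℓ i, 1 ≤ ℓ → ℓ ≤ B → 1 ≤ i → i ≤ n → ∀ t : ℝ, 0 ≤ t →
    HasDerivWithinAt (fun τ => h τ ℓ i) (drift B n μ p f ℓ i (h t)) (Set.Ici 0) t

/-- A fixed point of the ODE system: a state of `Ω_B` at which every drift vanishes. -/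
def IsFixedPoint (B n : ℕ) (μ p : ℕ → ℝ) (f : ℕ → ℕ → (ℕ → ℕ → ℝ) → ℝ)
    (π : ℕ → ℕ → ℝ) : Prop :=
  MemOmega B n π ∧ ∀ ℓ i, 1 ≤ ℓ → ℓ ≤ B → 1 ≤ i → i ≤ n → drift B n μ p f ℓ i π = 0

/-- Assumption A2: each `f_{ℓ,i}` is non-decreasing in every coordinate `(ℓ',i') ≠ (ℓ,i)`. -/
def AssumptionA2 (B n : ℕ) (f : ℕ → ℕ → (ℕ → ℕ → ℝ) → ℝ) : Prop :=
  ∀ ℓ i, 1 ≤ ℓ → ℓ ≤ B → 1 ≤ i → i ≤ n → ∀ h h',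
    MemOmega B n h → MemOmega B n h' →
    (∀ ℓ' i', 1 ≤ ℓ' → ℓ' ≤ B → 1 ≤ i' → i' ≤ n → h ℓ' i' ≤ h' ℓ' i') →
    h ℓ i = h' ℓ i → f ℓ i h ≤ f ℓ i h'

/-- Assumption A3: `f_{(ℓ_1,...,ℓ_n)}` is monotone between `≤_C`-comparable states with
equal `g_{(ℓ_1,...,ℓ_n)}` values. -/
def AssumptionA3 (B n : ℕ) (f : ℕ → ℕ → (ℕ → ℕ → ℝ) → ℝ) : Prop :=
  ∀ L, ValidTuple B n L → ∀ h h', MemOmega B n h → MemOmega B n h' →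
    LeC B n h h' → gfun n L h = gfun n L h' → ffun n f L h ≤ ffun n f L h'

/-- Assumption A4: decomposition of `∑_{ℓ≥L} (f_{ℓ,1}(h) − f_{ℓ,1}(π))` for fixed points `π`. -/
def AssumptionA4 (B n : ℕ) (μ p : ℕ → ℝ) (f : ℕ → ℕ → (ℕ → ℕ → ℝ) → ℝ) : Prop :=
  ∀ π, IsFixedPoint B n μ p f π → ∀ L, 1 ≤ L → L ≤ B →
    ∃ (b : ℕ → ℕ → (ℕ → ℕ → ℝ) → ℝ) (a : (ℕ → ℕ → ℝ) → ℝ),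
      (∀ ℓ j, ∃ M : ℝ, ∀ h, MemOmega B n h → |b ℓ j h| ≤ M) ∧
      (∀ h, MemOmega B n h → LeC B n π h → 0 ≤ a h) ∧
      (∀ h, MemOmega B n h → LeC B n h π → a h ≤ 0) ∧
      (∀ h, MemOmega B n h →
        ∑ ℓ ∈ Finset.Icc L B, (f ℓ 1 h - f ℓ 1 π) =
          ∑ ℓ ∈ Finset.Icc 1 (L - 1), ∑ j ∈ Finset.Icc 1 n,
            b ℓ j h * (h ℓ j - π ℓ j) - a h)

/-- Inequality (10) of the paper: for any state `h ∈ Ω_B` and any nonincreasing tuple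
`B ≥ ℓ_1 ≥ ... ≥ ℓ_n ≥ 1`. -/
lemma step_lemma (B n : ℕ) (h : ℕ → ℕ → ℝ) (hh : MemOmega B n h)
    (ℓ j : ℕ) (hℓ1 : 1 ≤ ℓ) (hℓB : ℓ + 1 ≤ B) (hj1 : 1 ≤ j) (hjn : j + 1 ≤ n) :
    h ℓ (j + 1) - h (ℓ + 1) (j + 1) ≤ h ℓ j - h (ℓ + 1) j := by
  have := (hh ℓ j hℓ1 (by omega) hj1 (by omega)).2.2.2.2
  simp only [Ext] at this
  have h1 : ℓ + 1 ≠ 0 := by omega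
  have h2 : ℓ + 1 ≠ B + 1 := by omega
  have h3 : j ≠ n + 1 := by omega
  have h4 : j + 1 ≠ n + 1 := by omega
  have h5 : ℓ ≠ 0 := by omega
  have h6 : ℓ ≠ B + 1 := by omega
  simp only [h1, h2, h3, h4, h5, h6, if_false] at this
  linarith

lemma rows_lemma (B n : ℕ) (h : ℕ → ℕ → ℝ) (hh : MemOmega B n h)
    (a j : ℕ) (ha : 1 ≤ a) (hj1 : 1 ≤ j) (hjn : j + 1 ≤ n) :
    ∀ b, a ≤ b → b ≤ B → h a (j + 1) - h b (j + 1) ≤ h a j - h b j := by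
  intro b hab
  induction b, hab using Nat.le_induction with
  | base => intro _; simp
  | succ b hab ih =>
    intro hbB
    have := step_lemma B n h hh b j (by omega) (by omega) hj1 hjn
    have := ih (by omega)
    linarith

lemma cols_lemma (B n : ℕ) (h : ℕ → ℕ → ℝ) (hh : MemOmega B n h)
    (a b : ℕ) (ha : 1 ≤ a) (hab : a ≤ b) (hbB : b ≤ B) (j : ℕ) (hj1 : 1 ≤ j) :
    ∀ j', j ≤ j' → j' ≤ n → h a j' - h b j' ≤ h a j - h b j := by
  intro j' hjj'
  induction j', hjj' using Nat.le_induction with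
  | base => intro _; simp
  | succ j' hjj' ih =>
    intro hj'n
    have := rows_lemma B n h hh a j' ha (by omega) (by omega) b hab hbB
    have := ih (by omega)
    linarith

lemma tel_lemma (F : ℕ → ℝ) : ∀ n, 1 ≤ n →
    ∑ i ∈ Finset.Icc 2 n, (F i - F (i - 1)) = F n - F 1 := by
  intro n hn
  induction n, hn using Nat.le_induction with
  | base => simp
  | succ n hn ih =>
    rw [Finset.sum_Icc_succ_top (by omega : 2 ≤ n + 1), ih]
    simp only [Nat.add_sub_cancel]
    ring

/-- Inequality (10) of the paper: for any state `h ∈ Ω_B` and any nonincreasing tuple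
`B ≥ ℓ_1 ≥ ... ≥ ℓ_n ≥ 1`,
`h_{ℓ_1,1} + ∑_{i=2}^n (h_{ℓ_i,i} − h_{ℓ_{i−1},i}) ≤ h_{ℓ_n,1}`. -/
theorem stmt12 (B n : ℕ) (hB : 1 ≤ B) (hn : 1 ≤ n) (h : ℕ → ℕ → ℝ)
    (hh : MemOmega B n h) (L : ℕ → ℕ)
    (hL : ∀ i, 1 ≤ i → i ≤ n → 1 ≤ L i ∧ L i ≤ B)
    (hmono : ∀ i, 2 ≤ i → i ≤ n → L i ≤ L (i - 1)) :
    h (L 1) 1 + ∑ i ∈ Finset.Icc 2 n, (h (L i) i - h (L (i - 1)) i) ≤ h (L n) 1 := by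
  have key : ∑ i ∈ Finset.Icc 2 n, (h (L i) i - h (L (i - 1)) i) ≤
      ∑ i ∈ Finset.Icc 2 n, (h (L i) 1 - h (L (i - 1)) 1) := by
    apply Finset.sum_le_sum
    intro i hi
    rw [Finset.mem_Icc] at hi
    have hLi := hL i (by omega) hi.2
    have hLi1 := hL (i - 1) (by omega) (by omega)
    exact cols_lemma B n h hh (L i) (L (i - 1)) hLi.1
      (hmono i hi.1 hi.2) hLi1.2 1 le_rfl i (by omega) hi.2
  have tel : ∑ i ∈ Finset.Icc 2 n, (h (L i) 1 - h (L (i - 1)) 1)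
      = h (L n) 1 - h (L 1) 1 := tel_lemma (fun i => h (L i) 1) n hn
  linarith

end MeanField
end

section
/- For any h, π ∈ Ω_B there exist h^{(l)}, h^{(u)} ∈ Ω_B such that h^{(l)} ≤_C h, h^{(l)} ≤_C π, h ≤_C h^{(u)} and π ≤_C h^{(u)}. In particular one may take h^{(l)} := 0 and h^{(u)}_{ℓ,i} := max(h_{ℓ,1}, π_{ℓ,1}) for all i. -/
open Finset

namespace MeanField

lemma ext_eq (B n : ℕ) (h : ℕ → ℕ → ℝ) {ℓ i : ℕ} (h1 : 1 ≤ ℓ) (h2 : ℓ ≤ B)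
    (h3 : i ≤ n) : Ext B n h ℓ i = h ℓ i := by
  unfold Ext
  rw [if_neg (by omega), if_neg (by omega), if_neg (by omega)]

lemma col_mono (B n : ℕ) (h : ℕ → ℕ → ℝ) (hh : MemOmega B n h)
    {a b i : ℕ} (ha : 1 ≤ a) (hab : a ≤ b) :
    b ≤ B → 1 ≤ i → i ≤ n → h b i ≤ h a i := by
  induction b, hab using Nat.le_induction with
  | base => intro _ _ _; exact le_refl _
  | succ b hab ih =>
    intro hbB hi1 hin
    have hb : b ≤ B := by omega
    have key := (hh b i (ha.trans hab) hb hi1 hin).2.2.2.1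
    rw [ext_eq B n h (by omega) hbB hin] at key
    exact key.trans (ih hb hi1 hin)

lemma row_mono (B n : ℕ) (h : ℕ → ℕ → ℝ) (hh : MemOmega B n h)
    {ℓ j i : ℕ} (hℓ1 : 1 ≤ ℓ) (hℓB : ℓ ≤ B) (hj : 1 ≤ j) (hji : j ≤ i) :
    i ≤ n → h ℓ i ≤ h ℓ j := by
  induction i, hji using Nat.le_induction with
  | base => intro _; exact le_refl _
  | succ i hji ih =>
    intro hin
    have hi : i ≤ n := by omega
    have key := (hh ℓ i hℓ1 hℓB (hj.trans hji) hi).2.2.1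
    rw [ext_eq B n h hℓ1 hℓB hin] at key
    exact key.trans (ih hi)

lemma supermod_step (B n : ℕ) (h : ℕ → ℕ → ℝ) (hh : MemOmega B n h)
    {ℓ i : ℕ} (h1 : 1 ≤ ℓ) (h2 : ℓ < B) (h3 : 1 ≤ i) (h4 : i < n) :
    h (ℓ + 1) i + h ℓ (i + 1) ≤ h ℓ i + h (ℓ + 1) (i + 1) := by
  have key := (hh ℓ i h1 (by omega) h3 (by omega)).2.2.2.2
  rw [ext_eq B n h (by omega) (by omega) (by omega),
      ext_eq B n h (by omega) (by omega) (by omega),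
      ext_eq B n h (by omega) (by omega) (by omega)] at key
  linarith

lemma supermod_col (B n : ℕ) (h : ℕ → ℕ → ℝ) (hh : MemOmega B n h)
    {ℓ j i : ℕ} (h1 : 1 ≤ ℓ) (h2 : ℓ < B) (hj : 1 ≤ j) (hji : j ≤ i) :
    i ≤ n → h ℓ i + h (ℓ + 1) j ≤ h ℓ j + h (ℓ + 1) i := by
  induction i, hji using Nat.le_induction with
  | base => intro _; linarith
  | succ i hji ih =>
    intro hin
    have hi : i ≤ n := by omega
    have step := supermod_step B n h hh h1 h2 (hj.trans hji) (by omega)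
    have := ih hi
    linarith

lemma supermod_full (B n : ℕ) (h : ℕ → ℕ → ℝ) (hh : MemOmega B n h)
    {a b j i : ℕ} (ha : 1 ≤ a) (hab : a ≤ b) (hj : 1 ≤ j) (hji : j ≤ i)
    (hin : i ≤ n) : b ≤ B → h a i + h b j ≤ h a j + h b i := by
  induction b, hab using Nat.le_induction with
  | base => intro _; linarith
  | succ b hab ih =>
    intro hbB
    have hb : b ≤ B := by omega
    have step := supermod_col B n h hh (ha.trans hab) (by omega) hj hji hin
    have := ih hb
    linarith

lemma telescope (v : ℕ → ℝ) {n : ℕ} (hn : 1 ≤ n) :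
    ∑ i ∈ Finset.Icc 2 n, (v i - v (i - 1)) = v n - v 1 := by
  induction n, hn using Nat.le_induction with
  | base => simp
  | succ n hn ih =>
    rw [Finset.sum_Icc_succ_top (by omega), ih]
    simp only [Nat.add_sub_cancel]
    ring

lemma gfun_nonneg (B n : ℕ) (hn : 1 ≤ n) (h : ℕ → ℕ → ℝ) (hh : MemOmega B n h)
    {L : ℕ → ℕ} (hL : ValidTuple B n L) : 0 ≤ gfun n L h := by
  obtain ⟨hL1, hL2, _⟩ := hL
  have h0 : 0 ≤ h (L 1) 1 := (hh (L 1) 1 (hL1 1 le_rfl hn).1 (hL1 1 le_rfl hn).2 le_rfl hn).1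
  have hsum : 0 ≤ ∑ i ∈ Finset.Icc 2 n, (h (L i) i - h (L (i - 1)) i) := by
    apply Finset.sum_nonneg
    intro i hi
    rw [Finset.mem_Icc] at hi
    obtain ⟨hi2, hin⟩ := hi
    have hL1i := hL1 i (by omega) hin
    have hL1i' := hL1 (i - 1) (by omega) (by omega)
    have := col_mono B n h hh hL1i.1 (hL2 i hi2 hin) hL1i'.2 (by omega) hin
    linarith
  unfold gfun; linarith

lemma gfun_le (B n : ℕ) (hn : 1 ≤ n) (h : ℕ → ℕ → ℝ) (hh : MemOmega B n h)
    {L : ℕ → ℕ} (hL : ValidTuple B n L) : gfun n L h ≤ h (L n) 1 := by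
  obtain ⟨hL1, hL2, _⟩ := hL
  have key : ∑ i ∈ Finset.Icc 2 n, (h (L i) i - h (L (i - 1)) i) ≤
      ∑ i ∈ Finset.Icc 2 n, (h (L i) 1 - h (L (i - 1)) 1) := by
    apply Finset.sum_le_sum
    intro i hi
    rw [Finset.mem_Icc] at hi
    obtain ⟨hi2, hin⟩ := hi
    have hL1i := hL1 i (by omega) hin
    have hL1i' := hL1 (i - 1) (by omega) (by omega)
    have := supermod_full B n h hh hL1i.1 (hL2 i hi2 hin) le_rfl (by omega) hin hL1i'.2
    linarith
  rw [telescope (fun i => h (L i) 1) hn] at key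
  unfold gfun; linarith

/-- Bracketing step in Proposition 7 of the paper: any `h, π ∈ Ω_B` admit a common
`≤_C`-lower bound and a common `≤_C`-upper bound in `Ω_B` (one may take `h^{(l)} = 0`
and `h^{(u)}_{ℓ,i} = max(h_{ℓ,1}, π_{ℓ,1})`). -/
theorem stmt13 (B n : ℕ) (hB : 1 ≤ B) (hn : 1 ≤ n) (h π : ℕ → ℕ → ℝ)
    (hh : MemOmega B n h) (hπ : MemOmega B n π) :
    ∃ hl hu : ℕ → ℕ → ℝ, MemOmega B n hl ∧ MemOmega B n hu ∧
      LeC B n hl h ∧ LeC B n hl π ∧ LeC B n h hu ∧ LeC B n π hu := by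
  set hu : ℕ → ℕ → ℝ := fun ℓ _ => max (h ℓ 1) (π ℓ 1) with hu_def
  have ext_zero : ∀ a b : ℕ, a ≠ 0 → Ext B n (fun _ _ => (0 : ℝ)) a b = 0 := by
    intro a b ha; unfold Ext; rw [if_neg ha]; split_ifs <;> rfl
  have hl_mem : MemOmega B n (fun _ _ => (0 : ℝ)) := by
    intro ℓ i h1 h2 h3 h4
    rw [ext_zero _ _ (by omega), ext_zero _ _ (by omega), ext_zero _ _ (by omega)]
    norm_num
  -- basic bounds for hu
  have hu01 : ∀ ℓ, 1 ≤ ℓ → ℓ ≤ B → 0 ≤ hu ℓ 1 ∧ hu ℓ 1 ≤ 1 := by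
    intro ℓ h1 h2
    have a := hh ℓ 1 h1 h2 le_rfl hn
    have b := hπ ℓ 1 h1 h2 le_rfl hn
    exact ⟨le_max_of_le_left a.1, max_le a.2.1 b.2.1⟩
  have hu_col : ∀ ℓ, 1 ≤ ℓ → ℓ < B → hu (ℓ + 1) 1 ≤ hu ℓ 1 := by
    intro ℓ h1 h2
    exact max_le_max (col_mono B n h hh h1 (Nat.le_succ ℓ) (by omega) le_rfl hn)
      (col_mono B n π hπ h1 (Nat.le_succ ℓ) (by omega) le_rfl hn)
  have ext_hu : ∀ a b : ℕ, 1 ≤ a → a ≤ B + 1 →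
      Ext B n hu a b = if a = B + 1 ∨ b = n + 1 then 0 else hu a 1 := by
    intro a b ha haB
    unfold Ext
    rw [if_neg (by omega)]
    split_ifs <;> first | rfl | omega
  have hu_mem : MemOmega B n hu := by
    intro ℓ i h1 h2 h3 h4
    have e1 := ext_hu ℓ (i + 1) h1 (by omega)
    have e2 := ext_hu (ℓ + 1) i (by omega) (by omega)
    have e3 := ext_hu (ℓ + 1) (i + 1) (by omega) (by omega)
    have b1 := hu01 ℓ h1 h2
    have hdef : hu ℓ i = hu ℓ 1 := rfl
    refine ⟨b1.1, b1.2, ?_, ?_, ?_⟩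
    · rw [e1]; split_ifs with hc
      · linarith [b1.1, hdef.le]
      · exact hdef.le.trans (le_refl _)
    · rw [e2]; split_ifs with hc
      · linarith [b1.1, hdef.le]
      · have := hu_col ℓ h1 (by omega); linarith [hdef.le]
    · rw [e1, e2, e3]
      split_ifs with hc1 hc2 hc3 <;>
        first
          | (exfalso; omega)
          | (have hcol : hu (ℓ + 1) 1 ≤ hu ℓ 1 := hu_col ℓ h1 (by omega); linarith [b1.1, hdef.ge, hdef.le])
          | linarith [b1.1, hdef.ge, hdef.le]
  have gzero : ∀ L : ℕ → ℕ, gfun n L (fun _ _ => (0 : ℝ)) = 0 := by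
    intro L; unfold gfun; simp
  have ghu : ∀ L : ℕ → ℕ, gfun n L hu = hu (L n) 1 := by
    intro L
    unfold gfun
    rw [telescope (fun i => hu (L i) 1) hn]
    ring
  have le_zero : ∀ x : ℕ → ℕ → ℝ, MemOmega B n x → LeC B n (fun _ _ => (0 : ℝ)) x := by
    intro x hx
    constructor
    · intro ℓ i a b c d; exact (hx ℓ i a b c d).1
    · intro L hL; rw [gzero]; exact gfun_nonneg B n hn x hx hL
  have le_hu : ∀ x : ℕ → ℕ → ℝ, MemOmega B n x →
      (∀ ℓ, 1 ≤ ℓ → ℓ ≤ B → x ℓ 1 ≤ hu ℓ 1) → LeC B n x hu := by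
    intro x hx hx1
    constructor
    · intro ℓ i a b c d
      exact (row_mono B n x hx a b le_rfl c d).trans (hx1 ℓ a b)
    · intro L hL
      rw [ghu]
      have hLn := hL.1 n hn le_rfl
      exact (gfun_le B n hn x hx hL).trans (hx1 (L n) hLn.1 hLn.2)
  refine ⟨fun _ _ => 0, hu, hl_mem, hu_mem, le_zero h hh, le_zero π hπ, ?_, ?_⟩
  · exact le_hu h hh (fun ℓ _ _ => le_max_left _ _)
  · exact le_hu π hπ (fun ℓ _ _ => le_max_right _ _)

end MeanField
end

section
/- Assume the unit-mean condition ∑_{j=1}^n (∏_{s=1}^{j−1} p_s)/μ_j = 1, and define R_n := 1/μ_n and R_{i−1} := 1/μ_{i−1} + p_{i−1} R_i for i = n,...,2 (so that R_1 = 1). Let h : [0,∞) → Ω_B be a differentiable solution of the ODE system and define z_{1,L}(h) := ∑_{ℓ=L}^B h_{ℓ,1} (for 1 ≤ L ≤ B) and z_2(h) := ∑_{i=2}^n h_{1,i} (R_i − R_{i−1}). Then for all t ≥ 0: (d/dt) z_{1,L}(h(t)) = ∑_{ℓ=L}^B f_{ℓ,1}(h(t)) − ∑_{j=1}^n (h_{L,j}(t)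 − h_{L,j+1}(t)) ν_j, and (d/dt) z_2(h(t)) = −h_{1,1}(t) + ∑_{j=1}^n (h_{1,j}(t) − h_{1,j+1}(t)) ν_j. -/
open Finset

namespace MeanField

lemma tele_aux (F : ℕ → ℝ) : ∀ (k a : ℕ),
    ∑ i ∈ Finset.Icc a (a + k), (F i - F (i + 1)) = F a - F (a + k + 1) := by
  intro k
  induction k with
  | zero => intro a; simp
  | succ k ih =>
      intro a
      have h1 : a + (k + 1) = (a + k) + 1 := by omega
      rw [h1, Finset.sum_Icc_succ_top (by omega), ih a]
      ring

lemma tele (F : ℕ → ℝ) {a b : ℕ} (hab : a ≤ b + 1) :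
    ∑ i ∈ Finset.Icc a b, (F i - F (i + 1)) = F a - F (b + 1) := by
  rcases eq_or_lt_of_le hab with h | h
  · rw [Finset.Icc_eq_empty (by omega)]
    have : a = b + 1 := h
    simp [this]
  · have hb : b = a + (b - a) := by omega
    have := tele_aux F (b - a) a
    rw [← hb] at this
    exact this

lemma teleR (R : ℕ → ℝ) : ∀ j, 1 ≤ j →
    ∑ i ∈ Finset.Icc 2 j, (R i - R (i - 1)) = R j - R 1 := by
  intro j hj
  induction j, hj using Nat.le_induction with
  | base => simp
  | succ j hj ih =>
      rw [Finset.sum_Icc_succ_top (by omega), ih]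
      simp only [Nat.add_sub_cancel]
      ring

lemma Rone (n : ℕ) (hn : 1 ≤ n) (μ p R : ℕ → ℝ)
    (hμ : ∀ i, 1 ≤ i → i ≤ n → 0 < μ i)
    (hmean : ∑ j ∈ Finset.Icc 1 n, (∏ s ∈ Finset.Icc 1 (j - 1), p s) / μ j = 1)
    (hRn : R n = 1 / μ n)
    (hRrec : ∀ i, 2 ≤ i → i ≤ n → R (i - 1) = 1 / μ (i - 1) + p (i - 1) * R i) :
    R 1 = 1 := by
  have key : ∀ k i, 1 ≤ i → i + k = n →
      ∑ j ∈ Finset.Icc i n, (∏ s ∈ Finset.Icc 1 (j - 1), p s) / μ j =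
        (∏ s ∈ Finset.Icc 1 (i - 1), p s) * R i := by
    intro k
    induction k with
    | zero =>
        intro i h1 h2
        have : i = n := by omega
        subst this
        rw [Finset.Icc_self, Finset.sum_singleton, hRn]
        ring
    | succ k ih =>
        intro i h1 h2
        have hin : i < n := by omega
        rw [Finset.Icc_eq_cons_Ioc (le_of_lt hin), Finset.sum_cons, ← Finset.Icc_add_one_left_eq_Ioc]
        rw [ih (i + 1) (by omega) (by omega)]
        have hi1 : i - 1 + 1 = i := by omega
        have hprod : ∏ s ∈ Finset.Icc 1 (i + 1 - 1), p s =
            (∏ s ∈ Finset.Icc 1 (i - 1), p s) * p i := by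
          have h3 : i + 1 - 1 = (i - 1) + 1 := by omega
          rw [h3, Finset.prod_Icc_succ_top (by omega), hi1]
        have hR : R i = 1 / μ i + p i * R (i + 1) := by
          have := hRrec (i + 1) (by omega) (by omega)
          simpa using this
        have hμi : μ i ≠ 0 := ne_of_gt (hμ i h1 (le_of_lt hin))
        rw [hprod, hR]
        field_simp
  have h := key (n - 1) 1 le_rfl (by omega)
  rw [hmean] at h
  have h0 : Finset.Icc 1 (1 - 1) = (∅ : Finset ℕ) := by
    apply Finset.Icc_eq_empty; omega
  rw [h0, Finset.prod_empty, one_mul] at h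
  exact h.symm

/-- Lemma 3 of the paper: derivatives of the Lyapunov-type quantities
`z_{1,L}(h) = ∑_{ℓ=L}^B h_{ℓ,1}` and `z_2(h) = ∑_{i=2}^n h_{1,i} (R_i − R_{i−1})`
along any solution of the ODE system. -/
theorem stmt14 (B n : ℕ) (hB : 1 ≤ B) (hn : 1 ≤ n) (μ p R : ℕ → ℝ)
    (hμ : ∀ i, 1 ≤ i → i ≤ n → 0 < μ i)
    (hp : ∀ i, 1 ≤ i → i < n → 0 < p i ∧ p i < 1)
    (hpn : p n = 0)
    (hmean : ∑ j ∈ Finset.Icc 1 n, (∏ s ∈ Finset.Icc 1 (j - 1), p s) / μ j = 1)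
    (hRn : R n = 1 / μ n)
    (hRrec : ∀ i, 2 ≤ i → i ≤ n → R (i - 1) = 1 / μ (i - 1) + p (i - 1) * R i)
    (f : ℕ → ℕ → (ℕ → ℕ → ℝ) → ℝ)
    (h : ℝ → ℕ → ℕ → ℝ) (hsol : IsSolution B n μ p f h) :
    ∀ t : ℝ, 0 ≤ t →
      (∀ L, 1 ≤ L → L ≤ B →
        HasDerivWithinAt (fun τ => ∑ ℓ ∈ Finset.Icc L B, h τ ℓ 1)
          (∑ ℓ ∈ Finset.Icc L B, f ℓ 1 (h t) -
            ∑ j ∈ Finset.Icc 1 n,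
              (Ext B n (h t) L j - Ext B n (h t) L (j + 1)) * (μ j * (1 - p j)))
          (Set.Ici 0) t) ∧
      HasDerivWithinAt (fun τ => ∑ i ∈ Finset.Icc 2 n, h τ 1 i * (R i - R (i - 1)))
        (-(h t 1 1) +
          ∑ j ∈ Finset.Icc 1 n,
            (Ext B n (h t) 1 j - Ext B n (h t) 1 (j + 1)) * (μ j * (1 - p j)))
        (Set.Ici 0) t := by
  obtain ⟨hmem, hODE⟩ := hsol
  intro t ht
  have hExt1 : ∀ j, 1 ≤ j → j ≤ n → Ext B n (h t) 1 j = h t 1 j := by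
    intro j h1 h2
    unfold Ext
    rw [if_neg (by omega), if_neg (by omega), if_neg (by omega)]
  have hExtTop : Ext B n (h t) 1 (n + 1) = 0 := by
    unfold Ext
    rw [if_neg (by omega), if_neg (by omega), if_pos rfl]
  constructor
  · -- Part 1
    intro L hL1 hLB
    have hsum : HasDerivWithinAt (fun τ => ∑ ℓ ∈ Finset.Icc L B, h τ ℓ 1)
        (∑ ℓ ∈ Finset.Icc L B, drift B n μ p f ℓ 1 (h t)) (Set.Ici 0) t := by
      apply HasDerivWithinAt.fun_sum
      intro ℓ hℓ
      obtain ⟨h1, h2⟩ := Finset.mem_Icc.mp hℓ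
      exact hODE ℓ 1 (by omega) h2 le_rfl hn t ht
    have hExtB1 : ∀ j, Ext B n (h t) (B + 1) j = 0 := by
      intro j
      unfold Ext
      rw [if_neg (by omega), if_pos rfl]
    have key : ∑ ℓ ∈ Finset.Icc L B, drift B n μ p f ℓ 1 (h t) =
        ∑ ℓ ∈ Finset.Icc L B, f ℓ 1 (h t) -
          ∑ j ∈ Finset.Icc 1 n,
            (Ext B n (h t) L j - Ext B n (h t) L (j + 1)) * (μ j * (1 - p j)) := by
      have hdr : ∀ ℓ ∈ Finset.Icc L B, drift B n μ p f ℓ 1 (h t) =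
          f ℓ 1 (h t) -
            ((∑ j ∈ Finset.Icc 1 n,
                (Ext B n (h t) ℓ j - Ext B n (h t) ℓ (j + 1)) * (μ j * (1 - p j))) -
             (∑ j ∈ Finset.Icc 1 n,
                (Ext B n (h t) (ℓ + 1) j - Ext B n (h t) (ℓ + 1) (j + 1)) *
                  (μ j * (1 - p j)))) := by
        intro ℓ _
        unfold drift
        rw [if_pos rfl, ← Finset.sum_sub_distrib]
        congr 1
        apply Finset.sum_congr rfl
        intro j _
        ring
      rw [Finset.sum_congr rfl hdr, Finset.sum_sub_distrib]
      congr 1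
      have := tele (fun ℓ => ∑ j ∈ Finset.Icc 1 n,
          (Ext B n (h t) ℓ j - Ext B n (h t) ℓ (j + 1)) * (μ j * (1 - p j)))
        (a := L) (b := B) (by omega)
      rw [this]
      have hz : ∑ j ∈ Finset.Icc 1 n,
          (Ext B n (h t) (B + 1) j - Ext B n (h t) (B + 1) (j + 1)) * (μ j * (1 - p j)) = 0 := by
        apply Finset.sum_eq_zero
        intro j _
        rw [hExtB1 j, hExtB1 (j + 1)]
        ring
      rw [hz, sub_zero]
    rwa [key] at hsum
  · -- Part 2
    have hsum : HasDerivWithinAt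
        (fun τ => ∑ i ∈ Finset.Icc 2 n, h τ 1 i * (R i - R (i - 1)))
        (∑ i ∈ Finset.Icc 2 n, drift B n μ p f 1 i (h t) * (R i - R (i - 1)))
        (Set.Ici 0) t := by
      apply HasDerivWithinAt.fun_sum
      intro i hi
      obtain ⟨h1, h2⟩ := Finset.mem_Icc.mp hi
      exact (hODE 1 i le_rfl hB (by omega) h2 t ht).mul_const _
    have e9 : R 1 = 1 := Rone n hn μ p R hμ hmean hRn hRrec
    -- Per-term rewrite of the drift
    have e1 : ∑ i ∈ Finset.Icc 2 n, drift B n μ p f 1 i (h t) * (R i - R (i - 1)) =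
        (∑ i ∈ Finset.Icc 2 n,
          (h t 1 (i - 1) - h t 1 i) * (μ (i - 1) * (1 - p (i - 1)) * R (i - 1) - 1)) -
        ∑ i ∈ Finset.Icc 2 n,
          (∑ j ∈ Finset.Icc i n,
            (Ext B n (h t) 1 j - Ext B n (h t) 1 (j + 1)) * (μ j * (1 - p j))) *
            (R i - R (i - 1)) := by
      rw [← Finset.sum_sub_distrib]
      apply Finset.sum_congr rfl
      intro i hi
      obtain ⟨h2i, hin⟩ := Finset.mem_Icc.mp hi
      unfold drift
      rw [if_neg (by omega), if_neg (by norm_num), zero_add]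
      have hkey : p (i - 1) * μ (i - 1) * (R i - R (i - 1)) =
          μ (i - 1) * (1 - p (i - 1)) * R (i - 1) - 1 := by
        have hrr := hRrec i h2i hin
        have hμi : μ (i - 1) ≠ 0 := ne_of_gt (hμ (i - 1) (by omega) (by omega))
        rw [hrr]
        field_simp
        ring
      have expand : ((h t 1 (i - 1) - h t 1 i) * (p (i - 1) * μ (i - 1)) -
          ∑ j ∈ Finset.Icc i n,
            (Ext B n (h t) 1 j - Ext B n (h t) 1 (j + 1)) * (μ j * (1 - p j))) *
            (R i - R (i - 1)) =
          (h t 1 (i - 1) - h t 1 i) * (p (i - 1) * μ (i - 1) * (R i - R (i - 1))) -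
          (∑ j ∈ Finset.Icc i n,
            (Ext B n (h t) 1 j - Ext B n (h t) 1 (j + 1)) * (μ j * (1 - p j))) *
            (R i - R (i - 1)) := by ring
      rw [expand, hkey]
    -- Abel/swap for the B-part
    have e2 : ∑ i ∈ Finset.Icc 2 n,
        (∑ j ∈ Finset.Icc i n,
          (Ext B n (h t) 1 j - Ext B n (h t) 1 (j + 1)) * (μ j * (1 - p j))) *
          (R i - R (i - 1)) =
        (∑ j ∈ Finset.Icc 2 n,
          (Ext B n (h t) 1 j - Ext B n (h t) 1 (j + 1)) * (μ j * (1 - p j)) * R j) -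
        ∑ j ∈ Finset.Icc 2 n,
          (Ext B n (h t) 1 j - Ext B n (h t) 1 (j + 1)) * (μ j * (1 - p j)) := by
      have step1 : ∀ i ∈ Finset.Icc 2 n,
          (∑ j ∈ Finset.Icc i n,
            (Ext B n (h t) 1 j - Ext B n (h t) 1 (j + 1)) * (μ j * (1 - p j))) *
            (R i - R (i - 1)) =
          ∑ j ∈ Finset.Icc i n,
            (Ext B n (h t) 1 j - Ext B n (h t) 1 (j + 1)) * (μ j * (1 - p j)) *
              (R i - R (i - 1)) := by
        intro i _
        rw [Finset.sum_mul]
      rw [Finset.sum_congr rfl step1]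
      have swap : ∑ i ∈ Finset.Icc 2 n, ∑ j ∈ Finset.Icc i n,
          (Ext B n (h t) 1 j - Ext B n (h t) 1 (j + 1)) * (μ j * (1 - p j)) *
            (R i - R (i - 1)) =
          ∑ j ∈ Finset.Icc 2 n, ∑ i ∈ Finset.Icc 2 j,
            (Ext B n (h t) 1 j - Ext B n (h t) 1 (j + 1)) * (μ j * (1 - p j)) *
              (R i - R (i - 1)) :=
        Finset.sum_comm' (by intro x y; simp only [Finset.mem_Icc]; omega)
      rw [swap, ← Finset.sum_sub_distrib]
      apply Finset.sum_congr rfl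
      intro j hj
      obtain ⟨h2j, hjn⟩ := Finset.mem_Icc.mp hj
      have inner : ∑ i ∈ Finset.Icc 2 j,
          (Ext B n (h t) 1 j - Ext B n (h t) 1 (j + 1)) * (μ j * (1 - p j)) *
            (R i - R (i - 1)) =
          (Ext B n (h t) 1 j - Ext B n (h t) 1 (j + 1)) * (μ j * (1 - p j)) *
            (R j - R 1) := by
        rw [← Finset.mul_sum, teleR R j (by omega)]
      rw [inner, e9]
      ring
    -- Reindex the A-part
    have e3 : ∑ i ∈ Finset.Icc 2 n,
        (h t 1 (i - 1) - h t 1 i) * (μ (i - 1) * (1 - p (i - 1)) * R (i - 1) - 1) =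
        ∑ j ∈ Finset.Icc 1 (n - 1),
          (Ext B n (h t) 1 j - Ext B n (h t) 1 (j + 1)) * (μ j * (1 - p j) * R j - 1) := by
      apply Finset.sum_bij' (i := fun a _ => a - 1) (j := fun a _ => a + 1)
      · intro a ha
        simp only [Finset.mem_Icc] at ha ⊢
        omega
      · intro a ha
        simp only [Finset.mem_Icc] at ha ⊢
        omega
      · intro a ha
        simp only [Finset.mem_Icc] at ha
        have h1 : a - 1 + 1 = a := by omega
        rw [h1, hExt1 (a - 1) (by omega) (by omega), hExt1 a (by omega) (by omega)]
      · intro a ha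
        simp only [Finset.mem_Icc] at ha ⊢
        omega
      · intro a ha
        simp only [Finset.mem_Icc] at ha ⊢
        omega
    -- Split off the last term and telescope
    have e4 : ∑ j ∈ Finset.Icc 1 (n - 1),
        (Ext B n (h t) 1 j - Ext B n (h t) 1 (j + 1)) * (μ j * (1 - p j) * R j - 1) =
        (∑ j ∈ Finset.Icc 1 (n - 1),
          (Ext B n (h t) 1 j - Ext B n (h t) 1 (j + 1)) * (μ j * (1 - p j)) * R j) -
        (Ext B n (h t) 1 1 - Ext B n (h t) 1 n) := by
      have split : ∀ j ∈ Finset.Icc 1 (n - 1),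
          (Ext B n (h t) 1 j - Ext B n (h t) 1 (j + 1)) * (μ j * (1 - p j) * R j - 1) =
          (Ext B n (h t) 1 j - Ext B n (h t) 1 (j + 1)) * (μ j * (1 - p j)) * R j -
          (Ext B n (h t) 1 j - Ext B n (h t) 1 (j + 1)) := by
        intro j _
        ring
      rw [Finset.sum_congr rfl split, Finset.sum_sub_distrib]
      congr 1
      have := tele (fun j => Ext B n (h t) 1 j) (a := 1) (b := n - 1) (by omega)
      rw [this]
      have hnn : n - 1 + 1 = n := by omega
      rw [hnn]
    -- Extend the weighted sum from n-1 to n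
    have e6 : (Ext B n (h t) 1 n - Ext B n (h t) 1 (n + 1)) * (μ n * (1 - p n)) * R n =
        Ext B n (h t) 1 n := by
      have hμn : μ n ≠ 0 := ne_of_gt (hμ n hn le_rfl)
      rw [hExtTop, hpn, hRn]
      field_simp
      ring
    have e5 : ∑ j ∈ Finset.Icc 1 n,
        (Ext B n (h t) 1 j - Ext B n (h t) 1 (j + 1)) * (μ j * (1 - p j)) * R j =
        (∑ j ∈ Finset.Icc 1 (n - 1),
          (Ext B n (h t) 1 j - Ext B n (h t) 1 (j + 1)) * (μ j * (1 - p j)) * R j) +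
        Ext B n (h t) 1 n := by
      have hn1 : n = (n - 1) + 1 := by omega
      rw [hn1, Finset.sum_Icc_succ_top (by omega), ← hn1, e6]
    -- Split the Icc 1 n sums at 1
    have e7 : ∑ j ∈ Finset.Icc 1 n,
        (Ext B n (h t) 1 j - Ext B n (h t) 1 (j + 1)) * (μ j * (1 - p j)) * R j =
        (Ext B n (h t) 1 1 - Ext B n (h t) 1 2) * (μ 1 * (1 - p 1)) * R 1 +
        ∑ j ∈ Finset.Icc 2 n,
          (Ext B n (h t) 1 j - Ext B n (h t) 1 (j + 1)) * (μ j * (1 - p j)) * R j := by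
      rw [Finset.Icc_eq_cons_Ioc hn, Finset.sum_cons, ← Finset.Icc_add_one_left_eq_Ioc]
      rfl
    have e8 : ∑ j ∈ Finset.Icc 1 n,
        (Ext B n (h t) 1 j - Ext B n (h t) 1 (j + 1)) * (μ j * (1 - p j)) =
        (Ext B n (h t) 1 1 - Ext B n (h t) 1 2) * (μ 1 * (1 - p 1)) +
        ∑ j ∈ Finset.Icc 2 n,
          (Ext B n (h t) 1 j - Ext B n (h t) 1 (j + 1)) * (μ j * (1 - p j)) := by
      rw [Finset.Icc_eq_cons_Ioc hn, Finset.sum_cons, ← Finset.Icc_add_one_left_eq_Ioc]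
      rfl
    have e10 : Ext B n (h t) 1 1 = h t 1 1 := hExt1 1 le_rfl hn
    have key : ∑ i ∈ Finset.Icc 2 n, drift B n μ p f 1 i (h t) * (R i - R (i - 1)) =
        -(h t 1 1) +
          ∑ j ∈ Finset.Icc 1 n,
            (Ext B n (h t) 1 j - Ext B n (h t) 1 (j + 1)) * (μ j * (1 - p j)) := by
      rw [e1, e2, e3, e4, e8]
      rw [e9] at e7
      rw [mul_one] at e7
      have e5' : ∑ j ∈ Finset.Icc 1 (n - 1),
          (Ext B n (h t) 1 j - Ext B n (h t) 1 (j + 1)) * (μ j * (1 - p j)) * R j =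
          (Ext B n (h t) 1 1 - Ext B n (h t) 1 2) * (μ 1 * (1 - p 1)) +
          (∑ j ∈ Finset.Icc 2 n,
            (Ext B n (h t) 1 j - Ext B n (h t) 1 (j + 1)) * (μ j * (1 - p j)) * R j) -
          Ext B n (h t) 1 n := by
        rw [← e7]
        linarith [e5]
      rw [e5', e10]
      ring
    rwa [key] at hsum

end MeanField
end

section
/- Let 1 ≤ K ≤ d be integers and define φ_K(x) := ∑_{s=0}^{K−1} (K−s) C(d,s) x^{d−s} (1−x)^s. Then for every real x, the derivative of φ_K satisfies φ_K'(x) = ∑_{s=0}^{K−1} d C(d−1,s) x^{d−s−1} (1−x)^s. In particular φ_K'(x) ≥ 0 for x ∈ [0,1], so φ_K is nondecreasing on [0,1]. -/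
open Finset

/-- telescoping helper -/
lemma tele_sum (n : ℕ) (a : ℕ → ℝ) :
    ∑ s ∈ Finset.range (n+1), (((n:ℝ)+1) - s) * a s
      - ∑ t ∈ Finset.range n, (((n:ℝ)+1) - ((t:ℝ)+1)) * a t
    = ∑ s ∈ Finset.range (n+1), a s := by
  rw [Finset.sum_range_succ, Finset.sum_range_succ (fun s => a s)]
  have h : ∑ s ∈ Finset.range n, (((n:ℝ)+1) - s) * a s
      - ∑ t ∈ Finset.range n, (((n:ℝ)+1) - ((t:ℝ)+1)) * a t
      = ∑ s ∈ Finset.range n, a s := by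
    rw [← Finset.sum_sub_distrib]
    exact Finset.sum_congr rfl (fun i _ => by ring)
  have hc : (((n:ℝ)+1) - (n:ℝ)) * a n = a n := by ring
  linarith [h, hc]

/-- The derivative of `φ_K(x) = ∑_{s=0}^{K−1} (K−s) C(d,s) x^{d−s} (1−x)^s` equals
`∑_{s=0}^{K−1} d C(d−1,s) x^{d−s−1} (1−x)^s`; this is nonnegative on `[0,1]`, so `φ_K`
is nondecreasing on `[0,1]`. -/
theorem stmt17 (K d : ℕ) (hK : 1 ≤ K) (hKd : K ≤ d) :
    (∀ x : ℝ,
      HasDerivAt (fun y : ℝ => ∑ s ∈ Finset.range K,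
          ((K : ℝ) - s) * (d.choose s : ℝ) * y ^ (d - s) * (1 - y) ^ s)
        (∑ s ∈ Finset.range K,
          (d : ℝ) * ((d - 1).choose s : ℝ) * x ^ (d - s - 1) * (1 - x) ^ s) x) ∧
    (∀ x ∈ Set.Icc (0 : ℝ) 1,
      0 ≤ ∑ s ∈ Finset.range K,
          (d : ℝ) * ((d - 1).choose s : ℝ) * x ^ (d - s - 1) * (1 - x) ^ s) ∧
    MonotoneOn (fun y : ℝ => ∑ s ∈ Finset.range K,
        ((K : ℝ) - s) * (d.choose s : ℝ) * y ^ (d - s) * (1 - y) ^ s)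
      (Set.Icc (0 : ℝ) 1) := by
  obtain ⟨K', rfl⟩ : ∃ K', K = K' + 1 := ⟨K - 1, by omega⟩
  set K := K' + 1 with hKdef
  have hderiv : ∀ x : ℝ,
      HasDerivAt (fun y : ℝ => ∑ s ∈ Finset.range K,
          ((K : ℝ) - s) * (d.choose s : ℝ) * y ^ (d - s) * (1 - y) ^ s)
        (∑ s ∈ Finset.range K,
          (d : ℝ) * ((d - 1).choose s : ℝ) * x ^ (d - s - 1) * (1 - x) ^ s) x := by
    intro x
    have hterm : ∀ s ∈ Finset.range K,
        HasDerivAt (fun y : ℝ => ((K : ℝ) - s) * (d.choose s : ℝ) * y ^ (d - s) * (1 - y) ^ s)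
          ((((K : ℝ) - s) * (d.choose s : ℝ) * (((d - s : ℕ) : ℝ) * x ^ (d - s - 1))) * (1 - x) ^ s
            + (((K : ℝ) - s) * (d.choose s : ℝ) * x ^ (d - s)) * ((s : ℝ) * (1 - x) ^ (s - 1) * (-1))) x := by
      intro s _
      have h1 : HasDerivAt (fun y : ℝ => ((K : ℝ) - s) * (d.choose s : ℝ) * y ^ (d - s))
          (((K : ℝ) - s) * (d.choose s : ℝ) * (((d - s : ℕ) : ℝ) * x ^ (d - s - 1))) x :=
        (hasDerivAt_pow (d - s) x).const_mul _
      have h2 : HasDerivAt (fun y : ℝ => (1 - y) ^ s) ((s : ℝ) * (1 - x) ^ (s - 1) * (-1)) x := by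
        have := ((hasDerivAt_id x).const_sub 1).fun_pow s
        simpa using this
      exact h1.mul h2
    have hsum := HasDerivAt.fun_sum hterm
    refine hsum.congr_deriv ?_
    -- key binomial identities
    have hA : ∀ s, s < d → ((d - s : ℕ) : ℝ) * (d.choose s : ℝ)
        = (d : ℝ) * ((d - 1).choose s : ℝ) := by
      intro s hs
      have h := Nat.choose_mul_succ_eq (d - 1) s
      rw [show d - 1 + 1 = d by omega] at h
      exact_mod_cast ((Nat.mul_comm _ _).trans h.symm).trans (Nat.mul_comm _ _)
    have hB : ∀ t, t + 1 ≤ d → (d.choose (t+1) : ℝ) * ((t:ℝ)+1)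
        = (d : ℝ) * ((d - 1).choose t : ℝ) := by
      intro t ht
      have h := Nat.add_one_mul_choose_eq (d - 1) t
      rw [show d - 1 + 1 = d by omega] at h
      exact_mod_cast h.symm
    -- split the sum of term-derivatives into two sums
    have hsplit : ∑ i ∈ Finset.range K,
        ((((K : ℝ) - i) * (d.choose i : ℝ) * (((d - i : ℕ) : ℝ) * x ^ (d - i - 1))) * (1 - x) ^ i
          + (((K : ℝ) - i) * (d.choose i : ℝ) * x ^ (d - i)) * ((i : ℝ) * (1 - x) ^ (i - 1) * (-1)))
        = (∑ i ∈ Finset.range K,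
            ((K : ℝ) - i) * ((d : ℝ) * ((d - 1).choose i : ℝ) * x ^ (d - i - 1) * (1 - x) ^ i))
          - ∑ i ∈ Finset.range K,
            ((K : ℝ) - i) * ((d.choose i : ℝ) * (i : ℝ) * x ^ (d - i) * (1 - x) ^ (i - 1)) := by
      rw [← Finset.sum_sub_distrib]
      refine Finset.sum_congr rfl (fun i hi => ?_)
      rw [Finset.mem_range] at hi
      have h := hA i (by omega)
      linear_combination ((K : ℝ) - i) * x ^ (d - i - 1) * (1 - x) ^ i * h
    rw [hsplit]
    set a : ℕ → ℝ := fun s => (d : ℝ) * ((d - 1).choose s : ℝ) * x ^ (d - s - 1) * (1 - x) ^ s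
      with ha
    have h1 : ∑ i ∈ Finset.range K,
        ((K : ℝ) - i) * ((d.choose i : ℝ) * (i : ℝ) * x ^ (d - i) * (1 - x) ^ (i - 1))
        = ∑ t ∈ Finset.range K', (((K' : ℝ) + 1) - ((t : ℝ) + 1)) * a t := by
      rw [Finset.sum_range_succ']
      simp only [Nat.cast_zero, mul_zero, zero_mul, mul_zero, add_zero, Nat.cast_ofNat]
      refine Finset.sum_congr rfl (fun t ht => ?_)
      rw [Finset.mem_range] at ht
      have h := hB t (by omega)
      simp only [ha, Nat.add_sub_cancel, Nat.sub_sub]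
      push_cast [hKdef]
      linear_combination (((K' : ℝ) + 1) - ((t : ℝ) + 1)) * x ^ (d - (t + 1)) * (1 - x) ^ t * h
    have h2 : ∑ i ∈ Finset.range K,
        ((K : ℝ) - i) * ((d : ℝ) * ((d - 1).choose i : ℝ) * x ^ (d - i - 1) * (1 - x) ^ i)
        = ∑ s ∈ Finset.range (K' + 1), (((K' : ℝ) + 1) - s) * a s := by
      refine Finset.sum_congr rfl (fun i _ => ?_)
      simp only [ha]
      push_cast [hKdef]
      ring
    rw [h1, h2, tele_sum K' a]
  refine ⟨hderiv, ?_, ?_⟩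
  · intro x hx
    apply Finset.sum_nonneg
    intro s _
    have h1 : (0:ℝ) ≤ x := hx.1
    have h2 : (0:ℝ) ≤ 1 - x := by linarith [hx.2]
    positivity
  · apply monotoneOn_of_deriv_nonneg (convex_Icc 0 1)
    · exact fun y _ => (hderiv y).continuousAt.continuousWithinAt
    · intro y hy
      exact ((hderiv y).differentiableAt).differentiableWithinAt
    · intro y hy
      rw [interior_Icc] at hy
      rw [(hderiv y).deriv]
      apply Finset.sum_nonneg
      intro s _
      have h1 : (0:ℝ) ≤ y := le_of_lt hy.1
      have h2 : (0:ℝ) ≤ 1 - y := by linarith [hy.2]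
      positivity
end
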